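/- arXiv:1111.2090 — 9 statements merged into one kernel-verified Lean document; each statement's English description precedes it below -/
import Mathlib

section
/- Let R be an associative unital ring and let M and N be right R-modules. If every M-injective right R-module is N-injective, then either N is semisimple or there exists a nonzero submodule of N belonging to σ[M]. -/
universe u

/-- `M` is `N`-injective: every homomorphism from a submodule of `N` to `M`
extends to `N`. -/
def ModInj (A : Type u) [Ring A] (M : Type u) [AddCommGroup M] [Module A M]
    (N : Type u) [AddCommGroup N] [Module A N] : Prop :=
  ∀ (K : Submodule A N) (f : K →ₗ[A] M), ∃ g : N →ₗ[A] M, ∀ x : K, g x = f x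

/-- `N ∈ σ[M]`: `N` is isomorphic to a submodule of a homomorphic image of a
direct sum of copies of `M`. -/
def MemSigma (A : Type u) [Ring A] (M : Type u) [AddCommGroup M] [Module A M]
    (N : Type u) [AddCommGroup N] [Module A N] : Prop :=
  ∃ (ι : Type u) (L : Submodule A (ι →₀ M)) (K : Submodule A ((ι →₀ M) ⧸ L)),
    Nonempty (N ≃ₗ[A] K)

/-- if every `M`-injective right `R`-module is `N`-injective, then either `N`
is semisimple or `N` has a nonzero submodule belonging to `σ[M]`. Right `R`-modules are
modules over `Rᵐᵒᵖ`. -/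
theorem stmt_0 (R : Type u) [Ring R]
    (M N : Type u) [AddCommGroup M] [Module Rᵐᵒᵖ M] [AddCommGroup N] [Module Rᵐᵒᵖ N]
    (h : ∀ (X : Type u) [AddCommGroup X] [Module Rᵐᵒᵖ X],
      ModInj Rᵐᵒᵖ X M → ModInj Rᵐᵒᵖ X N) :
    IsSemisimpleModule Rᵐᵒᵖ N ∨
      ∃ P : Submodule Rᵐᵒᵖ N, P ≠ ⊥ ∧ MemSigma Rᵐᵒᵖ M P := by
  by_cases hP : ∃ P : Submodule Rᵐᵒᵖ N, P ≠ ⊥ ∧ MemSigma Rᵐᵒᵖ M P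
  · exact Or.inr hP
  push_neg at hP
  left
  rw [isSemisimpleModule_iff]
  constructor
  intro K
  -- `K` is `M`-injective since every hom from a submodule of `M` to `K` is zero
  have hKM : ModInj Rᵐᵒᵖ (↥K) M := by
    intro L f
    have hf : f = 0 := by
      by_contra hne
      -- build the witness that the image of `f`, viewed in `N`, is in `σ[M]`
      set e : M ≃ₗ[Rᵐᵒᵖ] (PUnit.{u+1} →₀ M) :=
        (Finsupp.LinearEquiv.finsuppUnique Rᵐᵒᵖ M PUnit.{u+1}).symm with he
      set L₀ : Submodule Rᵐᵒᵖ (PUnit.{u+1} →₀ M) :=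
        (LinearMap.ker f).map (e.toLinearMap ∘ₗ L.subtype) with hL₀
      set g : L →ₗ[Rᵐᵒᵖ] ((PUnit.{u+1} →₀ M) ⧸ L₀) :=
        L₀.mkQ ∘ₗ e.toLinearMap ∘ₗ L.subtype with hg
      have hker : LinearMap.ker g = LinearMap.ker f := by
        ext x
        constructor
        · intro hx
          have hx' : e (x : M) ∈ L₀ := by
            simpa [hg, LinearMap.mem_ker, Submodule.Quotient.mk_eq_zero] using hx
          rw [hL₀] at hx'
          obtain ⟨y, hy, hyx⟩ := hx'
          have : (y : M) = (x : M) := e.injective (by simpa using hyx)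
          have : y = x := Subtype.ext this
          rwa [← this]
        · intro hx
          have hx' : e (x : M) ∈ L₀ := by
            rw [hL₀]
            exact ⟨x, hx, rfl⟩
          simpa [hg, LinearMap.mem_ker, Submodule.Quotient.mk_eq_zero] using hx'
      set P : Submodule Rᵐᵒᵖ N := (LinearMap.range f).map K.subtype with hPdef
      have hPne : P ≠ ⊥ := by
        intro hbot
        apply hne
        have : LinearMap.range f = ⊥ :=
          Submodule.map_injective_of_injective K.injective_subtype
            (by rw [Submodule.map_bot, ← hPdef]; exact hbot)
        exact LinearMap.range_eq_bot.mp this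
      have iso : P ≃ₗ[Rᵐᵒᵖ] (LinearMap.range g) :=
        (((Submodule.equivMapOfInjective K.subtype K.injective_subtype
            (LinearMap.range f)).symm.trans f.quotKerEquivRange.symm).trans
          (Submodule.quotEquivOfEq _ _ hker.symm)).trans g.quotKerEquivRange
      exact hP P hPne ⟨PUnit.{u+1}, L₀, LinearMap.range g, ⟨iso⟩⟩
    exact ⟨0, fun x => by simp [hf]⟩
  have hKN : ModInj Rᵐᵒᵖ (↥K) N := h _ hKM
  obtain ⟨g, hg⟩ := hKN K LinearMap.id
  exact ⟨LinearMap.ker g, LinearMap.isCompl_of_proj fun x => by simpa using hg x⟩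
end

section
/- Let R be an associative unital ring and let M be a right R-module such that every semisimple right R-module belongs to σ[M]. Then for any right R-module N, the following are equivalent: (i) every M-injective right R-module is N-injective; (ii) N ∈ σ[M]. -/
universe u

section MemSigmaAux

variable {A : Type u} [Ring A] {M : Type u} [AddCommGroup M] [Module A M]

lemma memSigma_iff {N : Type u} [AddCommGroup N] [Module A N] :
    MemSigma A M N ↔ ∃ (ι : Type u) (L : Submodule A (ι →₀ M))
      (f : N →ₗ[A] (ι →₀ M) ⧸ L), Function.Injective f := by
  constructor
  · rintro ⟨ι, L, K, ⟨e⟩⟩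
    exact ⟨ι, L, K.subtype ∘ₗ e.toLinearMap, K.injective_subtype.comp e.injective⟩
  · rintro ⟨ι, L, f, hf⟩
    exact ⟨ι, L, LinearMap.range f, ⟨LinearEquiv.ofInjective f hf⟩⟩

lemma MemSigma.of_injective {N W : Type u} [AddCommGroup N] [Module A N]
    [AddCommGroup W] [Module A W]
    (h : MemSigma A M W) (f : N →ₗ[A] W) (hf : Function.Injective f) : MemSigma A M N := by
  rw [memSigma_iff] at h ⊢
  obtain ⟨ι, L, g, hg⟩ := h
  exact ⟨ι, L, g ∘ₗ f, hg.comp hf⟩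

lemma MemSigma.of_equiv {N W : Type u} [AddCommGroup N] [Module A N]
    [AddCommGroup W] [Module A W]
    (h : MemSigma A M W) (e : N ≃ₗ[A] W) : MemSigma A M N :=
  h.of_injective e.toLinearMap e.injective

lemma MemSigma.submodule {N : Type u} [AddCommGroup N] [Module A N]
    (h : MemSigma A M N) (P : Submodule A N) : MemSigma A M ↥P :=
  h.of_injective P.subtype P.injective_subtype

lemma memSigma_self : MemSigma A M M := by
  rw [memSigma_iff]
  refine ⟨PUnit, ⊥, ?_⟩
  let e1 : M ≃ₗ[A] (PUnit.{u+1} →₀ M) := (Finsupp.LinearEquiv.finsuppUnique A M PUnit).symm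
  let e2 : (PUnit.{u+1} →₀ M) ≃ₗ[A] ((PUnit.{u+1} →₀ M) ⧸ (⊥ : Submodule A (PUnit.{u+1} →₀ M))) :=
    (Submodule.quotEquivOfEqBot _ rfl).symm
  exact ⟨e2.toLinearMap ∘ₗ e1.toLinearMap, e2.injective.comp e1.injective⟩

lemma MemSigma.quotient {N : Type u} [AddCommGroup N] [Module A N]
    (h : MemSigma A M N) (P : Submodule A N) : MemSigma A M (N ⧸ P) := by
  rw [memSigma_iff] at h
  obtain ⟨ι, L, f, hf⟩ := h
  set Q := (ι →₀ M) ⧸ L with hQdef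
  set W : Submodule A Q := P.map f with hWdef
  set T : Submodule A (ι →₀ M) := W.comap L.mkQ with hTdef
  have hLT : L ≤ T := by
    intro x hx
    have hx0 : L.mkQ x = 0 := by
      rw [Submodule.mkQ_apply, Submodule.Quotient.mk_eq_zero]; exact hx
    show L.mkQ x ∈ W
    rw [hx0]; exact W.zero_mem
  have hmapT : T.map L.mkQ = W := by
    apply Submodule.map_comap_eq_self
    rw [Submodule.range_mkQ]; exact le_top
  let e3 := Submodule.quotientQuotientEquivQuotient L T hLT
  let q1 : (N ⧸ P) →ₗ[A] (Q ⧸ W) :=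
    Submodule.mapQ P W f (fun x hx => Submodule.mem_comap.2 (Submodule.mem_map_of_mem hx))
  have hq1 : Function.Injective q1 := by
    rw [← LinearMap.ker_eq_bot, Submodule.eq_bot_iff]
    intro x hx
    obtain ⟨n, rfl⟩ := P.mkQ_surjective x
    have hfn : f n ∈ W := by
      have h2 : q1 (P.mkQ n) = 0 := hx
      rw [Submodule.mkQ_apply, Submodule.mapQ_apply, ← Submodule.mkQ_apply,
        ← LinearMap.mem_ker, Submodule.ker_mkQ] at h2
      exact h2
    obtain ⟨p, hp, hfp⟩ := hfn
    have hnP : n ∈ P := by rwa [hf hfp] at hp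
    rw [Submodule.mkQ_apply, Submodule.Quotient.mk_eq_zero]
    exact hnP
  let e2 : (Q ⧸ W) ≃ₗ[A] (Q ⧸ T.map L.mkQ) := Submodule.quotEquivOfEq _ _ hmapT.symm
  exact memSigma_iff.2 ⟨ι, T, e3.toLinearMap ∘ₗ e2.toLinearMap ∘ₗ q1,
    e3.injective.comp (e2.injective.comp hq1)⟩

lemma MemSigma.range {N W : Type u} [AddCommGroup N] [Module A N]
    [AddCommGroup W] [Module A W]
    (h : MemSigma A M N) (g : N →ₗ[A] W) : MemSigma A M ↥(LinearMap.range g) :=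
  (h.quotient (LinearMap.ker g)).of_equiv (g.quotKerEquivRange).symm

lemma MemSigma.prod {N₁ N₂ : Type u} [AddCommGroup N₁] [Module A N₁]
    [AddCommGroup N₂] [Module A N₂]
    (h₁ : MemSigma A M N₁) (h₂ : MemSigma A M N₂) : MemSigma A M (N₁ × N₂) := by
  rw [memSigma_iff] at h₁ h₂
  obtain ⟨ι₁, L₁, f₁, hf₁⟩ := h₁
  obtain ⟨ι₂, L₂, f₂, hf₂⟩ := h₂
  let e : ((ι₁ ⊕ ι₂) →₀ M) ≃ₗ[A] (ι₁ →₀ M) × (ι₂ →₀ M) := Finsupp.sumFinsuppLEquivProdFinsupp A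
  let Φ : ((ι₁ ⊕ ι₂) →₀ M) →ₗ[A] ((ι₁ →₀ M) ⧸ L₁) × ((ι₂ →₀ M) ⧸ L₂) :=
    (L₁.mkQ.prodMap L₂.mkQ) ∘ₗ e.toLinearMap
  have hΦ : Function.Surjective Φ := by
    have h1 : Function.Surjective (L₁.mkQ.prodMap L₂.mkQ) := by
      rw [LinearMap.coe_prodMap]
      exact Function.Surjective.prodMap L₁.mkQ_surjective L₂.mkQ_surjective
    exact h1.comp e.surjective
  let η := LinearMap.quotKerEquivOfSurjective Φ hΦ
  have hinj : Function.Injective (f₁.prodMap f₂) := by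
    rw [LinearMap.coe_prodMap]
    exact Function.Injective.prodMap hf₁ hf₂
  exact memSigma_iff.2 ⟨ι₁ ⊕ ι₂, LinearMap.ker Φ,
    η.symm.toLinearMap ∘ₗ (f₁.prodMap f₂), η.symm.injective.comp hinj⟩

lemma MemSigma.dfinsupp {J : Type u} {V : J → Type u} [∀ j, AddCommGroup (V j)]
    [∀ j, Module A (V j)] (h : ∀ j, MemSigma A M (V j)) :
    MemSigma A M (Π₀ j, V j) := by
  classical
  choose ι L f hf using fun j => (memSigma_iff.mp (h j))
  let e : ((Σ j, ι j) →₀ M) ≃ₗ[A] Π₀ j, (ι j →₀ M) := sigmaFinsuppLequivDFinsupp A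
  let Ψ : (Π₀ j, (ι j →₀ M)) →ₗ[A] Π₀ j, ((ι j →₀ M) ⧸ L j) :=
    DFinsupp.mapRange.linearMap (fun j => (L j).mkQ)
  have hΨ : Function.Surjective Ψ := by
    intro y
    have hsec : ∀ j, ∃ s : ((ι j →₀ M) ⧸ L j) → (ι j →₀ M),
        s 0 = 0 ∧ ∀ q, (L j).mkQ (s q) = q := by
      intro j
      refine ⟨fun q => if hq : q = 0 then 0 else Classical.choose ((L j).mkQ_surjective q),
        by simp, fun q => ?_⟩
      by_cases hq : q = 0
      · simp [hq]
      · simpa [hq] using Classical.choose_spec ((L j).mkQ_surjective q)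
    choose s hs0 hs using hsec
    refine ⟨DFinsupp.mapRange s hs0 y, ?_⟩
    ext j
    show Ψ (DFinsupp.mapRange s hs0 y) j = y j
    rw [show Ψ (DFinsupp.mapRange s hs0 y) j = (L j).mkQ ((DFinsupp.mapRange s hs0 y) j) from rfl]
    rw [DFinsupp.mapRange_apply]
    exact hs j (y j)
  let Φ : ((Σ j, ι j) →₀ M) →ₗ[A] Π₀ j, ((ι j →₀ M) ⧸ L j) := Ψ ∘ₗ e.toLinearMap
  have hΦ : Function.Surjective Φ := hΨ.comp e.surjective
  let η := LinearMap.quotKerEquivOfSurjective (M₂ := Π₀ j, ((ι j →₀ M) ⧸ L j)) Φ hΦ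
  let F : (Π₀ j, V j) →ₗ[A] Π₀ j, ((ι j →₀ M) ⧸ L j) := DFinsupp.mapRange.linearMap f
  have hF : Function.Injective F := by
    intro x y hxy
    ext j
    apply hf j
    have hz : ∀ z : Π₀ j, V j, F z j = f j (z j) := fun z => rfl
    rw [← hz, ← hz, hxy]
  exact memSigma_iff.2 ⟨Σ j, ι j, LinearMap.ker Φ,
    η.symm.toLinearMap ∘ₗ F, η.symm.injective.comp hF⟩

lemma MemSigma.iSup {N : Type u} [AddCommGroup N] [Module A N] {J : Type u}
    {p : J → Submodule A N} (h : ∀ j, MemSigma A M ↥(p j)) :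
    MemSigma A M ↥(⨆ j, p j) := by
  classical
  have hd : MemSigma A M (Π₀ j, ↥(p j)) := MemSigma.dfinsupp h
  have hr := hd.range (DFinsupp.lsum ℕ fun j => (p j).subtype)
  have heq : ⨆ j, p j = LinearMap.range (DFinsupp.lsum ℕ fun j => (p j).subtype) :=
    Submodule.iSup_eq_range_dfinsupp_lsum p
  exact hr.of_equiv (LinearEquiv.ofEq _ _ heq)

lemma MemSigma.sSup {N : Type u} [AddCommGroup N] [Module A N]
    {s : Set (Submodule A N)} (h : ∀ P ∈ s, MemSigma A M ↥P) :
    MemSigma A M ↥(sSup s) := by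
  rw [sSup_eq_iSup']
  exact MemSigma.iSup (fun P => h P.1 P.2)

end MemSigmaAux

section ModInjAux

variable {A : Type u} [Ring A]

lemma ModInj.of_equiv {X N N' : Type u} [AddCommGroup X] [Module A X]
    [AddCommGroup N] [Module A N] [AddCommGroup N'] [Module A N']
    (h : ModInj A X N) (e : N' ≃ₗ[A] N) : ModInj A X N' := by
  intro K f
  let K' : Submodule A N := K.map (e : N' →ₗ[A] N)
  let eK : ↥K ≃ₗ[A] ↥K' := Submodule.equivMapOfInjective (e : N' →ₗ[A] N) e.injective K
  obtain ⟨g, hg⟩ := h K' (f ∘ₗ eK.symm.toLinearMap)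
  refine ⟨g ∘ₗ (e : N' →ₗ[A] N), fun x => ?_⟩
  have h1 := hg (eK x)
  have h2 : ((eK x : N)) = e (x : N') := Submodule.coe_equivMapOfInjective_apply _ _ _ _
  simp only [LinearMap.coe_comp, Function.comp_apply, LinearEquiv.coe_coe] at h1 ⊢
  rw [← h2, h1, eK.symm_apply_apply]

lemma ModInj.submodule {X N : Type u} [AddCommGroup X] [Module A X]
    [AddCommGroup N] [Module A N]
    (h : ModInj A X N) (P : Submodule A N) : ModInj A X ↥P := by
  intro K f
  let K' : Submodule A N := K.map P.subtype
  let eK : ↥K ≃ₗ[A] ↥K' := Submodule.equivMapOfInjective P.subtype P.injective_subtype K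
  obtain ⟨g, hg⟩ := h K' (f ∘ₗ eK.symm.toLinearMap)
  refine ⟨g ∘ₗ P.subtype, fun x => ?_⟩
  have h1 := hg (eK x)
  have h2 : ((eK x : N)) = P.subtype (x : ↥P) := Submodule.coe_equivMapOfInjective_apply _ _ _ _
  simp only [LinearMap.coe_comp, Function.comp_apply, LinearEquiv.coe_coe] at h1 ⊢
  rw [← h2, h1, eK.symm_apply_apply]

lemma ModInj.quotient {X N : Type u} [AddCommGroup X] [Module A X]
    [AddCommGroup N] [Module A N]
    (h : ModInj A X N) (P : Submodule A N) : ModInj A X (N ⧸ P) := by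
  intro K f
  let K' : Submodule A N := K.comap P.mkQ
  have hres : ∀ x ∈ K', P.mkQ x ∈ K := fun x hx => hx
  let r : ↥K' →ₗ[A] ↥K := P.mkQ.restrict hres
  obtain ⟨g, hg⟩ := h K' (f ∘ₗ r)
  have hPK' : ∀ x ∈ P, x ∈ K' := by
    intro x hx
    show P.mkQ x ∈ K
    have : P.mkQ x = 0 := by rw [Submodule.mkQ_apply, Submodule.Quotient.mk_eq_zero]; exact hx
    rw [this]; exact K.zero_mem
  have hgP : P ≤ LinearMap.ker g := by
    intro x hx
    have h1 := hg ⟨x, hPK' x hx⟩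
    have h2 : r ⟨x, hPK' x hx⟩ = (0 : ↥K) := by
      apply Subtype.ext
      show P.mkQ x = 0
      rw [Submodule.mkQ_apply, Submodule.Quotient.mk_eq_zero]; exact hx
    rw [LinearMap.mem_ker]
    simp only [LinearMap.coe_comp, Function.comp_apply] at h1
    rw [h1, h2, map_zero]
  refine ⟨P.liftQ g hgP, fun x => ?_⟩
  obtain ⟨n, hn⟩ := P.mkQ_surjective (x : N ⧸ P)
  have hnK' : n ∈ K' := by show P.mkQ n ∈ K; rw [hn]; exact x.2
  have h1 := hg ⟨n, hnK'⟩
  simp only [LinearMap.coe_comp, Function.comp_apply] at h1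
  have h2 : r ⟨n, hnK'⟩ = x := by
    apply Subtype.ext
    show P.mkQ n = (x : N ⧸ P)
    exact hn
  have h3 : P.liftQ g hgP (x : N ⧸ P) = g n := by
    rw [← hn, Submodule.mkQ_apply, Submodule.liftQ_apply]
  rw [h3, h1, h2]

end ModInjAux

section Zorn

variable {A : Type u} [Ring A]

lemma modInj_of_iSup {X N : Type u} [AddCommGroup X] [Module A X]
    [AddCommGroup N] [Module A N] {J : Type u} {p : J → Submodule A N}
    (hsup : (⨆ j, p j) = ⊤) (hinj : ∀ j, ModInj A X ↥(p j)) : ModInj A X N := by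
  intro K f
  classical
  set G₀ : Submodule A (N × X) := LinearMap.range (K.subtype.prod f) with hG₀def
  set s : Set (Submodule A (N × X)) :=
    {G | G₀ ≤ G ∧ ∀ x : X, ((0 : N), x) ∈ G → x = 0} with hsdef
  have hG₀s : G₀ ∈ s := by
    refine ⟨le_rfl, ?_⟩
    rintro x ⟨k, hk⟩
    have hk1 : (k : N) = 0 := congrArg Prod.fst hk
    have hk2 : f k = x := congrArg Prod.snd hk
    have hk0 : k = 0 := Subtype.ext hk1
    rw [← hk2, hk0, map_zero]
  obtain ⟨G, hG₀G, hGs, hGmax⟩ : ∃ G, G₀ ≤ G ∧ G ∈ s ∧ ∀ G' ∈ s, G ≤ G' → G' ≤ G := by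
    have hchainub : ∀ c ⊆ s, IsChain (· ≤ ·) c → ∀ y ∈ c, ∃ ub ∈ s, ∀ z ∈ c, z ≤ ub := by
      intro c hcs hchain y hyc
      refine ⟨sSup c, ⟨le_trans (hcs hyc).1 (le_sSup hyc), ?_⟩, fun z hz => le_sSup hz⟩
      intro x hx
      obtain ⟨G', hG'c, hxG'⟩ :=
        (Submodule.mem_sSup_of_directed ⟨y, hyc⟩ hchain.directedOn).1 hx
      exact (hcs hG'c).2 x hxG'
    obtain ⟨m, hxm, hm⟩ := zorn_le_nonempty₀ s hchainub G₀ hG₀s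
    exact ⟨m, hxm, hm.1, fun G' hG' hle => hm.2 hG' hle⟩
  have huniq : ∀ (n : N) (x x' : X), (n, x) ∈ G → (n, x') ∈ G → x = x' := by
    intro n x x' h1 h2
    have h3 : ((0 : N), x - x') ∈ G := by
      have := G.sub_mem h1 h2
      simpa using this
    exact sub_eq_zero.1 (hGs.2 _ h3)
  set D : Submodule A N := G.map (LinearMap.fst A N X) with hDdef
  have hexval : ∀ d : ↥D, ∃ x : X, ((d : N), x) ∈ G := by
    rintro ⟨d, hd⟩
    obtain ⟨⟨n, x⟩, hnx, rfl⟩ := hd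
    exact ⟨x, hnx⟩
  choose φ0 hφ0 using hexval
  have hφadd : ∀ d d' : ↥D, φ0 (d + d') = φ0 d + φ0 d' := by
    intro d d'
    refine huniq (↑(d + d')) _ _ (hφ0 _) ?_
    have := G.add_mem (hφ0 d) (hφ0 d')
    simpa using this
  have hφsmul : ∀ (a : A) (d : ↥D), φ0 (a • d) = a • φ0 d := by
    intro a d
    refine huniq (↑(a • d)) _ _ (hφ0 _) ?_
    have := G.smul_mem a (hφ0 d)
    simpa using this
  let φ : ↥D →ₗ[A] X :=
    { toFun := φ0, map_add' := hφadd, map_smul' := fun a d => hφsmul a d }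
  have hφG : ∀ d : ↥D, ((d : N), φ d) ∈ G := hφ0
  have hDtop : D = ⊤ := by
    rw [eq_top_iff, ← hsup]
    refine iSup_le fun j => ?_
    set C : Submodule A ↥(p j) := D.comap (p j).subtype with hCdef
    have hres : ∀ x ∈ C, (p j).subtype x ∈ D := fun x hx => hx
    let ψ : ↥C →ₗ[A] X := φ ∘ₗ ((p j).subtype.restrict hres)
    obtain ⟨h, hh⟩ := hinj j C ψ
    set θ : ↥(p j) →ₗ[A] N × X := (p j).subtype.prod h with hθdef
    have hG's : G ⊔ LinearMap.range θ ∈ s := by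
      constructor
      · exact le_trans (le_trans hG₀G le_sup_left) le_rfl
      · intro x hx
        rw [Submodule.mem_sup] at hx
        obtain ⟨u, huG, v, hv, huv⟩ := hx
        obtain ⟨m, rfl⟩ := hv
        have hu : u = ((-(m : N) : N), x - h m) := by
          have h7 : u = ((0 : N), x) - θ m := by
            rw [eq_sub_iff_add_eq]; exact huv
          have h8 : θ m = ((m : N), h m) := rfl
          rw [h7, h8, Prod.mk_sub_mk, zero_sub]
        rw [hu] at huG
        have hmD : -(m : N) ∈ D := ⟨_, huG, rfl⟩
        have hmD' : (m : N) ∈ D := by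
          have := D.neg_mem hmD; simpa using this
        have hmC : m ∈ C := hmD'
        have hval1 : φ ⟨-(m : N), hmD⟩ = x - h m := huniq _ _ _ (hφG ⟨-(m : N), hmD⟩) huG
        have hval2 : h m = φ ⟨(m : N), hmD'⟩ := by
          have h5 := hh ⟨m, hmC⟩
          have h6 : ψ ⟨m, hmC⟩ = φ ⟨(m : N), hmD'⟩ := rfl
          rw [← h6, ← h5]
        have hsum : (⟨(m : N), hmD'⟩ : ↥D) + ⟨-(m : N), hmD⟩ = 0 := by
          apply Subtype.ext; simp
        have h9 : φ ((⟨(m : N), hmD'⟩ : ↥D) + ⟨-(m : N), hmD⟩) = 0 := by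
          rw [hsum, map_zero]
        rw [map_add, ← hval2, hval1] at h9
        have h10 : x = h m + (x - h m) := by abel
        rw [h10, h9]
    have hle : LinearMap.range θ ≤ G := le_trans le_sup_right (hGmax _ hG's le_sup_left)
    intro x hxp
    have : ((x : N), h ⟨x, hxp⟩) ∈ G := hle ⟨⟨x, hxp⟩, rfl⟩
    exact ⟨_, this, rfl⟩
  let e : ↥D ≃ₗ[A] N := LinearEquiv.ofTop D hDtop
  refine ⟨φ ∘ₗ e.symm.toLinearMap, fun x => ?_⟩
  have hmem : (((x : N) : N), f x) ∈ G := hG₀G ⟨x, rfl⟩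
  have hcoe : ((e.symm (x : N) : ↥D) : N) = (x : N) := by
    have h11 := e.apply_symm_apply ((x : N))
    rwa [LinearEquiv.ofTop_apply] at h11
  have := hφG (e.symm (x : N))
  rw [hcoe] at this
  exact huniq _ _ _ this hmem

end Zorn

section Trace

variable (A : Type u) [Ring A] (M : Type u) [AddCommGroup M] [Module A M]

lemma modInj_M_of_no_sigma {W : Type u} [AddCommGroup W] [Module A W]
    (hW : ∀ P : Submodule A W, MemSigma A M ↥P → P = ⊥) : ModInj A W M := by
  intro K f
  have h0 : LinearMap.range f = ⊥ :=
    hW _ (((memSigma_self (A := A) (M := M)).submodule K).range f)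
  refine ⟨0, fun x => ?_⟩
  have hx : f x ∈ LinearMap.range f := ⟨x, rfl⟩
  rw [h0, Submodule.mem_bot] at hx
  rw [hx]
  rfl

lemma modInj_trace_M {E : Type u} [AddCommGroup E] [Module A E] [hE : Module.Injective A E] :
    ModInj A ↥(sSup {P : Submodule A E | MemSigma A M ↥P}) M := by
  set T : Submodule A E := sSup {P : Submodule A E | MemSigma A M ↥P} with hTdef
  intro K f
  obtain ⟨h, hh⟩ := hE.out K.subtype K.injective_subtype (T.subtype ∘ₗ f)
  have hrange : LinearMap.range h ≤ T :=
    le_sSup ((memSigma_self (A := A) (M := M)).range h)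
  refine ⟨h.codRestrict T (fun m => hrange ⟨m, rfl⟩), fun x => ?_⟩
  apply Subtype.ext
  show h (K.subtype x) = ((f x : ↥T) : E)
  rw [hh x]
  rfl

lemma exists_injective_embedding (B : Type u) [AddCommGroup B] [Module A B] :
    ∃ (E : Type u) (_ : AddCommGroup E) (_ : Module A E),
      Module.Injective A E ∧ ∃ φ : B →ₗ[A] E, Function.Injective φ := by
  let b : ModuleCat.{u} A := ModuleCat.of A B
  let J : ModuleCat.{u} A := CategoryTheory.Injective.under b
  haveI : CategoryTheory.Injective (ModuleCat.of A ↥J) := by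
    have heq : ModuleCat.of A ↥J = J := rfl
    rw [heq]
    infer_instance
  refine ⟨J, inferInstance, inferInstance, ?_, ?_⟩
  · exact Module.injective_module_of_injective_object A J
  · exact ⟨(CategoryTheory.Injective.ι b : b ⟶ J).hom,
      (ModuleCat.mono_iff_injective _).1 inferInstance⟩

lemma memSigma_extension {B : Type u} [AddCommGroup B] [Module A B]
    (hB : ∀ (X : Type u) [AddCommGroup X] [Module A X], ModInj A X M → ModInj A X B)
    (P : Submodule A B) (hP : MemSigma A M ↥P) (hQ : MemSigma A M (B ⧸ P)) :
    MemSigma A M B := by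
  obtain ⟨E, _, _, hE, φ, hφ⟩ := exists_injective_embedding A ↥P
  haveI := hE
  set T : Submodule A E := sSup {Q : Submodule A E | MemSigma A M ↥Q} with hTdef
  have hTsig : MemSigma A M ↥T := MemSigma.sSup (fun Q hQ' => hQ')
  have hrange : LinearMap.range φ ≤ T := le_sSup (hP.range φ)
  let φ' : ↥P →ₗ[A] ↥T := φ.codRestrict T (fun x => hrange ⟨x, rfl⟩)
  have hTM : ModInj A ↥T M := modInj_trace_M A M
  have hTB : ModInj A ↥T B := hB ↥T hTM
  obtain ⟨g, hg⟩ := hTB P φ'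
  set θ : B →ₗ[A] ↥T × (B ⧸ P) := g.prod P.mkQ with hθdef
  have hker : LinearMap.ker θ = ⊥ := by
    rw [Submodule.eq_bot_iff]
    intro b hb
    rw [LinearMap.mem_ker] at hb
    have h1 : g b = 0 := congrArg Prod.fst hb
    have h2 : P.mkQ b = 0 := congrArg Prod.snd hb
    have hbP : b ∈ P := by
      rwa [Submodule.mkQ_apply, Submodule.Quotient.mk_eq_zero] at h2
    have h3 := hg ⟨b, hbP⟩
    have h4 : φ' ⟨b, hbP⟩ = 0 := by rw [← h3]; exact h1
    have h5 : φ ⟨b, hbP⟩ = 0 := congrArg Subtype.val h4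
    have h6 : (⟨b, hbP⟩ : ↥P) = 0 := hφ (by rw [h5, map_zero])
    simpa using congrArg Subtype.val h6
  exact (hTsig.prod hQ).of_injective θ (LinearMap.ker_eq_bot.1 hker)

end Trace

/-- if every semisimple right `R`-module belongs to `σ[M]`, then for any
right `R`-module `N`, every `M`-injective module is `N`-injective iff `N ∈ σ[M]`. -/
theorem stmt_1 (R : Type u) [Ring R]
    (M : Type u) [AddCommGroup M] [Module Rᵐᵒᵖ M]
    (hss : ∀ (S : Type u) [AddCommGroup S] [Module Rᵐᵒᵖ S],
      IsSemisimpleModule Rᵐᵒᵖ S → MemSigma Rᵐᵒᵖ M S)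
    (N : Type u) [AddCommGroup N] [Module Rᵐᵒᵖ N] :
    (∀ (X : Type u) [AddCommGroup X] [Module Rᵐᵒᵖ X],
      ModInj Rᵐᵒᵖ X M → ModInj Rᵐᵒᵖ X N) ↔ MemSigma Rᵐᵒᵖ M N := by
  constructor
  · intro hi
    classical
    set t : Submodule Rᵐᵒᵖ N := sSup {P : Submodule Rᵐᵒᵖ N | MemSigma Rᵐᵒᵖ M ↥P} with htdef
    have ht : MemSigma Rᵐᵒᵖ M ↥t := MemSigma.sSup (fun P hP => hP)
    have hmax : ∀ P : Submodule Rᵐᵒᵖ N, MemSigma Rᵐᵒᵖ M ↥P → P ≤ t := fun P hP => le_sSup hP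
    have hQtriv : ∀ P : Submodule Rᵐᵒᵖ (N ⧸ t), MemSigma Rᵐᵒᵖ M ↥P → P = ⊥ := by
      intro P hP
      set Y : Submodule Rᵐᵒᵖ N := P.comap t.mkQ with hYdef
      have hres : ∀ x ∈ Y, t.mkQ x ∈ P := fun x hx => hx
      let ψ : ↥Y →ₗ[Rᵐᵒᵖ] ↥P := t.mkQ.restrict hres
      have hψsurj : Function.Surjective ψ := by
        rintro ⟨q, hq⟩
        obtain ⟨x, hx⟩ := t.mkQ_surjective q
        have hxY : x ∈ Y := by show t.mkQ x ∈ P; rw [hx]; exact hq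
        exact ⟨⟨x, hxY⟩, Subtype.ext hx⟩
      have hty : t ≤ Y := by
        intro x hx
        show t.mkQ x ∈ P
        have hx0 : t.mkQ x = 0 := by
          rw [Submodule.mkQ_apply, Submodule.Quotient.mk_eq_zero]; exact hx
        rw [hx0]; exact P.zero_mem
      have hker : MemSigma Rᵐᵒᵖ M ↥(LinearMap.ker ψ) := by
        have hrange : LinearMap.range (Submodule.inclusion hty) = LinearMap.ker ψ := by
          ext y
          constructor
          · rintro ⟨z, rfl⟩
            rw [LinearMap.mem_ker]
            apply Subtype.ext
            show t.mkQ ↑(Submodule.inclusion hty z) = 0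
            have hc : ((Submodule.inclusion hty z : ↥Y) : N) = (z : N) := rfl
            rw [hc, Submodule.mkQ_apply, Submodule.Quotient.mk_eq_zero]
            exact z.2
          · intro hy
            have h1 := congrArg Subtype.val (LinearMap.mem_ker.1 hy)
            have hyt : (y : N) ∈ t := by
              have h2 : t.mkQ (y : N) = 0 := h1
              rwa [Submodule.mkQ_apply, Submodule.Quotient.mk_eq_zero] at h2
            exact ⟨⟨(y : N), hyt⟩, Subtype.ext rfl⟩
        rw [← hrange]
        exact ht.range (Submodule.inclusion hty)
      have hquot : MemSigma Rᵐᵒᵖ M (↥Y ⧸ LinearMap.ker ψ) :=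
        hP.of_equiv (LinearMap.quotKerEquivOfSurjective ψ hψsurj)
      have hYB : ∀ (X : Type u) [AddCommGroup X] [Module Rᵐᵒᵖ X],
          ModInj Rᵐᵒᵖ X M → ModInj Rᵐᵒᵖ X ↥Y :=
        fun X _ _ hX => (hi X hX).submodule Y
      have hY : MemSigma Rᵐᵒᵖ M ↥Y :=
        memSigma_extension Rᵐᵒᵖ M hYB (LinearMap.ker ψ) hker hquot
      have hYt : Y ≤ t := hmax Y hY
      have hPmap : P = Y.map t.mkQ := by
        rw [hYdef]
        rw [Submodule.map_comap_eq_self (by rw [Submodule.range_mkQ]; exact le_top)]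
      have h0 : t.map t.mkQ = ⊥ := by
        rw [Submodule.eq_bot_iff]
        rintro q ⟨x, hx, rfl⟩
        rw [Submodule.mkQ_apply, Submodule.Quotient.mk_eq_zero]
        exact hx
      rw [hPmap]
      exact le_bot_iff.1 (le_trans (Submodule.map_mono hYt) (le_of_eq h0))
    have hsemi : IsSemisimpleModule Rᵐᵒᵖ (N ⧸ t) := by
      rw [isSemisimpleModule_iff]; constructor
      intro Y
      have hYM : ModInj Rᵐᵒᵖ ↥Y M := by
        apply modInj_M_of_no_sigma
        intro P hP
        have h1 : MemSigma Rᵐᵒᵖ M ↥(P.map Y.subtype) :=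
          hP.of_equiv (Submodule.equivMapOfInjective Y.subtype Y.injective_subtype P).symm
        have h2 : P.map Y.subtype = ⊥ := hQtriv _ h1
        rw [Submodule.eq_bot_iff]
        intro x hx
        have h3 : (x : N ⧸ t) ∈ P.map Y.subtype := ⟨x, hx, rfl⟩
        rw [h2, Submodule.mem_bot] at h3
        exact Subtype.ext h3
      have hYQ : ModInj Rᵐᵒᵖ ↥Y (N ⧸ t) := (hi ↥Y hYM).quotient t
      obtain ⟨g, hg⟩ := hYQ Y LinearMap.id
      exact ⟨LinearMap.ker g, LinearMap.isCompl_of_proj (fun x => by simpa using hg x)⟩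
    have hQsig : MemSigma Rᵐᵒᵖ M (N ⧸ t) := hss (N ⧸ t) hsemi
    have htop : (⊤ : Submodule Rᵐᵒᵖ (N ⧸ t)) = ⊥ :=
      hQtriv ⊤ (hQsig.of_equiv (LinearEquiv.ofTop ⊤ rfl))
    have httop : t = ⊤ := by
      rw [Submodule.eq_top_iff']
      intro x
      have h1 : t.mkQ x ∈ (⊤ : Submodule Rᵐᵒᵖ (N ⧸ t)) := trivial
      rw [htop, Submodule.mem_bot] at h1
      rwa [Submodule.mkQ_apply, Submodule.Quotient.mk_eq_zero] at h1
    exact ht.of_equiv (LinearEquiv.ofTop t httop).symm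
  · intro hsig X _ _ hXM
    obtain ⟨ι, L, K, ⟨e⟩⟩ := hsig
    classical
    have h1 : ModInj Rᵐᵒᵖ X (ι →₀ M) := by
      apply modInj_of_iSup
        (p := fun i : ι => LinearMap.range (Finsupp.lsingle (R := Rᵐᵒᵖ) (M := M) i))
      · exact Finsupp.iSup_lsingle_range
      · intro i
        have hinj : Function.Injective (Finsupp.lsingle (R := Rᵐᵒᵖ) (M := M) (α := ι) i) :=
          LinearMap.ker_eq_bot.1 (Finsupp.ker_lsingle i)
        exact hXM.of_equiv (LinearEquiv.ofInjective _ hinj).symm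
    have h2 := h1.quotient L
    have h3 := h2.submodule K
    exact h3.of_equiv e
end

section
/- Let R be an associative unital ring and let N be a right R-module such that every semisimple right R-module belongs to σ[N]. Then there exists a right R-module M such that for every right R-module K, M is K-injective if and only if K ∈ σ[N]. (In other words, every Wisbauer class containing all semisimple modules is the injectivity domain of some module.) -/
universe u

open Function



/-- `X` is (isomorphic to) a quotient of a submodule of a direct sum of copies of `N`. -/
def Good (A : Type u) [Ring A] (N : Type u) [AddCommGroup N] [Module A N]
    (X : Type u) [AddCommGroup X] [Module A X] : Prop :=
  ∃ (ι : Type u) (P : Submodule A (ι →₀ N)) (f : P →ₗ[A] X), Function.Surjective f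

section Aux

variable {A : Type u} [Ring A] {N : Type u} [AddCommGroup N] [Module A N]

theorem good_of_surjective {X X' : Type u} [AddCommGroup X] [Module A X]
    [AddCommGroup X'] [Module A X'] (h : Good A N X) (f : X →ₗ[A] X')
    (hf : Surjective f) : Good A N X' := by
  obtain ⟨ι, P, g, hg⟩ := h
  exact ⟨ι, P, f.comp g, hf.comp hg⟩

theorem good_of_injective {X X' : Type u} [AddCommGroup X] [Module A X]
    [AddCommGroup X'] [Module A X'] (h : Good A N X') (f : X →ₗ[A] X')
    (hf : Injective f) : Good A N X := by
  obtain ⟨ι, P, g, hg⟩ := h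
  classical
  let q : Submodule A P := Submodule.comap g (LinearMap.range f)
  let ψ : q →ₗ[A] LinearMap.range f :=
    LinearMap.codRestrict _ (g.comp q.subtype) (fun x => x.2)
  let e : X ≃ₗ[A] LinearMap.range f := LinearEquiv.ofInjective f hf
  let f₂ : q →ₗ[A] X := (e.symm : LinearMap.range f →ₗ[A] X).comp ψ
  have hf₂ : Surjective f₂ := by
    intro x
    obtain ⟨p, hp⟩ := hg (f x)
    have hpq : p ∈ q := by simp [q, hp]
    refine ⟨⟨p, hpq⟩, ?_⟩
    have : ψ ⟨p, hpq⟩ = e x := by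
      apply Subtype.ext
      have h1 : (ψ ⟨p, hpq⟩ : X') = g p := rfl
      have h2 : (e x : X') = f x := rfl
      rw [h1, h2, hp]
    simp [f₂, this]
  let eq := Submodule.equivMapOfInjective P.subtype P.injective_subtype q
  exact ⟨ι, q.map P.subtype, f₂.comp (eq.symm : q.map P.subtype →ₗ[A] q),
    hf₂.comp eq.symm.surjective⟩

theorem good_congr {X X' : Type u} [AddCommGroup X] [Module A X]
    [AddCommGroup X'] [Module A X'] (e : X ≃ₗ[A] X') (h : Good A N X') :
    Good A N X :=
  good_of_injective h (e : X →ₗ[A] X') e.injective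

theorem good_free (ι : Type u) : Good A N (ι →₀ N) := by
  refine ⟨ι, ⊤, (Submodule.topEquiv : (⊤ : Submodule A (ι →₀ N)) ≃ₗ[A] (ι →₀ N)), ?_⟩
  exact (Submodule.topEquiv (R := A) (M := ι →₀ N)).surjective

theorem good_of_subsingleton {X : Type u} [AddCommGroup X] [Module A X]
    [Subsingleton X] : Good A N X :=
  ⟨PEmpty.{u+1}, ⊥, 0, fun x => ⟨0, Subsingleton.elim _ _⟩⟩

theorem good_submodule {X : Type u} [AddCommGroup X] [Module A X]
    (h : Good A N X) (D : Submodule A X) : Good A N D :=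
  good_of_injective h D.subtype D.injective_subtype

end Aux
section Aux2

variable {A : Type u} [Ring A] {N : Type u} [AddCommGroup N] [Module A N]

theorem good_dfinsupp {J : Type u} (D : J → Type u) [∀ j, AddCommGroup (D j)]
    [∀ j, Module A (D j)] (h : ∀ j, Good A N (D j)) : Good A N (Π₀ j, D j) := by
  classical
  choose ι P f hf using h
  -- surjection (Π₀ j, P j) → (Π₀ j, D j)
  let φ : (Π₀ j, (P j : Type u)) →ₗ[A] Π₀ j, D j := DFinsupp.mapRange.linearMap f
  have hφ : Surjective φ := by
    intro d
    induction d using DFinsupp.induction with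
    | h0 => exact ⟨0, map_zero φ⟩
    | ha j x d _ _ ih =>
      obtain ⟨p, hp⟩ := ih
      obtain ⟨y, hy⟩ := hf j x
      refine ⟨DFinsupp.single j y + p, ?_⟩
      have hsingle : φ (DFinsupp.single j y) = DFinsupp.single j x := by
        show DFinsupp.mapRange.linearMap f (DFinsupp.single j y) = _
        rw [DFinsupp.mapRange.linearMap_apply, DFinsupp.mapRange_single, hy]
      rw [map_add, hsingle, hp]
  -- injection (Π₀ j, P j) → (Π₀ j, ι j →₀ N)
  let ψ : (Π₀ j, (P j : Type u)) →ₗ[A] Π₀ j, (ι j →₀ N) :=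
    DFinsupp.mapRange.linearMap (fun j => (P j).subtype)
  have hψ : Injective ψ := by
    intro a b hab
    refine DFinsupp.ext fun j => ?_
    have h1 := congrArg (fun d => d j) hab
    simp only [ψ, DFinsupp.mapRange.linearMap_apply, DFinsupp.mapRange_apply] at h1
    exact Subtype.ext h1
  have hbig : Good A N (Π₀ j, (ι j →₀ N)) := by
    have := good_free (A := A) (N := N) ((Σ j, ι j))
    exact good_congr (sigmaFinsuppLequivDFinsupp (R := A)).symm this
  exact good_of_surjective (X := Π₀ j, (P j : Type u)) (good_of_injective hbig ψ hψ) φ hφ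

theorem good_iSup {X : Type u} [AddCommGroup X] [Module A X] {J : Type u}
    (D : J → Submodule A X) (h : ∀ j, Good A N (D j)) :
    Good A N (⨆ j, D j : Submodule A X) := by
  classical
  have hrange := Submodule.iSup_eq_range_dfinsupp_lsum D
  set L := DFinsupp.lsum ℕ (M := fun j => ↥(D j)) fun j => (D j).subtype with hL
  have hgood : Good A N (Π₀ j, (D j : Type u)) := good_dfinsupp _ h
  have : Good A N (LinearMap.range L) :=
    good_of_surjective hgood L.rangeRestrict (LinearMap.surjective_rangeRestrict L)
  exact good_congr (LinearEquiv.ofEq _ _ hrange) this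

variable (A N) in
/-- The trace of the class `Good` in `X`: the largest `Good` submodule. -/
def trSub (X : Type u) [AddCommGroup X] [Module A X] : Submodule A X :=
  ⨆ (D : {D : Submodule A X // Good A N D}), (D : Submodule A X)

theorem good_trSub (X : Type u) [AddCommGroup X] [Module A X] :
    Good A N (trSub A N X) :=
  good_iSup _ (fun D => D.2)

theorem le_trSub {X : Type u} [AddCommGroup X] [Module A X]
    {D : Submodule A X} (h : Good A N D) : D ≤ trSub A N X :=
  le_iSup (fun (D : {D : Submodule A X // Good A N D}) => (D : Submodule A X)) ⟨D, h⟩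

theorem memSigma_iff_good {K : Type u} [AddCommGroup K] [Module A K] :
    MemSigma A N K ↔ Good A N K := by
  constructor
  · rintro ⟨ι, L, Kq, ⟨e⟩⟩
    refine good_congr e ?_
    let P : Submodule A (ι →₀ N) := Kq.comap L.mkQ
    refine ⟨ι, P, LinearMap.codRestrict Kq ((L.mkQ).comp P.subtype) (fun x => x.2), ?_⟩
    rintro ⟨y, hy⟩
    obtain ⟨v, rfl⟩ := Submodule.mkQ_surjective L y
    exact ⟨⟨v, hy⟩, rfl⟩
  · rintro ⟨ι, P, f, hf⟩
    let L : Submodule A (ι →₀ N) := (LinearMap.ker f).map P.subtype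
    let φ : P →ₗ[A] (ι →₀ N) ⧸ L := (L.mkQ).comp P.subtype
    have hker : LinearMap.ker φ = LinearMap.ker f := by
      ext x
      simp only [LinearMap.mem_ker, φ, LinearMap.comp_apply, Submodule.mkQ_apply,
        Submodule.Quotient.mk_eq_zero]
      constructor
      · rintro hx
        obtain ⟨y, hy, hyx⟩ := hx
        have : y = x := Subtype.ext hyx
        subst this
        exact hy
      · intro hx
        exact ⟨x, hx, rfl⟩
    refine ⟨ι, L, LinearMap.range φ, ⟨?_⟩⟩
    exact ((f.quotKerEquivOfSurjective hf).symm.trans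
      (Submodule.quotEquivOfEq _ _ hker.symm)).trans φ.quotKerEquivRange

end Aux2
section InjAux

variable {A : Type u} [Ring A]

theorem modInj_pi {ι : Type u} (W : ι → Type u) [∀ i, AddCommGroup (W i)]
    [∀ i, Module A (W i)] {K : Type u} [AddCommGroup K] [Module A K]
    (h : ∀ i, ModInj A (W i) K) : ModInj A (∀ i, W i) K := by
  intro Y f
  choose g hg using fun i => h i Y ((LinearMap.proj i).comp f)
  exact ⟨LinearMap.pi g, fun x => funext fun i => hg i x⟩

theorem modInj_proj {ι : Type u} (W : ι → Type u) [∀ i, AddCommGroup (W i)]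
    [∀ i, Module A (W i)] {K : Type u} [AddCommGroup K] [Module A K]
    (h : ModInj A (∀ i, W i) K) (i : ι) : ModInj A (W i) K := by
  classical
  intro Y f
  obtain ⟨G, hG⟩ := h Y ((LinearMap.single A W i).comp f)
  refine ⟨(LinearMap.proj i).comp G, fun x => ?_⟩
  have := congrArg (fun v => v i) (hG x)
  simpa using this

theorem modInj_prod {M₁ M₂ K : Type u} [AddCommGroup M₁] [Module A M₁]
    [AddCommGroup M₂] [Module A M₂] [AddCommGroup K] [Module A K]
    (h₁ : ModInj A M₁ K) (h₂ : ModInj A M₂ K) : ModInj A (M₁ × M₂) K := by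
  intro Y f
  obtain ⟨g₁, hg₁⟩ := h₁ Y ((LinearMap.fst A M₁ M₂).comp f)
  obtain ⟨g₂, hg₂⟩ := h₂ Y ((LinearMap.snd A M₁ M₂).comp f)
  refine ⟨g₁.prod g₂, fun x => ?_⟩
  have e1 := hg₁ x; have e2 := hg₂ x
  simp only [LinearMap.comp_apply, LinearMap.fst_apply, LinearMap.snd_apply] at e1 e2
  exact Prod.ext (by simpa [LinearMap.prod_apply] using e1)
    (by simpa [LinearMap.prod_apply] using e2)

theorem modInj_fst {M₁ M₂ K : Type u} [AddCommGroup M₁] [Module A M₁]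
    [AddCommGroup M₂] [Module A M₂] [AddCommGroup K] [Module A K]
    (h : ModInj A (M₁ × M₂) K) : ModInj A M₁ K := by
  intro Y f
  obtain ⟨G, hG⟩ := h Y ((LinearMap.inl A M₁ M₂).comp f)
  refine ⟨(LinearMap.fst A M₁ M₂).comp G, fun x => ?_⟩
  have := congrArg Prod.fst (hG x)
  simpa using this

theorem modInj_snd {M₁ M₂ K : Type u} [AddCommGroup M₁] [Module A M₁]
    [AddCommGroup M₂] [Module A M₂] [AddCommGroup K] [Module A K]
    (h : ModInj A (M₁ × M₂) K) : ModInj A M₂ K := by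
  intro Y f
  obtain ⟨G, hG⟩ := h Y ((LinearMap.inr A M₁ M₂).comp f)
  refine ⟨(LinearMap.snd A M₁ M₂).comp G, fun x => ?_⟩
  have := congrArg Prod.snd (hG x)
  simpa using this

theorem modInj_submodule {M K : Type u} [AddCommGroup M] [Module A M]
    [AddCommGroup K] [Module A K] (h : ModInj A M K) (S : Submodule A K) :
    ModInj A M S := by
  intro Y f
  let Y' : Submodule A K := Y.map S.subtype
  let eY : Y ≃ₗ[A] Y' := Submodule.equivMapOfInjective S.subtype S.injective_subtype Y
  obtain ⟨g, hg⟩ := h Y' (f.comp (eY.symm : Y' →ₗ[A] Y))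
  refine ⟨g.comp S.subtype, fun x => ?_⟩
  have hx : ((x : S) : K) ∈ Y' := ⟨x, x.2, rfl⟩
  have h1 : g ((x : S) : K) = f (eY.symm ⟨((x : S) : K), hx⟩) := hg ⟨_, hx⟩
  have h2 : eY.symm ⟨((x : S) : K), hx⟩ = x := by
    apply eY.injective
    rw [eY.apply_symm_apply]
    apply Subtype.ext
    exact (Submodule.coe_equivMapOfInjective_apply S.subtype S.injective_subtype Y x).symm
  simpa [h2] using h1

theorem modInj_congr {M X X' : Type u} [AddCommGroup M] [Module A M]
    [AddCommGroup X] [Module A X] [AddCommGroup X'] [Module A X']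
    (h : ModInj A M X) (e : X' ≃ₗ[A] X) : ModInj A M X' := by
  intro Y f
  let Y' : Submodule A X := Y.map (e : X' →ₗ[A] X)
  let eY : Y ≃ₗ[A] Y' := Submodule.equivMapOfInjective (e : X' →ₗ[A] X) e.injective Y
  obtain ⟨g, hg⟩ := h Y' (f.comp (eY.symm : Y' →ₗ[A] Y))
  refine ⟨g.comp (e : X' →ₗ[A] X), fun x => ?_⟩
  have hx : e ((x : X')) ∈ Y' := ⟨x, x.2, rfl⟩
  have h1 : g (e (x : X')) = f (eY.symm ⟨e (x : X'), hx⟩) := hg ⟨_, hx⟩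
  have h2 : eY.symm ⟨e (x : X'), hx⟩ = x := by
    apply eY.injective
    rw [eY.apply_symm_apply]
    apply Subtype.ext
    exact (Submodule.coe_equivMapOfInjective_apply (e : X' →ₗ[A] X) e.injective Y x).symm
  simpa [h2] using h1

theorem modInj_of_injective {Q K : Type u} [AddCommGroup Q] [Module A Q]
    [AddCommGroup K] [Module A K] [inj : Module.Injective A Q] :
    ModInj A Q K := by
  intro Y f
  obtain ⟨h, hh⟩ := inj.out Y.subtype Y.injective_subtype f
  exact ⟨h, fun x => hh x⟩

theorem exists_inj_container (A : Type u) [Ring A] (X : Type u) [AddCommGroup X]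
    [Module A X] :
    ∃ (Q : Type u) (_ : AddCommGroup Q) (_ : Module A Q),
      Module.Injective A Q ∧ ∃ e : X →ₗ[A] Q, Function.Injective e := by
  let Xc := ModuleCat.of A X
  let Qc := CategoryTheory.Injective.under Xc
  refine ⟨Qc, inferInstance, inferInstance, ?_, (CategoryTheory.Injective.ι Xc).hom, ?_⟩
  · exact Module.injective_module_of_injective_object A Qc
      (inj := CategoryTheory.Injective.injective_under Xc)
  · exact (ModuleCat.mono_iff_injective (CategoryTheory.Injective.ι Xc)).mp inferInstance

end InjAux
section Bad

variable {A : Type u} [Ring A] {N : Type u} [AddCommGroup N] [Module A N]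

theorem exists_bad_pair
    (hss : ∀ (S : Type u) [AddCommGroup S] [Module A S],
      IsSemisimpleModule A S → Good A N S)
    (J₁ : Submodule A A) (hJ : J₁ ≠ ⊤)
    (hno : ∀ D : Submodule A (A ⧸ J₁), Good A N D → D = ⊥) :
    ∃ V : Submodule A (A ⧸ J₁),
      (∀ D : Submodule A V, Good A N D → D = ⊥) ∧
      ¬(∃ g : (A ⧸ J₁) →ₗ[A] V, ∀ v : V, g ↑v = v) := by
  obtain ⟨m, hm, hle⟩ := Ideal.exists_le_maximal J₁ hJ
  refine ⟨Submodule.map J₁.mkQ m, ?_, ?_⟩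
  · intro D hD
    have hmap : Good A N (D.map (Submodule.map J₁.mkQ m).subtype) :=
      good_congr (Submodule.equivMapOfInjective (Submodule.map J₁.mkQ m).subtype
        (Submodule.map J₁.mkQ m).injective_subtype D).symm hD
    rw [eq_bot_iff]
    intro x hx
    have hmem : (x : A ⧸ J₁) ∈ D.map (Submodule.map J₁.mkQ m).subtype := ⟨x, hx, rfl⟩
    rw [hno _ hmap] at hmem
    have hx0 : (x : A ⧸ J₁) = 0 := hmem
    exact (Submodule.mem_bot _).mpr (Subtype.ext hx0)
  · set V := Submodule.map J₁.mkQ m with hV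
    have hVtop : V ≠ ⊤ := by
      intro htop
      have h1 : Submodule.comap J₁.mkQ V = ⊤ := by
        rw [htop]; exact Submodule.comap_top _
      rw [hV, Submodule.comap_map_mkQ, sup_eq_right.mpr hle] at h1
      exact hm.ne_top h1
    rintro ⟨g, hg⟩
    set g2 : (A ⧸ J₁) →ₗ[A] (A ⧸ J₁) := V.subtype.comp g with hg2
    have hker : V ≤ LinearMap.ker (g2 - LinearMap.id) := by
      intro v hv
      have h2 : g2 v = v := by
        have h3 := hg ⟨v, hv⟩
        simpa [hg2] using congrArg (V.subtype) h3
      simp [LinearMap.mem_ker, LinearMap.sub_apply, h2]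
    set s : ((A ⧸ J₁) ⧸ V) →ₗ[A] (A ⧸ J₁) := V.liftQ (g2 - LinearMap.id) hker with hs
    have hsimple : IsSimpleModule A ((A ⧸ J₁) ⧸ V) := by
      haveI : IsSimpleModule A (A ⧸ m) :=
        isSimpleModule_iff_isCoatom.mpr (Ideal.isMaximal_def.mp hm)
      exact IsSimpleModule.congr (Submodule.quotientQuotientEquivQuotient J₁ m hle)
    haveI := hsimple
    have hgoodQ : Good A N ((A ⧸ J₁) ⧸ V) := hss _ inferInstance
    have hgoodR : Good A N (LinearMap.range s) :=
      good_of_surjective hgoodQ s.rangeRestrict (LinearMap.surjective_rangeRestrict s)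
    have hs0 : s = 0 := LinearMap.range_eq_bot.mp (hno _ hgoodR)
    have hid : g2 = LinearMap.id := by
      have hcomp : s.comp V.mkQ = g2 - LinearMap.id := V.liftQ_mkQ _ _
      rw [hs0] at hcomp
      have h4 : g2 - LinearMap.id = 0 := by rw [← hcomp]; ext x; simp
      exact sub_eq_zero.mp h4
    apply hVtop
    rw [eq_top_iff]
    intro x _
    have h5 : g2 x = x := by rw [hid]; rfl
    rw [← h5]
    exact (g x).2

end Bad
section Main

variable {A : Type u} [Ring A] {N : Type u} [AddCommGroup N] [Module A N]

theorem main_exists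
    (hss : ∀ (S : Type u) [AddCommGroup S] [Module A S],
      IsSemisimpleModule A S → Good A N S) :
    ∃ (M : Type u) (_ : AddCommGroup M) (_ : Module A M),
      ∀ (K : Type u) [AddCommGroup K] [Module A K],
        ModInj A M K ↔ Good A N K := by
  classical
  choose Qt instQ1 instQ2 hQinj hQemb using fun J : Submodule A A =>
    exists_inj_container A (A ⧸ J)
  letI : ∀ J : Submodule A A, AddCommGroup (Qt J) := instQ1
  letI : ∀ J : Submodule A A, Module A (Qt J) := instQ2
  choose emb hemb using hQemb
  let ix2 := {p : Σ J : Submodule A A, Submodule A (A ⧸ J) //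
      ∀ D : Submodule A p.2, Good A N D → D = ⊥}
  let W : ix2 → Type u := fun q => q.1.2
  let M1 : Type u := ∀ q : ix2, W q
  let M2 : Type u := ∀ J : Submodule A A, (trSub A N (Qt J) : Type u)
  refine ⟨M1 × M2, inferInstance, inferInstance, ?_⟩
  intro K _ _
  constructor
  · -- ModInj implies Good
    intro hM
    -- Step 1 : in any module with the relative injectivity property, any nonzero
    -- element has a nonzero Good submodule inside its span
    have step1 : ∀ (C : Type u) [AddCommGroup C] [Module A C],
        ModInj A (M1 × M2) C → ∀ c : C, c ≠ 0 →
        ∃ D : Submodule A C, D ≤ Submodule.span A {c} ∧ D ≠ ⊥ ∧ Good A N D := by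
      intro C _ _ hMC c hc
      by_contra hcon
      push_neg at hcon
      set φc := LinearMap.toSpanSingleton A C c with hφc
      set J₁ := LinearMap.ker φc with hJ₁def
      have e₁ : (A ⧸ J₁) ≃ₗ[A] (Submodule.span A {c} : Submodule A C) :=
        (φc.quotKerEquivRange).trans
          (LinearEquiv.ofEq _ _ (LinearMap.span_singleton_eq_range A C c).symm)
      have hJ₁ : J₁ ≠ ⊤ := by
        intro htop
        apply hc
        have h1 : (1 : A) ∈ J₁ := htop ▸ Submodule.mem_top
        have h2 : φc 1 = 0 := h1
        rwa [hφc, LinearMap.toSpanSingleton_apply_one] at h2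
      have hnoJ : ∀ D : Submodule A (A ⧸ J₁), Good A N D → D = ⊥ := by
        intro D hD
        by_contra hne
        let D' := D.map (e₁ : (A ⧸ J₁) →ₗ[A] (Submodule.span A {c} : Submodule A C))
        let D'' := D'.map (Submodule.span A {c}).subtype
        have hgood'' : Good A N D'' := by
          have hg1 : Good A N D' :=
            good_congr (Submodule.equivMapOfInjective
              (e₁ : (A ⧸ J₁) →ₗ[A] (Submodule.span A {c} : Submodule A C)) e₁.injective D).symm hD
          exact good_congr (Submodule.equivMapOfInjective
            (Submodule.span A {c}).subtype (Submodule.span A {c}).injective_subtype D').symm hg1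
        have hle'' : D'' ≤ Submodule.span A {c} := Submodule.map_subtype_le _ _
        have hne'' : D'' ≠ ⊥ := by
          obtain ⟨d, hdD, hd0⟩ := (Submodule.ne_bot_iff D).mp hne
          refine (Submodule.ne_bot_iff D'').mpr ⟨(e₁ d : C), ⟨e₁ d, ⟨d, hdD, rfl⟩, rfl⟩, ?_⟩
          intro h0
          apply hd0
          apply e₁.injective
          apply Subtype.ext
          simpa using h0
        exact hcon D'' hle'' hne'' hgood''
      obtain ⟨V, hVsmall, hVnoext⟩ := exists_bad_pair hss J₁ hJ₁ hnoJ
      have hMspan : ModInj A (M1 × M2) (Submodule.span A {c} : Submodule A C) :=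
        modInj_submodule hMC _
      have hMJ : ModInj A (M1 × M2) (A ⧸ J₁) := modInj_congr hMspan e₁
      have hW : ModInj A V (A ⧸ J₁) :=
        modInj_proj W (modInj_fst hMJ) ⟨⟨J₁, V⟩, hVsmall⟩
      obtain ⟨g, hg⟩ := hW V LinearMap.id
      exact hVnoext ⟨g, fun v => hg v⟩
    -- Step 2 : every cyclic submodule is Good
    have step2 : ∀ x : K, Good A N (Submodule.span A {x} : Submodule A K) := by
      intro x
      by_cases hx : x = 0
      · subst hx
        rw [Submodule.span_zero_singleton]
        exact good_of_subsingleton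
      · set C0 := (Submodule.span A {x} : Submodule A K) with hC0
        have hMC0 : ModInj A (M1 × M2) C0 := modInj_submodule hM _
        set φx := LinearMap.toSpanSingleton A K x with hφx
        set I := LinearMap.ker φx with hIdef
        have e₀ : (A ⧸ I) ≃ₗ[A] C0 :=
          (φx.quotKerEquivRange).trans
            (LinearEquiv.ofEq _ _ (LinearMap.span_singleton_eq_range A K x).symm)
        set T := trSub A N C0 with hT
        let ε : C0 →ₗ[A] Qt I := (emb I).comp (e₀.symm : C0 →ₗ[A] (A ⧸ I))
        have hεinj : Function.Injective ε := by
          intro a b hab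
          exact e₀.symm.injective (hemb I hab)
        have hS' : Good A N (T.map ε) :=
          good_congr (Submodule.equivMapOfInjective ε hεinj T).symm (good_trSub C0)
        have hle : T.map ε ≤ trSub A N (Qt I) := le_trSub hS'
        let f : T →ₗ[A] (trSub A N (Qt I) : Submodule A (Qt I)) :=
          LinearMap.codRestrict _ (ε.comp T.subtype) (fun t => hle ⟨(t : C0), t.2, rfl⟩)
        have hM2 : ModInj A (trSub A N (Qt I) : Submodule A (Qt I)) C0 :=
          modInj_proj _ (modInj_snd hMC0) I
        obtain ⟨g, hg⟩ := hM2 T f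
        have hker : LinearMap.ker g = ⊥ := by
          rw [eq_bot_iff]
          intro c hc
          by_contra hc0
          have hc0' : c ≠ 0 := fun h => hc0 (h ▸ Submodule.zero_mem ⊥)
          obtain ⟨D, hDle, hDne, hDgood⟩ := step1 C0 hMC0 c hc0'
          have hDT : D ≤ T := le_trSub hDgood
          obtain ⟨d, hdD, hd0⟩ := (Submodule.ne_bot_iff D).mp hDne
          have hspan : Submodule.span A {c} ≤ LinearMap.ker g :=
            Submodule.span_le.mpr (by simpa using hc)
          have hdker : g d = 0 := hspan (hDle hdD)
          have h2 : g d = f ⟨d, hDT hdD⟩ := hg ⟨d, hDT hdD⟩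
          have h3 : (f ⟨d, hDT hdD⟩ : Qt I) = ε d := rfl
          have h4 : ε d = 0 := by
            rw [← h3, ← h2, hdker]
            rfl
          exact hd0 (hεinj (by simpa using h4))
        exact good_of_injective (good_trSub (Qt I)) g (LinearMap.ker_eq_bot.mp hker)
    have htop : (⨆ x : K, Submodule.span A {x}) = (⊤ : Submodule A K) := by
      rw [eq_top_iff]
      intro y _
      exact Submodule.mem_iSup_of_mem y (Submodule.mem_span_singleton_self y)
    have hGtop : Good A N ((⊤ : Submodule A K) : Submodule A K) := by
      rw [← htop]
      exact good_iSup _ step2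
    exact good_congr (Submodule.topEquiv (R := A) (M := K)).symm hGtop
  · -- Good implies ModInj
    intro hgood
    apply modInj_prod
    · apply modInj_pi
      intro q
      intro Y f
      have hY : Good A N Y := good_submodule hgood Y
      have hrange : Good A N (LinearMap.range f) :=
        good_of_surjective hY f.rangeRestrict (LinearMap.surjective_rangeRestrict f)
      have hf0 : f = 0 := LinearMap.range_eq_bot.mp (q.2 _ hrange)
      exact ⟨0, fun y => by rw [hf0]; rfl⟩
    · apply modInj_pi
      intro J
      intro Y f
      let f' : Y →ₗ[A] Qt J := (trSub A N (Qt J)).subtype.comp f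
      obtain ⟨h, hh⟩ := (hQinj J).out Y.subtype Y.injective_subtype f'
      have hrange : Good A N (LinearMap.range h) :=
        good_of_surjective hgood h.rangeRestrict (LinearMap.surjective_rangeRestrict h)
      have hle : LinearMap.range h ≤ trSub A N (Qt J) := le_trSub hrange
      refine ⟨LinearMap.codRestrict _ h (fun z => hle ⟨z, rfl⟩), fun y => ?_⟩
      apply Subtype.ext
      show h (y : K) = (f y : Qt J)
      exact hh y

end Main
/-- if every semisimple right `R`-module belongs to `σ[N]`, then there is a
right `R`-module `M` whose injectivity domain is exactly `σ[N]`. -/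
theorem stmt_2 (R : Type u) [Ring R]
    (N : Type u) [AddCommGroup N] [Module Rᵐᵒᵖ N]
    (hss : ∀ (S : Type u) [AddCommGroup S] [Module Rᵐᵒᵖ S],
      IsSemisimpleModule Rᵐᵒᵖ S → MemSigma Rᵐᵒᵖ N S) :
    ∃ M : ModuleCat.{u} Rᵐᵒᵖ,
      ∀ (K : Type u) [AddCommGroup K] [Module Rᵐᵒᵖ K],
        ModInj Rᵐᵒᵖ M K ↔ MemSigma Rᵐᵒᵖ N K := by
  have hss' : ∀ (S : Type u) [AddCommGroup S] [Module Rᵐᵒᵖ S],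
      IsSemisimpleModule Rᵐᵒᵖ S → Good Rᵐᵒᵖ N S := by
    intro S _ _ h
    exact memSigma_iff_good.mp (hss S h)
  obtain ⟨M, i1, i2, hM⟩ := main_exists hss'
  letI := i1
  letI := i2
  refine ⟨ModuleCat.of Rᵐᵒᵖ M, ?_⟩
  intro K _ _
  exact (hM K).trans memSigma_iff_good.symm
end

section
/- Let R be a right uniform ring (R is nonzero and any two nonzero right ideals of R have nonzero intersection), and let M be a right R-module that is nonsingular (Z(M) = 0) and not injective. Then for every right R-module N, M is N-injective if and only if N is singular (Z(N) = N). -/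
universe u

/-- A right ideal of `R` (i.e. a left ideal of `Rᵐᵒᵖ`) is essential if it intersects
every nonzero right ideal nontrivially. -/
def IsEssentialRightIdeal (R : Type u) [Ring R] (I : Ideal Rᵐᵒᵖ) : Prop :=
  ∀ K : Ideal Rᵐᵒᵖ, K ≠ ⊥ → I ⊓ K ≠ ⊥

/-- The (right) annihilator of an element `x` of a right `R`-module, as a right ideal. -/
def rAnn (R : Type u) [Ring R] (M : Type u) [AddCommGroup M] [Module Rᵐᵒᵖ M] (x : M) :
    Ideal Rᵐᵒᵖ :=
  LinearMap.ker (LinearMap.toSpanSingleton Rᵐᵒᵖ M x)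

/-- over a right uniform ring, the injectivity domain of a nonsingular
non-injective right module consists exactly of the singular modules. -/
theorem stmt_3 (R : Type u) [Ring R] [Nontrivial R]
    (hu : ∀ I K : Ideal Rᵐᵒᵖ, I ≠ ⊥ → K ≠ ⊥ → I ⊓ K ≠ ⊥)
    (M : Type u) [AddCommGroup M] [Module Rᵐᵒᵖ M]
    (hns : ∀ x : M, IsEssentialRightIdeal R (rAnn R M x) → x = 0)
    (hni : ¬ ∀ (X : Type u) [AddCommGroup X] [Module Rᵐᵒᵖ X], ModInj Rᵐᵒᵖ M X) :
    ∀ (N : Type u) [AddCommGroup N] [Module Rᵐᵒᵖ N],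
      ModInj Rᵐᵒᵖ M N ↔ ∀ x : N, IsEssentialRightIdeal R (rAnn R N x) := by
  intro N _ _
  constructor
  · -- forward: M N-injective → N singular
    intro hM x
    by_contra hx
    -- since R is uniform, a non-essential right ideal must be ⊥
    have hann : rAnn R N x = ⊥ := by
      by_contra h
      exact hx (fun K hK => hu _ K h hK)
    set φ := LinearMap.toSpanSingleton Rᵐᵒᵖ N x with hφ
    have hinj : Function.Injective φ := by
      rw [← LinearMap.ker_eq_bot]; exact hann
    -- M satisfies Baer's criterion
    have hbaer : Module.Baer Rᵐᵒᵖ M := by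
      intro I f
      set e := Submodule.equivMapOfInjective φ hinj I with he
      obtain ⟨g, hg⟩ := hM (Submodule.map φ I) (f.comp (e.symm : Submodule.map φ I →ₗ[Rᵐᵒᵖ] I))
      refine ⟨g.comp φ, fun r hr => ?_⟩
      have h1 : φ r = (e ⟨r, hr⟩ : N) :=
        (Submodule.coe_equivMapOfInjective_apply φ hinj I ⟨r, hr⟩).symm
      have h2 := hg (e ⟨r, hr⟩)
      simp only [LinearMap.comp_apply, LinearEquiv.coe_coe, LinearEquiv.symm_apply_apply] at h2 ⊢
      rw [h1, h2]
    have hInj : Module.Injective Rᵐᵒᵖ M := hbaer.injective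
    exact hni fun X _ _ K f => by
      obtain ⟨g, hg⟩ := hInj.out K.subtype K.injective_subtype f
      exact ⟨g, hg⟩
  · -- backward: N singular → M N-injective
    intro hsing K f
    refine ⟨0, fun y => ?_⟩
    have hle : rAnn R N (y : N) ≤ rAnn R M (f y) := by
      intro r hr
      have hr' : r • (y : N) = 0 := hr
      have hy0 : r • y = (0 : K) := Subtype.ext (by simpa using hr')
      show r • f y = 0
      rw [← map_smul, hy0, map_zero]
    have : IsEssentialRightIdeal R (rAnn R M (f y)) := fun J hJ => by
      intro hbot
      exact hsing (y : N) J hJ (le_bot_iff.mp (le_trans (inf_le_inf_right J hle) hbot.le))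
    simp [hns _ this]
end

section
/- Let R be a right semiartinian ring (every nonzero right R-module has nonzero socle). Then the following are equivalent: (1) R has no right i-middle class; (2) every quasi-injective right R-module that is not semisimple is injective. -/
universe u

namespace Stmt5

variable {A : Type u} [Ring A]

/-- Absolutely injective (within universe u). -/
def Inj (A : Type u) [Ring A] (M : Type u) [AddCommGroup M] [Module A M] : Prop :=
  ∀ (N : Type u) [AddCommGroup N] [Module A N], ModInj A M N

section Basic

variable {M M' N N' : Type u} [AddCommGroup M] [Module A M] [AddCommGroup M'] [Module A M']
  [AddCommGroup N] [Module A N] [AddCommGroup N'] [Module A N']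

theorem modInj_congr_left (h : ModInj A M N) (e : M ≃ₗ[A] M') : ModInj A M' N := by
  intro K f
  obtain ⟨g, hg⟩ := h K ((e.symm : M' →ₗ[A] M).comp f)
  exact ⟨(e : M →ₗ[A] M').comp g, fun x => by
    simp only [LinearMap.comp_apply, hg x]
    simp⟩

theorem modInj_congr_right (h : ModInj A M N) (e : N ≃ₗ[A] N') : ModInj A M N' := by
  intro K f
  obtain ⟨g, hg⟩ := h (K.comap (e : N →ₗ[A] N'))
    (f.comp ((e : N →ₗ[A] N').restrict fun x hx => by simpa using hx))
  refine ⟨g.comp (e.symm : N' →ₗ[A] N), fun x => ?_⟩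
  have := hg ⟨e.symm (x : N'), by simpa using x.2⟩
  simp only [LinearMap.comp_apply] at this ⊢
  rw [show ((e.symm : N' →ₗ[A] N) (x : N')) = e.symm (x : N') from rfl, this]
  congr 1
  ext
  simp

/-- every module is `N`-injective for semisimple `N`. -/
theorem modInj_of_semisimple [IsSemisimpleModule A N] : ModInj A M N := by
  intro K f
  obtain ⟨K', hK'⟩ := exists_isCompl K
  refine ⟨f.comp (K.projectionOnto K' hK'), fun x => ?_⟩
  simp [Submodule.projectionOnto_apply_left]

theorem Inj.extend (hM : Inj A M) (i : N →ₗ[A] N') (hi : Function.Injective i)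
    (f : N →ₗ[A] M) : ∃ g : N' →ₗ[A] M, ∀ x, g (i x) = f x := by
  obtain ⟨g, hg⟩ := hM N' (LinearMap.range i)
    (f.comp ((LinearEquiv.ofInjective i hi).symm : LinearMap.range i →ₗ[A] N))
  refine ⟨g, fun x => ?_⟩
  have := hg ⟨i x, LinearMap.mem_range_self i x⟩
  rw [this]
  simp only [LinearMap.comp_apply]
  congr 1
  exact_mod_cast (LinearEquiv.symm_apply_eq _).mpr rfl

theorem Inj.congr (h : Inj A M) (e : M ≃ₗ[A] M') : Inj A M' :=
  fun P _ _ => modInj_congr_left (h P) e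

theorem Inj.prod (hM : Inj A M) (hN : Inj A N) : Inj A (M × N) := by
  intro P _ _ K f
  obtain ⟨g₁, hg₁⟩ := hM P K ((LinearMap.fst A M N).comp f)
  obtain ⟨g₂, hg₂⟩ := hN P K ((LinearMap.snd A M N).comp f)
  exact ⟨g₁.prod g₂, fun x => by
    simp only [LinearMap.prod_apply, Function.prod, hg₁ x, hg₂ x, LinearMap.comp_apply]
    rfl⟩

theorem inj_of_module_injective [h : Module.Injective A M] : Inj A M := by
  intro P _ _ K f
  obtain ⟨g, hg⟩ := h.out K.subtype K.injective_subtype f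
  exact ⟨g, hg⟩

theorem Inj.ofCompl {E : Type u} [AddCommGroup E] [Module A E] (hE : Inj A E)
    {V W : Submodule A E} (h : IsCompl V W) : Inj A ↥V := by
  intro P _ _ K f
  obtain ⟨g, hg⟩ := hE P K (V.subtype.comp f)
  refine ⟨(V.projectionOnto W h).comp g, fun x => ?_⟩
  simp only [LinearMap.comp_apply, hg x, Submodule.coe_subtype,
    Submodule.projectionOnto_apply_left]

end Basic

section Container

open CategoryTheory

variable (A) in
theorem exists_embedding_injective (M : Type u) [AddCommGroup M] [Module A M] :
    ∃ (E : Type u) (_ : AddCommGroup E) (_ : Module A E) (i : M →ₗ[A] E),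
      Function.Injective i ∧ Inj A E := by
  letI : EnoughInjectives (ModuleCat.{u} A) := ModuleCat.enoughInjectives.{u, u} A
  let X : ModuleCat.{u} A := ModuleCat.of A M
  let J : ModuleCat.{u} A := Injective.under X
  have hJ : CategoryTheory.Injective J := Injective.injective_under X
  have hJ' : CategoryTheory.Injective (ModuleCat.of A J.carrier) := by
    exact hJ
  haveI : Module.Injective A J.carrier := Module.injective_module_of_injective_object A J.carrier
  refine ⟨J.carrier, inferInstance, inferInstance, (Injective.ι X).hom, ?_, inj_of_module_injective⟩
  exact (ModuleCat.mono_iff_injective (Injective.ι X)).mp (Injective.ι_mono X)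

end Container

section Essential

variable {E : Type u} [AddCommGroup E] [Module A E]

/-- `X` is an essential submodule of `V` (both submodules of an ambient module). -/
def EssIn (X V : Submodule A E) : Prop :=
  X ≤ V ∧ ∀ e ∈ V, e ≠ 0 → ∃ r : A, r • e ∈ X ∧ r • e ≠ 0

theorem essIn_refl (X : Submodule A E) : EssIn X X :=
  ⟨le_rfl, fun e he hne => ⟨1, by simpa using he, by simpa using hne⟩⟩

theorem EssIn.trans {X V W : Submodule A E} (h₁ : EssIn X V) (h₂ : EssIn V W) : EssIn X W := by
  refine ⟨h₁.1.trans h₂.1, fun e he hne => ?_⟩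
  obtain ⟨r, hrV, hr0⟩ := h₂.2 e he hne
  obtain ⟨s, hsX, hs0⟩ := h₁.2 (r • e) hrV hr0
  exact ⟨s * r, by rwa [mul_smul], by rwa [mul_smul]⟩

end Essential

section Hull

/-- Existence of injective hulls: an injective module with an essential copy of `M`. -/
theorem exists_injective_hull (M : Type u) [AddCommGroup M] [Module A M] :
    ∃ (E : Type u) (_ : AddCommGroup E) (_ : Module A E) (i : M →ₗ[A] E),
      Function.Injective i ∧ Inj A E ∧
        (∀ e : E, e ≠ 0 → ∃ r : A, r • e ∈ LinearMap.range i ∧ r • e ≠ 0) := by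
  classical
  obtain ⟨E₀, _, _, i₀, hi₀, hE₀⟩ := exists_embedding_injective A M
  set M' : Submodule A E₀ := LinearMap.range i₀ with hM'
  -- maximal essential extension of M' inside E₀
  have chain1 : ∀ c ⊆ {V : Submodule A E₀ | EssIn M' V}, IsChain (· ≤ ·) c →
      ∀ y ∈ c, ∃ ub ∈ {V : Submodule A E₀ | EssIn M' V}, ∀ z ∈ c, z ≤ ub := by
    intro c hc hchain y hy
    refine ⟨sSup c, ⟨le_trans (hc hy).1 (le_sSup hy), fun e he hne => ?_⟩,
      fun z hz => le_sSup hz⟩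
    obtain ⟨W, hWc, heW⟩ := (Submodule.mem_sSup_of_directed ⟨y, hy⟩ hchain.directedOn).mp he
    exact (hc hWc).2 e heW hne
  obtain ⟨V, -, hV𝓕, hVmax⟩ :=
    zorn_le_nonempty₀ {V : Submodule A E₀ | EssIn M' V} chain1 M' (essIn_refl M')
  -- maximal complement W
  have chain2 : ∀ c ⊆ {W : Submodule A E₀ | V ⊓ W = ⊥}, IsChain (· ≤ ·) c →
      ∀ y ∈ c, ∃ ub ∈ {W : Submodule A E₀ | V ⊓ W = ⊥}, ∀ z ∈ c, z ≤ ub := by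
    intro c hc hchain y hy
    refine ⟨sSup c, ?_, fun z hz => le_sSup hz⟩
    rw [Set.mem_setOf_eq, eq_bot_iff]
    intro e he
    obtain ⟨Z, hZ, heZ⟩ := (Submodule.mem_sSup_of_directed ⟨y, hy⟩ hchain.directedOn).mp he.2
    have : e ∈ V ⊓ Z := ⟨he.1, heZ⟩
    rw [hc hZ] at this
    exact this
  obtain ⟨W, -, hW𝓖, hWmax⟩ :=
    zorn_le_nonempty₀ {W : Submodule A E₀ | V ⊓ W = ⊥} chain2 ⊥ (by simp)
  -- the projection V ⊔ W → V, extended to h : E₀ → E₀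
  have hdisj : V ⊓ W = ⊥ := hW𝓖
  set p' : Submodule A ↥(V ⊔ W) := V.comap (V ⊔ W).subtype with hp'
  set q' : Submodule A ↥(V ⊔ W) := W.comap (V ⊔ W).subtype with hq'
  have hcompl : IsCompl p' q' := by
    constructor
    · rw [disjoint_iff, eq_bot_iff]
      intro x hx
      have : (x : E₀) ∈ V ⊓ W := ⟨hx.1, hx.2⟩
      rw [hdisj] at this
      simpa using this
    · rw [codisjoint_iff, eq_top_iff]
      rintro ⟨x, hx⟩ -
      obtain ⟨v, hv, w, hw, rfl⟩ := Submodule.mem_sup.mp hx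
      have hv' : (⟨v, Submodule.mem_sup_left hv⟩ : ↥(V ⊔ W)) ∈ p' := hv
      have hw' : (⟨w, Submodule.mem_sup_right hw⟩ : ↥(V ⊔ W)) ∈ q' := hw
      have : (⟨v + w, hx⟩ : ↥(V ⊔ W)) =
          ⟨v, Submodule.mem_sup_left hv⟩ + ⟨w, Submodule.mem_sup_right hw⟩ := by
        ext; rfl
      rw [this]
      exact Submodule.add_mem_sup hv' hw'
  set π₀ := p'.projectionOnto q' hcompl with hπ₀
  set toV : ↥p' →ₗ[A] E₀ := (V ⊔ W).subtype.comp p'.subtype with htoV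
  set f₀ : ↥(V ⊔ W) →ₗ[A] E₀ := toV.comp π₀ with hf₀
  obtain ⟨h, hh⟩ := hE₀.extend (V ⊔ W).subtype (Submodule.injective_subtype _) f₀
  have hhV : ∀ v ∈ V, h v = v := by
    intro v hv
    have hx : (⟨v, Submodule.mem_sup_left hv⟩ : ↥(V ⊔ W)) ∈ p' := hv
    have hv2 : h v = f₀ ⟨v, Submodule.mem_sup_left hv⟩ := hh ⟨v, Submodule.mem_sup_left hv⟩
    rw [hv2, hf₀]
    simp only [LinearMap.comp_apply, hπ₀]
    rw [Submodule.projectionOnto_apply_left hcompl ⟨_, hx⟩]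
    rfl
  have hhW : ∀ w ∈ W, h w = 0 := by
    intro w hw
    have hx : (⟨w, Submodule.mem_sup_right hw⟩ : ↥(V ⊔ W)) ∈ q' := hw
    have hw2 : h w = f₀ ⟨w, Submodule.mem_sup_right hw⟩ := hh ⟨w, Submodule.mem_sup_right hw⟩
    rw [hw2, hf₀]
    simp only [LinearMap.comp_apply, hπ₀]
    rw [Submodule.projectionOnto_apply_of_mem_right hcompl hx]
    simp
  -- ker h = W
  have hker : LinearMap.ker h = W := by
    have h1 : W ≤ LinearMap.ker h := fun w hw => by
      simpa [LinearMap.mem_ker] using hhW w hw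
    have h2 : V ⊓ LinearMap.ker h = ⊥ := by
      rw [eq_bot_iff]
      intro v hv
      have := hhV v hv.1
      have h0 : h v = 0 := hv.2
      simp [h0] at this
      simp [← this]
    exact le_antisymm (hWmax h2 h1) h1
  -- V is essential in range h
  have hessrange : EssIn V (LinearMap.range h) := by
    refine ⟨fun v hv => ⟨v, hhV v hv⟩, ?_⟩
    rintro - ⟨e, rfl⟩ hne
    by_contra hcon
    push_neg at hcon
    have hW₂ : V ⊓ (W ⊔ Submodule.span A {e}) = ⊥ := by
      rw [eq_bot_iff]
      rintro x ⟨hxV, hxW₂⟩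
      obtain ⟨w, hw, z, hz, hwz⟩ := Submodule.mem_sup.mp hxW₂
      obtain ⟨r, rfl⟩ := Submodule.mem_span_singleton.mp hz
      subst hwz
      have hx : h (w + r • e) = w + r • e := hhV _ hxV
      have h2 : h (w + r • e) = r • h e := by
        rw [map_add, hhW w hw, map_smul, zero_add]
      rw [h2] at hx
      have hxV' : r • h e ∈ V := by rw [hx]; exact hxV
      have h0 : r • h e = 0 := hcon r hxV'
      rw [← hx, h0]
      exact Submodule.zero_mem ⊥
    have hle : W ⊔ Submodule.span A {e} ≤ W := hWmax hW₂ le_sup_left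
    have heW : e ∈ W := hle (Submodule.mem_sup_right (Submodule.mem_span_singleton_self e))
    exact hne (by simpa using hhW e heW)
  -- range h = V by maximality
  have hrange : LinearMap.range h = V := by
    have : EssIn M' (LinearMap.range h) := (hV𝓕 : EssIn M' V).trans hessrange
    exact le_antisymm (hVmax this hessrange.1) hessrange.1
  -- IsCompl V W
  have hVW : IsCompl V W := by
    constructor
    · rw [disjoint_iff]; exact hdisj
    · rw [codisjoint_iff, eq_top_iff]
      rintro e -
      have h1 : h e ∈ V := hrange ▸ ⟨e, rfl⟩
      have h2 : e - h e ∈ W := by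
        rw [← hker, LinearMap.mem_ker, map_sub, sub_eq_zero]
        exact (hhV _ h1).symm
      have he : e = h e + (e - h e) := by abel
      rw [he]
      exact Submodule.add_mem_sup h1 h2
  -- conclude
  have hMV : M' ≤ V := hV𝓕.1
  refine ⟨↥V, inferInstance, inferInstance, LinearMap.codRestrict V i₀ (fun m => hMV ⟨m, rfl⟩),
    ?_, hE₀.ofCompl hVW, ?_⟩
  · intro x y hxy
    apply hi₀
    exact congrArg Subtype.val hxy
  · rintro ⟨v, hv⟩ hne
    have hv0 : v ≠ 0 := by
      intro h0
      apply hne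
      ext
      exact h0
    obtain ⟨r, hrM, hr0⟩ := hV𝓕.2 v hv hv0
    obtain ⟨m, hm⟩ := hrM
    refine ⟨r, ⟨m, ?_⟩, ?_⟩
    · ext
      exact hm
    · intro h0
      apply hr0
      exact congrArg Subtype.val h0

end Hull

section Socle

variable {E : Type u} [AddCommGroup E] [Module A E]

theorem isSimpleModule_of_isSimpleModule_submodule {p : Submodule A E}
    (S : Submodule A ↥p) (hS : IsSimpleModule A ↥S) :
    IsSimpleModule A ↥(S.map p.subtype) := by
  haveI := hS
  exact IsSimpleModule.congr
    (Submodule.equivMapOfInjective p.subtype (Submodule.injective_subtype p) S).symm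

theorem isSimpleModule_top_iff (X : Type u) [AddCommGroup X] [Module A X] [IsSimpleModule A X] :
    IsSimpleModule A ↥(⊤ : Submodule A X) :=
  IsSimpleModule.congr (Submodule.topEquiv)

theorem isSemisimpleModule_of_isSimpleModule (X : Type u) [AddCommGroup X] [Module A X]
    (h : IsSimpleModule A X) : IsSemisimpleModule A X := by
  apply IsSemisimpleModule.of_sSup_simples_eq_top
  rw [eq_top_iff]
  exact le_sSup (by haveI := h; exact isSimpleModule_top_iff X)

/-- The socle: the sum of all simple submodules. -/
def soc (A : Type u) [Ring A] (E : Type u) [AddCommGroup E] [Module A E] : Submodule A E :=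
  sSup {S : Submodule A E | IsSimpleModule A ↥S}

theorem isSemisimple_soc : IsSemisimpleModule A ↥(soc A E) := by
  rw [soc, sSup_eq_iSup]
  exact isSemisimpleModule_biSup_of_isSemisimpleModule_submodule
    (fun S hS => isSemisimpleModule_of_isSimpleModule ↥S hS)

theorem soc_essential
    (hsa : ∀ (X : Type u) [AddCommGroup X] [Module A X],
      (∃ x : X, x ≠ 0) → ∃ S : Submodule A X, IsSimpleModule A S)
    (e : E) (he : e ≠ 0) : ∃ r : A, r • e ∈ soc A E ∧ r • e ≠ 0 := by
  set p := Submodule.span A {e} with hp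
  have hne : ((⟨e, Submodule.mem_span_singleton_self e⟩ : ↥p)) ≠ 0 := by
    intro h0
    exact he (congrArg Subtype.val h0)
  obtain ⟨S, hS⟩ := hsa ↥p ⟨_, hne⟩
  have hS' : IsSimpleModule A ↥(S.map p.subtype) :=
    isSimpleModule_of_isSimpleModule_submodule S hS
  haveI := hS'
  haveI : Nontrivial ↥(S.map p.subtype) := IsSimpleModule.nontrivial A _
  obtain ⟨y, hy⟩ := exists_ne (0 : ↥(S.map p.subtype))
  have hyp : (y : E) ∈ p := Submodule.map_subtype_le p S y.2
  obtain ⟨r, hr⟩ := Submodule.mem_span_singleton.mp hyp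
  refine ⟨r, ?_, ?_⟩
  · rw [hr]
    have hmem : S.map p.subtype ∈ {T : Submodule A E | IsSimpleModule A ↥T} := hS'
    exact le_sSup hmem y.2
  · rw [hr]
    intro h0
    exact hy (by ext; exact h0)

end Socle

section Absorb

/-- If `M` is `N₀`-injective and `M` sits essentially (via `i`) in `E`, then every
homomorphism `N₀ → E` lands inside the copy of `M`. -/
theorem range_le_of_modInj {M E N₀ : Type u} [AddCommGroup M] [Module A M]
    [AddCommGroup E] [Module A E] [AddCommGroup N₀] [Module A N₀]
    (i : M →ₗ[A] E) (hiM : Function.Injective i)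
    (hess : ∀ e : E, e ≠ 0 → ∃ r : A, r • e ∈ LinearMap.range i ∧ r • e ≠ 0)
    (hMN : ModInj A M N₀) (h : N₀ →ₗ[A] E) :
    LinearMap.range h ≤ LinearMap.range i := by
  classical
  set K : Submodule A N₀ := (LinearMap.range i).comap h with hK
  set eM : M ≃ₗ[A] LinearMap.range i := LinearEquiv.ofInjective i hiM with heM
  have hieM : ∀ y : LinearMap.range i, i (eM.symm y) = (y : E) := by
    intro y
    have : eM (eM.symm y) = y := eM.apply_symm_apply y
    calc i (eM.symm y) = ↑(eM (eM.symm y)) := rfl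
    _ = (y : E) := by rw [this]
  set f : ↥K →ₗ[A] M :=
    (eM.symm : LinearMap.range i →ₗ[A] M).comp
      (LinearMap.codRestrict (LinearMap.range i) (h.comp K.subtype) (fun x => x.2)) with hf
  obtain ⟨g, hg⟩ := hMN K f
  have hif : ∀ x : ↥K, i (f x) = h (x : N₀) := by
    intro x
    rw [hf]
    simp only [LinearMap.comp_apply, LinearEquiv.coe_coe]
    rw [hieM]
    rfl
  rintro - ⟨n, rfl⟩
  set uu : E := h n - i (g n) with huu
  by_cases hu : uu = 0
  · have : h n = i (g n) := by
      have := sub_eq_zero.mp hu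
      exact this
    rw [this]
    exact ⟨g n, rfl⟩
  · exfalso
    obtain ⟨r, hrmem, hrne⟩ := hess uu hu
    have hmem2 : h (r • n) ∈ LinearMap.range i := by
      have : h (r • n) = r • uu + i (g (r • n)) := by
        rw [map_smul, huu, smul_sub, map_smul, map_smul]
        abel
      rw [this]
      exact Submodule.add_mem _ hrmem ⟨g (r • n), rfl⟩
    have hK2 : r • n ∈ K := hmem2
    have : g (r • n) = f ⟨r • n, hK2⟩ := hg ⟨r • n, hK2⟩
    apply hrne
    have h3 : i (g (r • n)) = h (r • n) := by
      rw [this, hif ⟨r • n, hK2⟩]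
    have h4 : r • uu = h (r • n) - i (g (r • n)) := by
      simp only [huu, smul_sub, map_smul]
    rw [h4, h3, sub_self]

end Absorb

section Main

theorem ess_prod {F E : Type u} [AddCommGroup F] [Module A F] [AddCommGroup E] [Module A E]
    {X : Submodule A F} {Y : Submodule A E}
    (hX : ∀ a : F, a ≠ 0 → ∃ r : A, r • a ∈ X ∧ r • a ≠ 0)
    (hY : ∀ b : E, b ≠ 0 → ∃ r : A, r • b ∈ Y ∧ r • b ≠ 0) :
    ∀ z : F × E, z ≠ 0 → ∃ r : A, r • z ∈ X.prod Y ∧ r • z ≠ 0 := by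
  rintro ⟨a, b⟩ hz
  by_cases ha : a = 0
  · have hb : b ≠ 0 := by
      intro hb0
      exact hz (by rw [ha, hb0]; rfl)
    obtain ⟨r, hrY, hr0⟩ := hY b hb
    refine ⟨r, ⟨?_, ?_⟩, ?_⟩
    · show r • a ∈ X
      rw [ha, smul_zero]
      exact X.zero_mem
    · exact hrY
    · intro h0
      exact hr0 (congrArg Prod.snd h0)
  · obtain ⟨r, hrX, hr0⟩ := hX a ha
    by_cases hrb : r • b = 0
    · refine ⟨r, ⟨hrX, ?_⟩, ?_⟩
      · show r • b ∈ Y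
        rw [hrb]
        exact Y.zero_mem
      · intro h0
        exact hr0 (congrArg Prod.fst h0)
    · obtain ⟨s, hsY, hs0⟩ := hY (r • b) hrb
      refine ⟨s * r, ⟨?_, ?_⟩, ?_⟩
      · show (s * r) • a ∈ X
        rw [mul_smul]
        exact X.smul_mem s hrX
      · show (s * r) • b ∈ Y
        rw [mul_smul]
        exact hsY
      · intro h0
        apply hs0
        have := congrArg Prod.snd h0
        rw [← mul_smul]
        exact this

/-- The key claim: over a right semiartinian ring satisfying the hypothesis that every
non-semisimple quasi-injective module is injective, any module which is `N`-injective
relative to some non-semisimple `N` is injective. -/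
theorem key_claim
    (hsa : ∀ (X : Type u) [AddCommGroup X] [Module A X],
      (∃ x : X, x ≠ 0) → ∃ S : Submodule A X, IsSimpleModule A S)
    (hH : ∀ (Q : Type u) [AddCommGroup Q] [Module A Q],
      ModInj A Q Q → ¬ IsSemisimpleModule A Q → Inj A Q)
    {M N : Type u} [AddCommGroup M] [Module A M] [AddCommGroup N] [Module A N]
    (hMN : ModInj A M N) (hNss : ¬ IsSemisimpleModule A N) : Inj A M := by
  classical
  obtain ⟨E, _, _, i, hi, hEinj, hEess⟩ := exists_injective_hull (A := A) M
  obtain ⟨F, _, _, j, hj, hFinj, hFess⟩ := exists_injective_hull (A := A) N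
  set G := F × E with hG
  have hGinj : Inj A G := hFinj.prod hEinj
  set Z : Submodule A G := (LinearMap.range j).prod (soc A E) with hZ
  set Q : Submodule A G := ⨆ (φ : G →ₗ[A] G), Z.map φ with hQ
  have hZQ : Z ≤ Q := by
    have : Z.map (LinearMap.id : G →ₗ[A] G) ≤ Q := le_iSup (fun φ => Z.map φ) LinearMap.id
    rwa [Submodule.map_id] at this
  have hfi : ∀ ψ : G →ₗ[A] G, Q.map ψ ≤ Q := by
    intro ψ
    rw [hQ, Submodule.map_iSup]
    apply iSup_le
    intro φ
    rw [← Submodule.map_comp]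
    exact le_iSup (fun φ => Z.map φ) (ψ ∘ₗ φ)
  -- Z is essential in G, hence so is Q
  have hZess : ∀ z : G, z ≠ 0 → ∃ r : A, r • z ∈ Z ∧ r • z ≠ 0 := by
    apply ess_prod
    · intro a ha
      exact hFess a ha
    · intro b hb
      exact soc_essential hsa b hb
  have hQess : ∀ z : G, z ≠ 0 → ∃ r : A, r • z ∈ Q ∧ r • z ≠ 0 := by
    intro z hz
    obtain ⟨r, hr1, hr2⟩ := hZess z hz
    exact ⟨r, hZQ hr1, hr2⟩
  -- Q is quasi-injective
  have hQQ : ModInj A ↥Q ↥Q := by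
    intro K f
    have hinj : Function.Injective (Q.subtype.comp K.subtype) :=
      (Submodule.injective_subtype Q).comp (Submodule.injective_subtype K)
    obtain ⟨φ', hφ'⟩ := hGinj.extend (N := ↥K) (Q.subtype.comp K.subtype) hinj (Q.subtype.comp f)
    have hmap : ∀ q : ↥Q, φ' (q : G) ∈ Q := by
      intro q
      exact hfi φ' ⟨(q : G), q.2, rfl⟩
    refine ⟨LinearMap.codRestrict Q (φ'.comp Q.subtype) hmap, fun x => ?_⟩
    apply Subtype.val_injective
    show φ' ((x : ↥Q) : G) = ((f x : ↥Q) : G)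
    exact hφ' x
  -- Q is not semisimple
  have hQn : ¬ IsSemisimpleModule A ↥Q := by
    intro hss
    apply hNss
    have hmem : ∀ n : N, ((LinearMap.inl A F E).comp j) n ∈ Q := by
      intro n
      apply hZQ
      constructor
      · exact ⟨n, rfl⟩
      · show (0 : E) ∈ soc A E
        exact Submodule.zero_mem _
    set ι : N →ₗ[A] ↥Q := LinearMap.codRestrict Q ((LinearMap.inl A F E).comp j) hmem with hι
    have hιinj : Function.Injective ι := by
      intro x y hxy
      have h1 : ((LinearMap.inl A F E).comp j) x = ((LinearMap.inl A F E).comp j) y :=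
        congrArg Subtype.val hxy
      have h2 : (j x, (0:E)) = (j y, (0:E)) := by
        simpa using h1
      exact hj (congrArg Prod.fst h2)
    haveI := hss
    exact { toComplementedLattice := ((Submodule.orderIsoMapComap
      (LinearEquiv.ofInjective ι hιinj)).complementedLattice_iff.mpr
        (IsSemisimpleModule.submodule (m := LinearMap.range ι)).toComplementedLattice) }
  -- hence Q is injective, so Q = G
  have hQinj : Inj A ↥Q := hH ↥Q hQQ hQn
  have hQtop : Q = ⊤ := by
    obtain ⟨g, hg⟩ := hQinj G Q (LinearMap.id : ↥Q →ₗ[A] ↥Q)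
    rw [eq_top_iff]
    intro e _
    set uu : G := e - ((g e : ↥Q) : G) with huu
    have hgu : g uu = 0 := by
      rw [huu, map_sub]
      have : g ((g e : ↥Q) : G) = g e := by
        have := hg (g e)
        simpa using this
      rw [this]
      simp
    by_cases hu : uu = 0
    · have : e = ((g e : ↥Q) : G) := by
        have := sub_eq_zero.mp hu
        exact this
      rw [this]
      exact (g e).2
    · exfalso
      obtain ⟨r, hrQ, hr0⟩ := hQess uu hu
      have h1 : g (r • uu) = r • g uu := map_smul g r uu
      have h2 : g (r • uu) = ⟨r • uu, hrQ⟩ := by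
        have := hg ⟨r • uu, hrQ⟩
        simpa using this
      apply hr0
      have : (⟨r • uu, hrQ⟩ : ↥Q) = (0 : ↥Q) := by
        rw [← h2, h1, hgu, smul_zero]
      exact congrArg Subtype.val this
  -- projection of Q to E lands in the copy of M
  have hMN' : ModInj A M ↥(LinearMap.range j) :=
    modInj_congr_right hMN (LinearEquiv.ofInjective j hj)
  haveI hsocss : IsSemisimpleModule A ↥(soc A E) := isSemisimple_soc
  have hMsoc : ModInj A M ↥(soc A E) := modInj_of_semisimple
  have hmapsnd : Submodule.map (LinearMap.snd A F E) Q ≤ LinearMap.range i := by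
    rw [hQ, Submodule.map_iSup]
    apply iSup_le
    intro φ
    rw [← Submodule.map_comp]
    rintro - ⟨z, hz, rfl⟩
    set ψ := (LinearMap.snd A F E).comp φ with hψ
    obtain ⟨hz1, hz2⟩ := hz
    have hzsplit : ((z.1, (0:E)) : G) + (((0:F), z.2) : G) = z := by
      ext <;> simp
    have hsplit : ψ z = ψ (z.1, 0) + ψ (0, z.2) := by
      rw [← map_add, hzsplit]
    set ψ₁ : ↥(LinearMap.range j) →ₗ[A] E :=
      ψ.comp ((LinearMap.inl A F E).comp (LinearMap.range j).subtype) with hψ₁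
    set ψ₂ : ↥(soc A E) →ₗ[A] E :=
      ψ.comp ((LinearMap.inr A F E).comp (soc A E).subtype) with hψ₂
    have hr1 : ψ (z.1, 0) ∈ LinearMap.range i := by
      have : ψ (z.1, 0) = ψ₁ ⟨z.1, hz1⟩ := rfl
      rw [this]
      exact range_le_of_modInj i hi hEess hMN' ψ₁ ⟨⟨z.1, hz1⟩, rfl⟩
    have hr2 : ψ (0, z.2) ∈ LinearMap.range i := by
      have : ψ (0, z.2) = ψ₂ ⟨z.2, hz2⟩ := rfl
      rw [this]
      exact range_le_of_modInj i hi hEess hMsoc ψ₂ ⟨⟨z.2, hz2⟩, rfl⟩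
    rw [hsplit]
    exact Submodule.add_mem _ hr1 hr2
  -- conclude M ≃ E is injective
  have hrange : LinearMap.range i = ⊤ := by
    rw [eq_top_iff]
    intro e _
    have hmem : ((0, e) : G) ∈ Q := by rw [hQtop]; trivial
    exact hmapsnd ⟨(0, e), hmem, rfl⟩
  have hbij : Function.Bijective i := ⟨hi, LinearMap.range_eq_top.mp hrange⟩
  exact hEinj.congr (LinearEquiv.ofBijective i hbij).symm

end Main

end Stmt5

/-- `R` has no right i-middle class: every right `R`-module is injective or its
injectivity domain consists precisely of the semisimple modules. -/
def NoRightIMiddleClass (R : Type u) [Ring R] : Prop :=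
  ∀ (M : Type u) [AddCommGroup M] [Module Rᵐᵒᵖ M],
    (∀ (N : Type u) [AddCommGroup N] [Module Rᵐᵒᵖ N], ModInj Rᵐᵒᵖ M N) ∨
    (∀ (N : Type u) [AddCommGroup N] [Module Rᵐᵒᵖ N],
      ModInj Rᵐᵒᵖ M N ↔ IsSemisimpleModule Rᵐᵒᵖ N)

/-- for a right semiartinian ring (every nonzero right module has nonzero
socle, i.e. contains a simple submodule), `R` has no right i-middle class iff every
non-semisimple quasi-injective right `R`-module is injective. -/
theorem stmt_5 (R : Type u) [Ring R]
    (hsa : ∀ (M : Type u) [AddCommGroup M] [Module Rᵐᵒᵖ M],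
      (∃ x : M, x ≠ 0) → ∃ S : Submodule Rᵐᵒᵖ M, IsSimpleModule Rᵐᵒᵖ S) :
    NoRightIMiddleClass R ↔
      ∀ (M : Type u) [AddCommGroup M] [Module Rᵐᵒᵖ M],
        ModInj Rᵐᵒᵖ M M → ¬ IsSemisimpleModule Rᵐᵒᵖ M →
          ∀ (N : Type u) [AddCommGroup N] [Module Rᵐᵒᵖ N], ModInj Rᵐᵒᵖ M N := by
  constructor
  · intro hnomid M _ _ hQQ hnss N _ _
    rcases hnomid M with h | h
    · exact h N
    · exact absurd ((h M).mp hQQ) hnss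
  · intro hH M _ _
    by_cases hInj : ∀ (N : Type u) [AddCommGroup N] [Module Rᵐᵒᵖ N], ModInj Rᵐᵒᵖ M N
    · left
      exact hInj
    · right
      intro N _ _
      constructor
      · intro hMN
        by_contra hNss
        exact hInj (Stmt5.key_claim hsa hH hMN hNss)
      · intro hss
        haveI := hss
        exact Stmt5.modInj_of_semisimple
end

section
/- Let R be a right artinian ring. Then the following are equivalent: (1) R has no right i-middle class; (2) every quasi-injective right R-module that is not semisimple is injective; (3) every two-sided ideal of R contained in J(R) equals 0 or J(R). -/
universe u

/-- A right ideal of `R` is two-sided. -/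
def IsTwoSidedRI (R : Type u) [Ring R] (I : Ideal Rᵐᵒᵖ) : Prop :=
  ∀ x ∈ I, ∀ r : R, x * MulOpposite.op r ∈ I

section Basic

variable {A M N P : Type u} [Ring A] [AddCommGroup M] [Module A M] [AddCommGroup N] [Module A N]
  [AddCommGroup P] [Module A P]

theorem modInj_of_injective_s6 (h : ModInj A M N) (ι : P →ₗ[A] N) (hι : Function.Injective ι) :
    ModInj A M P := by
  intro K f
  let e := K.equivMapOfInjective ι hι
  obtain ⟨g, hg⟩ := h (K.map ι) (f.comp e.symm.toLinearMap)
  refine ⟨g.comp ι, fun x => ?_⟩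
  have hx : e.symm ⟨ι x, Submodule.mem_map_of_mem x.2⟩ = x := by
    have h2 := Submodule.map_equivMapOfInjective_symm_apply ι hι K
      ⟨ι x, Submodule.mem_map_of_mem x.2⟩
    exact Subtype.ext (hι h2)
  have := hg ⟨ι x, Submodule.mem_map_of_mem x.2⟩
  simp only [LinearMap.comp_apply, LinearEquiv.coe_coe] at this ⊢
  rw [this, hx]

theorem modInj_quotient (h : ModInj A M N) (L : Submodule A N) : ModInj A M (N ⧸ L) := by
  intro K f
  let K' : Submodule A N := K.comap L.mkQ
  let π : K' →ₗ[A] K := (L.mkQ.comp K'.subtype).codRestrict K (fun x => x.2)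
  obtain ⟨g, hg⟩ := h K' (f.comp π)
  have hker : L ≤ LinearMap.ker g := by
    intro x hx
    have hxK : x ∈ K' := by
      simp only [K', Submodule.mem_comap, Submodule.mkQ_apply]
      rw [(Submodule.Quotient.mk_eq_zero L).2 hx]
      exact K.zero_mem
    have := hg ⟨x, hxK⟩
    simp only [LinearMap.mem_ker]
    rw [this]
    have : π ⟨x, hxK⟩ = (0 : K) := by
      apply Subtype.ext
      exact (Submodule.Quotient.mk_eq_zero L).2 hx
    simp only [LinearMap.comp_apply]
    rw [this, map_zero]
  refine ⟨L.liftQ g hker, fun x => ?_⟩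
  obtain ⟨y, hy⟩ := Submodule.Quotient.mk_surjective L (x : N ⧸ L)
  have hyK : y ∈ K' := by
    simp only [K', Submodule.mem_comap, Submodule.mkQ_apply, hy]
    exact x.2
  have h1 : L.liftQ g hker (x : N ⧸ L) = g y := by rw [← hy]; rfl
  have h2 := hg ⟨y, hyK⟩
  have h3 : π ⟨y, hyK⟩ = x := by apply Subtype.ext; exact hy
  simp only [LinearMap.comp_apply] at h2
  rw [h1, h2, h3]

theorem modInj_of_subsingleton [Subsingleton N] : ModInj A M N := by
  intro K f
  refine ⟨0, fun x => ?_⟩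
  have hx : x = 0 := Subtype.ext (Subsingleton.elim _ _)
  rw [hx, map_zero]
  simp


end Basic

section Zorn

variable {A M N P : Type u} [Ring A] [AddCommGroup M] [Module A M] [AddCommGroup N] [Module A N]
  [AddCommGroup P] [Module A P]

theorem modInj_sup {K₁ K₂ : Submodule A N} (h1 : ModInj A M ↥K₁) (h2 : ModInj A M ↥K₂)
    (hsup : K₁ ⊔ K₂ = ⊤) : ModInj A M N := by
  intro K f
  set f₀ : N →ₗ.[A] M := ⟨K, f⟩ with hf₀
  obtain ⟨m, hf₀m, hmax⟩ := zorn_le_nonempty_Ici₀ f₀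
    (fun c _ hc y hy => ⟨LinearPMap.sSup c (hc.directedOn),
      fun z hz => LinearPMap.le_sSup _ hz⟩) f₀ le_rfl
  have key : ∀ (Ki : Submodule A N), ModInj A M ↥Ki → Ki ≤ m.domain := by
    intro Ki hKi
    set P : Submodule A ↥Ki := m.domain.comap Ki.subtype with hP
    let l : ↥P →ₗ[A] ↥m.domain := (Ki.subtype.comp P.subtype).codRestrict _ (fun x => x.2)
    obtain ⟨g₁, hg₁⟩ := hKi P (m.toFun.comp l)
    set p : N →ₗ.[A] M := ⟨Ki, g₁⟩ with hp
    have H : ∀ (x : m.domain) (y : p.domain), (x : N) = y → m x = p y := by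
      intro x y hxy
      have hyP : (y : ↥Ki) ∈ P := by
        simp only [hP, Submodule.mem_comap, Submodule.coe_subtype]
        rw [← hxy]; exact x.2
      have := hg₁ ⟨y, hyP⟩
      simp only [LinearMap.comp_apply] at this
      have hl : l ⟨y, hyP⟩ = x := by
        apply Subtype.ext
        exact hxy.symm
      rw [hl] at this
      exact this.symm
    have hle : m.sup p H ≤ m := hmax (m.left_le_sup p H)
    have : Ki ≤ (m.sup p H).domain := by
      rw [LinearPMap.domain_sup]
      exact le_sup_right
    exact this.trans hle.1
  have htop : m.domain = ⊤ := by
    rw [← top_le_iff, ← hsup]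
    exact sup_le (key K₁ h1) (key K₂ h2)
  refine ⟨m.toFun.comp (LinearEquiv.ofTop m.domain htop).symm.toLinearMap, fun x => ?_⟩
  have hxm : (x : N) ∈ m.domain := htop ▸ Submodule.mem_top
  have h1' : (LinearEquiv.ofTop m.domain htop).symm (x : N) = ⟨(x : N), hxm⟩ := by
    apply (LinearEquiv.ofTop m.domain htop).injective
    rw [LinearEquiv.apply_symm_apply]
    rfl
  have h2' := hf₀m.2 (x := ⟨(x : N), x.2⟩) (y := ⟨(x : N), hxm⟩) rfl
  simp only [LinearMap.comp_apply, LinearEquiv.coe_coe, h1']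
  exact h2'.symm

theorem modInj_prod_s6 (h1 : ModInj A M N) (h2 : ModInj A M P) : ModInj A M (N × P) := by
  refine modInj_sup (K₁ := Submodule.fst A N P) (K₂ := Submodule.snd A N P) ?_ ?_
    (Submodule.fst_sup_snd A N P)
  · exact modInj_of_injective_s6 h1 (Submodule.fstEquiv A N P).toLinearMap
      (Submodule.fstEquiv A N P).injective
  · exact modInj_of_injective_s6 h2 (Submodule.sndEquiv A N P).toLinearMap
      (Submodule.sndEquiv A N P).injective

theorem modInj_of_isSemisimple (hss : IsSemisimpleModule A N) : ModInj A M N := by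
  intro K f
  obtain ⟨K', hK'⟩ := exists_isCompl K
  refine ⟨f ∘ₗ Submodule.projectionOnto K K' hK', fun x => ?_⟩
  simp [Submodule.projectionOnto_apply_left]

theorem modInj_all {A M : Type u} [Ring A] [AddCommGroup M] [Module A M] (h : ModInj A M A)
    (N : Type u) [AddCommGroup N] [Module A N] : ModInj A M N := by
  have hb : Module.Baer A M := fun I g => by
    obtain ⟨g', hg'⟩ := h I g
    exact ⟨g', fun x mem => hg' ⟨x, mem⟩⟩
  have hi := hb.injective
  intro K f
  obtain ⟨g, hg⟩ := hi.out K.subtype K.injective_subtype f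
  exact ⟨g, fun x => hg x⟩

end Zorn

section Jacobson

variable {A : Type u} [Ring A]

theorem mem_jacobsonBot_iff {x : A} :
    x ∈ Ideal.jacobson (⊥ : Ideal A) ↔ ∀ m : Ideal A, m.IsMaximal → x ∈ m := by
  rw [Ideal.jacobson]
  simp only [Submodule.mem_sInf, Set.mem_setOf_eq]
  exact ⟨fun h m hm => h m ⟨bot_le, hm⟩, fun h m hm => h m hm.2⟩

theorem jac_smul_eq_zero_of_simple {T : Type u} [AddCommGroup T] [Module A T]
    (hT : IsSimpleModule A T) {x : A} (hx : x ∈ Ideal.jacobson (⊥ : Ideal A)) (v : T) :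
    x • v = 0 := by
  haveI := hT
  by_cases hv : v = 0
  · rw [hv, smul_zero]
  · have hsur : Function.Surjective (LinearMap.toSpanSingleton A T v) := by
      rw [← LinearMap.range_eq_top, ← LinearMap.span_singleton_eq_range]
      rcases eq_bot_or_eq_top (Submodule.span A {v} : Submodule A T) with h | h
      · exact absurd ((Submodule.span_singleton_eq_bot).1 h) hv
      · exact h
    have hco : IsCoatom (LinearMap.ker (LinearMap.toSpanSingleton A T v)) :=
      LinearMap.isCoatom_ker_of_surjective hsur
    have hmem : x ∈ LinearMap.ker (LinearMap.toSpanSingleton A T v) :=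
      mem_jacobsonBot_iff.1 hx _ (Ideal.isMaximal_def.2 hco)
    simpa [LinearMap.toSpanSingleton_apply] using hmem

theorem jac_mul_mem {x : A} (hx : x ∈ Ideal.jacobson (⊥ : Ideal A)) (r : A) :
    x * r ∈ Ideal.jacobson (⊥ : Ideal A) := by
  rw [mem_jacobsonBot_iff]
  intro m hm
  haveI : IsSimpleModule A (A ⧸ m) := isSimpleModule_iff_isCoatom.mpr (Ideal.isMaximal_def.1 hm)
  have h0 := jac_smul_eq_zero_of_simple (inferInstance : IsSimpleModule A (A ⧸ m)) hx
    (Submodule.Quotient.mk r)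
  rw [← Submodule.Quotient.mk_smul, smul_eq_mul] at h0
  exact (Submodule.Quotient.mk_eq_zero m).1 h0

theorem isSemisimpleModule_of_subsingleton {N : Type u} [AddCommGroup N] [Module A N]
    [Subsingleton N] : IsSemisimpleModule A N := by
  haveI : Subsingleton (Submodule A N) :=
    ⟨fun a b => by
      ext x
      rw [Subsingleton.elim x 0]
      simp [a.zero_mem, b.zero_mem]⟩
  exact { exists_isCompl := fun a => ⟨⊤, by rw [Subsingleton.elim a ⊥]; exact isCompl_bot_top⟩ }

theorem isSemisimpleModule_of_isSimple {N : Type u} [AddCommGroup N] [Module A N]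
    (h : IsSimpleModule A N) : IsSemisimpleModule A N := by
  haveI := h
  exact { exists_isCompl := fun a => ((eq_bot_or_eq_top a).elim (fun h => ⟨⊤, h ▸ isCompl_bot_top⟩)
    (fun h => ⟨⊥, h ▸ isCompl_top_bot⟩)) }

theorem isSemisimpleModule_of_injective {N P : Type u} [AddCommGroup N] [Module A N]
    [AddCommGroup P] [Module A P] (f : N →ₗ[A] P) (hf : Function.Injective f)
    (h : IsSemisimpleModule A P) : IsSemisimpleModule A N := by
  haveI := h
  exact IsSemisimpleModule.congr (LinearEquiv.ofInjective f hf)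

theorem isSemisimpleModule_prod {N P : Type u} [AddCommGroup N] [Module A N]
    [AddCommGroup P] [Module A P] (h1 : IsSemisimpleModule A N) (h2 : IsSemisimpleModule A P) :
    IsSemisimpleModule A (N × P) := by
  haveI := h1; haveI := h2
  have hfst : IsSemisimpleModule A ↥(Submodule.fst A N P) :=
    IsSemisimpleModule.congr (Submodule.fstEquiv A N P)
  have hsnd : IsSemisimpleModule A ↥(Submodule.snd A N P) :=
    IsSemisimpleModule.congr (Submodule.sndEquiv A N P)
  have hs := IsSemisimpleModule.sup hfst hsnd
  rw [Submodule.fst_sup_snd] at hs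
  haveI := hs
  exact IsSemisimpleModule.congr (Submodule.topEquiv (R := A) (M := N × P)).symm

/-- The standard injection `A⧸(P ⊓ Q) ↪ A⧸P × A⧸Q`. -/
noncomputable def quotInfProd {N : Type u} [AddCommGroup N] [Module A N] (P Q : Submodule A N) :
    (N ⧸ (P ⊓ Q)) →ₗ[A] (N ⧸ P) × (N ⧸ Q) :=
  LinearMap.prod
    (Submodule.liftQ (P ⊓ Q) P.mkQ (by rw [Submodule.ker_mkQ]; exact inf_le_left))
    (Submodule.liftQ (P ⊓ Q) Q.mkQ (by rw [Submodule.ker_mkQ]; exact inf_le_right))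

theorem quotInfProd_injective {N : Type u} [AddCommGroup N] [Module A N] (P Q : Submodule A N) :
    Function.Injective (quotInfProd P Q) := by
  rw [← LinearMap.ker_eq_bot]
  apply (Submodule.eq_bot_iff _).2
  intro x hx
  obtain ⟨z, rfl⟩ := Submodule.Quotient.mk_surjective _ x
  simp only [LinearMap.mem_ker, quotInfProd, LinearMap.prod_apply, Function.prod, Prod.mk_eq_zero] at hx
  obtain ⟨h1, h2⟩ := hx
  have hz1 : z ∈ P := by
    rw [← Submodule.Quotient.mk_eq_zero]
    simpa using h1
  have hz2 : z ∈ Q := by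
    rw [← Submodule.Quotient.mk_eq_zero]
    simpa using h2
  rw [Submodule.Quotient.mk_eq_zero]
  exact ⟨hz1, hz2⟩

theorem isSemisimpleModule_quot_finset [IsArtinian A A] (s : Finset (Ideal A))
    (hs : ∀ m ∈ s, IsCoatom m) : IsSemisimpleModule A (A ⧸ s.inf id) := by
  classical
  induction s using Finset.induction_on with
  | empty =>
      rw [Finset.inf_empty]
      haveI : Subsingleton (A ⧸ (⊤ : Ideal A)) :=
        (Submodule.unique_quotient_iff_eq_top.2 rfl).some.instSubsingleton
      exact isSemisimpleModule_of_subsingleton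
  | @insert a s ha IH =>
      rw [Finset.inf_insert]
      have hsimp : IsSemisimpleModule A (A ⧸ (a : Ideal A)) :=
        isSemisimpleModule_of_isSimple (isSimpleModule_iff_isCoatom.mpr
          (hs a (Finset.mem_insert_self a s)))
      have hIH := IH (fun m hm => hs m (Finset.mem_insert_of_mem hm))
      exact isSemisimpleModule_of_injective _ (quotInfProd_injective (id a) (s.inf id))
        (isSemisimpleModule_prod hsimp hIH)

theorem isSemisimpleModule_quot_jacobson [IsArtinian A A] :
    IsSemisimpleModule A (A ⧸ Ideal.jacobson (⊥ : Ideal A)) := by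
  classical
  obtain ⟨B₀, hB₀, hmin⟩ := IsArtinian.set_has_minimal
    {B : Ideal A | ∃ s : Finset (Ideal A), (∀ m ∈ s, IsCoatom m) ∧ B = s.inf id}
    ⟨⊤, ∅, by simp, by simp⟩
  obtain ⟨s₀, hs₀, rfl⟩ := hB₀
  have hle : ∀ m : Ideal A, m.IsMaximal → s₀.inf id ≤ m := by
    intro m hm
    by_contra hla
    have h1 : (insert m s₀).inf id < s₀.inf id := by
      rw [Finset.inf_insert]
      refine lt_of_le_of_ne inf_le_right (fun he => hla ?_)
      rw [← he]
      exact inf_le_left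
    exact hmin _ ⟨insert m s₀, fun x hx => by
      rcases Finset.mem_insert.1 hx with h | h
      · exact h ▸ Ideal.isMaximal_def.1 hm
      · exact hs₀ x h, rfl⟩ h1
  have heq : s₀.inf id = Ideal.jacobson (⊥ : Ideal A) := by
    refine le_antisymm (le_sInf fun J hJ => hle J hJ.2) (Finset.le_inf fun m hm => sInf_le ?_)
    exact ⟨bot_le, Ideal.isMaximal_def.2 (hs₀ m hm)⟩
  rw [← heq]
  exact isSemisimpleModule_quot_finset s₀ hs₀

theorem isSemisimpleModule_of_jac_smul [IsArtinian A A] {N : Type u} [AddCommGroup N] [Module A N]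
    (h : ∀ x ∈ Ideal.jacobson (⊥ : Ideal A), ∀ v : N, x • v = 0) : IsSemisimpleModule A N := by
  haveI hq := isSemisimpleModule_quot_jacobson (A := A)
  have hker : ∀ v : N, Ideal.jacobson (⊥ : Ideal A) ≤
      LinearMap.ker (LinearMap.toSpanSingleton A N v) := by
    intro v x hx
    simp only [LinearMap.mem_ker, LinearMap.toSpanSingleton_apply]
    exact h x hx v
  set ψ : N → ((A ⧸ Ideal.jacobson (⊥ : Ideal A)) →ₗ[A] N) := fun v =>
    Submodule.liftQ _ (LinearMap.toSpanSingleton A N v) (hker v) with hψ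
  apply isSemisimpleModule_of_isSemisimpleModule_submodule' (p := fun v => LinearMap.range (ψ v))
  · intro v
    exact IsSemisimpleModule.range (ψ v)
  · rw [eq_top_iff]
    intro x _
    apply Submodule.mem_iSup_of_mem x
    exact ⟨Submodule.Quotient.mk 1, by simp only [hψ, Submodule.liftQ_apply, LinearMap.toSpanSingleton_apply, one_smul]⟩

theorem jac_smul_eq_zero_of_isSemisimple {N : Type u} [AddCommGroup N] [Module A N]
    (h : IsSemisimpleModule A N) {x : A} (hx : x ∈ Ideal.jacobson (⊥ : Ideal A)) (v : N) :
    x • v = 0 := by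
  haveI := h
  have hv : v ∈ (⊤ : Submodule A N) := trivial
  rw [← IsSemisimpleModule.sSup_simples_eq_top A N, sSup_eq_iSup'] at hv
  refine Submodule.iSup_induction (motive := fun w => x • w = 0) _ hv ?_ (smul_zero x) ?_
  · rintro ⟨p, hp⟩ w hw
    have := jac_smul_eq_zero_of_simple (T := ↥p) hp hx ⟨w, hw⟩
    have hcoe := congrArg (Subtype.val) this
    simpa using hcoe
  · intro w₁ w₂ hw₁ hw₂
    rw [smul_add, hw₁, hw₂, add_zero]

end Jacobson

section Nakayama

variable {A : Type u} [Ring A]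

/-- Right multiplication as an endomorphism of `A` as a left module over itself. -/
def mulRightLin (u : A) : A →ₗ[A] A where
  toFun x := x * u
  map_add' x y := add_mul x y u
  map_smul' a x := by simp [smul_eq_mul, mul_assoc]

@[simp] theorem mulRightLin_apply (u x : A) : mulRightLin u x = x * u := rfl

/-- The span of all products of elements of `K` and `L`. -/
def setProd (K L : Submodule A A) : Submodule A A :=
  Submodule.span A {x | ∃ a ∈ K, ∃ b ∈ L, x = a * b}

theorem setProd_le_right (K L : Submodule A A) : setProd K L ≤ L := by
  rw [setProd, Submodule.span_le]
  rintro x ⟨a, _, b, hb, rfl⟩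
  exact L.smul_mem a hb

theorem mul_mem_setProd {K L : Submodule A A} {a b : A} (ha : a ∈ K) (hb : b ∈ L) :
    a * b ∈ setProd K L :=
  Submodule.subset_span ⟨a, ha, b, hb, rfl⟩

theorem exists_left_inv {b : A} (hb : b ∈ Ideal.jacobson (⊥ : Ideal A)) :
    ∃ u : A, u * (1 - b) = 1 := by
  have hsp : Submodule.span A {1 - b} = ⊤ := by
    by_contra hne
    obtain ⟨m, hm, hle⟩ := Ideal.exists_le_maximal _ hne
    have h1 : (1 : A) - b ∈ m := hle (Submodule.mem_span_singleton_self _)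
    have h2 : b ∈ m := mem_jacobsonBot_iff.1 hb m hm
    have h3 : (1 : A) ∈ m := by simpa using m.add_mem h1 h2
    exact hm.ne_top ((Ideal.eq_top_iff_one m).2 h3)
  have h1 : (1 : A) ∈ Submodule.span A ({1 - b} : Set A) := by rw [hsp]; trivial
  rw [Submodule.mem_span_singleton] at h1
  obtain ⟨u, hu⟩ := h1
  exact ⟨u, by simpa [smul_eq_mul] using hu⟩

theorem eq_bot_of_setProd_self [IsArtinian A A] {I : Ideal A}
    (hII : setProd I I = I) (hIJ : I ≤ Ideal.jacobson (⊥ : Ideal A)) : I = ⊥ := by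
  by_contra hne
  obtain ⟨T₀, hT₀S, hmin⟩ := IsArtinian.set_has_minimal
      {T : Submodule A A | ∃ x ∈ T, Submodule.map (mulRightLin x) I ≠ ⊥}
      ⟨⊤, 1, trivial, by
        have h1 : Submodule.map (mulRightLin 1) I = I := by
          ext y
          simp [Submodule.mem_map]
        rw [h1]; exact hne⟩
  obtain ⟨x, hxT, hx⟩ := hT₀S
  set T' := Submodule.map (mulRightLin x) I with hT'
  have hT'le : T' ≤ T₀ := by
    rintro y ⟨b, hb, rfl⟩
    simpa using T₀.smul_mem b hxT
  have hT'S : T' ∈ {T : Submodule A A | ∃ y ∈ T, Submodule.map (mulRightLin y) I ≠ ⊥} := by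
    by_contra hT'bad
    simp only [Set.mem_setOf_eq, not_exists, not_and, not_not] at hT'bad
    apply hx
    have hz : ∀ z ∈ I, z * x = 0 := by
      intro z hz
      rw [← hII, setProd] at hz
      refine Submodule.span_induction (p := fun w _ => w * x = 0) ?_ (by show (0:A) * x = 0; rw [zero_mul]) ?_ ?_ hz
      · rintro w ⟨a, haI, b, hbI, rfl⟩
        have hbx : b * x ∈ T' := ⟨b, hbI, rfl⟩
        have hzero : Submodule.map (mulRightLin (b * x)) I = ⊥ := hT'bad _ hbx
        have : a * (b * x) ∈ Submodule.map (mulRightLin (b * x)) I := ⟨a, haI, rfl⟩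
        rw [hzero] at this
        rw [mul_assoc]
        simpa using this
      · intro w₁ w₂ _ _ h₁ h₂
        rw [add_mul, h₁, h₂, add_zero]
      · intro a w _ h₁
        rw [smul_eq_mul, mul_assoc, h₁, mul_zero]
    apply (Submodule.eq_bot_iff _).2
    rintro y ⟨b, hb, rfl⟩
    simpa using hz b hb
  have hEq : T' = T₀ := by
    by_contra hne'
    exact hmin T' hT'S (lt_of_le_of_ne hT'le hne')
  obtain ⟨b, hb, hbx⟩ : ∃ b ∈ I, b * x = x := by
    have hxm : x ∈ T' := hEq ▸ hxT
    obtain ⟨b, hb, h⟩ := hxm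
    exact ⟨b, hb, h⟩
  obtain ⟨u, hu⟩ := exists_left_inv (hIJ hb)
  have hx0 : x = 0 := by
    have h1 : (1 - b) * x = 0 := by rw [sub_mul, one_mul, hbx, sub_self]
    calc x = 1 * x := (one_mul x).symm
    _ = (u * (1 - b)) * x := by rw [hu]
    _ = u * ((1 - b) * x) := mul_assoc _ _ _
    _ = 0 := by rw [h1, mul_zero]
  apply hx
  apply (Submodule.eq_bot_iff _).2
  rintro y ⟨b', _, rfl⟩
  simp [hx0]

end Nakayama

section MainPoor

variable {A : Type u} [Ring A]

theorem poor_or_inj [IsArtinian A A]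
    (hid : ∀ I : Ideal A, (∀ x ∈ I, ∀ r : A, x * r ∈ I) → I ≤ Ideal.jacobson (⊥ : Ideal A) →
      I = ⊥ ∨ I = Ideal.jacobson (⊥ : Ideal A))
    (M : Type u) [AddCommGroup M] [Module A M] :
    (∀ (N : Type u) [AddCommGroup N] [Module A N], ModInj A M N) ∨
    (∀ (N : Type u) [AddCommGroup N] [Module A N], ModInj A M N ↔ IsSemisimpleModule A N) := by
  by_cases hA : ModInj A M A
  · exact Or.inl (fun N _ _ => modInj_all hA N)
  right
  intro N _ _
  refine ⟨fun hMN => ?_, fun hss => modInj_of_isSemisimple hss⟩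
  by_contra hss
  have hxj : ∃ (x : N) (j : A), j ∈ Ideal.jacobson (⊥ : Ideal A) ∧ j • x ≠ 0 := by
    by_contra hcon
    push_neg at hcon
    exact hss (isSemisimpleModule_of_jac_smul (fun j hj v => hcon v j hj))
  obtain ⟨x, j, hjJ, hjx⟩ := hxj
  set φ := LinearMap.toSpanSingleton A N x with hφ
  set Aid := LinearMap.ker φ with hAid
  have hquot : ModInj A M (A ⧸ Aid) := by
    have h1 : ModInj A M ↥(LinearMap.range φ) :=
      modInj_of_injective_s6 hMN (LinearMap.range φ).subtype (Submodule.injective_subtype _)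
    exact modInj_of_injective_s6 h1 (LinearMap.quotKerEquivRange φ).toLinearMap
      (LinearMap.quotKerEquivRange φ).injective
  have hJA : ¬ Ideal.jacobson (⊥ : Ideal A) ≤ Aid := by
    intro hle
    apply hjx
    have h2 := hle hjJ
    simpa [hAid, hφ, LinearMap.toSpanSingleton_apply] using h2
  classical
  set Bf : A → Submodule A A := fun u => Submodule.comap (mulRightLin u) Aid with hBf
  obtain ⟨B₀, hB₀, hmin⟩ := IsArtinian.set_has_minimal
    {B : Submodule A A | ∃ s : Finset A, B = s.inf Bf} ⟨⊤, ∅, by simp⟩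
  obtain ⟨s₀, rfl⟩ := hB₀
  have hB₀le : ∀ u : A, s₀.inf Bf ≤ Bf u := by
    intro u
    by_contra hla
    refine hmin _ ⟨insert u s₀, rfl⟩ ?_
    rw [Finset.inf_insert]
    refine lt_of_le_of_ne inf_le_right (fun he => hla ?_)
    rw [← he]
    exact inf_le_left
  have hquotB : ∀ s : Finset A, ModInj A M (A ⧸ s.inf Bf) := by
    intro s
    induction s using Finset.induction_on with
    | empty =>
        rw [Finset.inf_empty]
        haveI : Subsingleton (A ⧸ (⊤ : Ideal A)) :=
          (Submodule.unique_quotient_iff_eq_top.2 rfl).some.instSubsingleton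
        exact modInj_of_subsingleton
    | @insert u s hu IH =>
        rw [Finset.inf_insert]
        have h1 : ModInj A M (A ⧸ Bf u) := by
          have hmap : Function.Injective (Submodule.mapQ (Bf u) Aid (mulRightLin u) le_rfl) := by
            rw [← LinearMap.ker_eq_bot]
            apply (Submodule.eq_bot_iff _).2
            intro y hy
            obtain ⟨z, rfl⟩ := Submodule.Quotient.mk_surjective _ y
            rw [LinearMap.mem_ker, Submodule.mapQ_apply, Submodule.Quotient.mk_eq_zero] at hy
            rw [Submodule.Quotient.mk_eq_zero]
            exact hy
          exact modInj_of_injective_s6 hquot _ hmap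
        exact modInj_of_injective_s6 (modInj_prod_s6 h1 IH) (quotInfProd (Bf u) (s.inf Bf))
          (quotInfProd_injective _ _)
  have hquotB₀ : ModInj A M (A ⧸ s₀.inf Bf) := hquotB s₀
  set B := s₀.inf Bf with hB
  have hBeq : B = ⨅ u : A, Bf u :=
    le_antisymm (le_iInf hB₀le) (Finset.le_inf fun u _ => iInf_le Bf u)
  have hBts : ∀ y ∈ B, ∀ r : A, y * r ∈ B := by
    intro y hyB r
    rw [hBeq, Submodule.mem_iInf] at hyB ⊢
    intro u
    have h2 := hyB (r * u)
    simp only [hBf, Submodule.mem_comap, mulRightLin_apply] at h2 ⊢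
    rw [mul_assoc]
    exact h2
  have hBf1 : Bf 1 = Aid := by
    ext y
    simp [hBf]
  have hbot : B ⊓ Ideal.jacobson (⊥ : Ideal A) = ⊥ := by
    rcases hid (B ⊓ Ideal.jacobson (⊥ : Ideal A))
      (fun y hy r => ⟨hBts y hy.1 r, jac_mul_mem hy.2 r⟩) inf_le_right with h | h
    · exact h
    · exfalso
      apply hJA
      have hJB : Ideal.jacobson (⊥ : Ideal A) ≤ B := by
        rw [← h]
        exact inf_le_left
      calc Ideal.jacobson (⊥ : Ideal A) ≤ B := hJB
      _ ≤ Bf 1 := hB₀le 1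
      _ = Aid := hBf1
  haveI hssQ := isSemisimpleModule_quot_jacobson (A := A)
  have hBss : IsSemisimpleModule A ↥B := by
    refine isSemisimpleModule_of_injective
      (((Ideal.jacobson (⊥ : Ideal A)).mkQ).comp B.subtype) ?_ inferInstance
    rintro ⟨y, hy⟩ ⟨z, hz⟩ hyz
    simp only [LinearMap.comp_apply, Submodule.coe_subtype, Submodule.mkQ_apply] at hyz
    have hsub : y - z ∈ Ideal.jacobson (⊥ : Ideal A) := (Submodule.Quotient.eq _).1 hyz
    have hsubB : y - z ∈ B := B.sub_mem hy hz
    have h0 : y - z ∈ (⊥ : Ideal A) := hbot ▸ (Submodule.mem_inf.2 ⟨hsubB, hsub⟩)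
    exact Subtype.ext (sub_eq_zero.1 h0)
  obtain ⟨Cb, hCb⟩ := exists_isCompl (B.map (Ideal.jacobson (⊥ : Ideal A)).mkQ)
  set C : Ideal A := Cb.comap (Ideal.jacobson (⊥ : Ideal A)).mkQ with hC
  have hBC : IsCompl B C := by
    constructor
    · rw [disjoint_iff]
      apply (Submodule.eq_bot_iff _).2
      rintro y ⟨hyB, hyC⟩
      have h1 : (Ideal.jacobson (⊥ : Ideal A)).mkQ y ∈
          (B.map (Ideal.jacobson (⊥ : Ideal A)).mkQ) ⊓ Cb := ⟨⟨y, hyB, rfl⟩, hyC⟩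
      rw [disjoint_iff.1 hCb.disjoint] at h1
      have hyJ : y ∈ Ideal.jacobson (⊥ : Ideal A) := by
        rwa [Submodule.mem_bot, Submodule.mkQ_apply, Submodule.Quotient.mk_eq_zero] at h1
      have h2 : y ∈ B ⊓ Ideal.jacobson (⊥ : Ideal A) := Submodule.mem_inf.2 ⟨hyB, hyJ⟩
      rw [hbot] at h2
      exact h2
    · rw [codisjoint_iff, eq_top_iff]
      intro z _
      have hz : Submodule.Quotient.mk z ∈ (B.map (Ideal.jacobson (⊥ : Ideal A)).mkQ) ⊔ Cb := by
        rw [codisjoint_iff.1 hCb.codisjoint]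
        trivial
      obtain ⟨β, hβ, γ, hγ, hsum⟩ := Submodule.mem_sup.1 hz
      obtain ⟨b, hbB, rfl⟩ := hβ
      have hzb : z - b ∈ C := by
        simp only [hC, Submodule.mem_comap, Submodule.mkQ_apply, Submodule.Quotient.mk_sub]
        have : γ = Submodule.Quotient.mk z - Submodule.Quotient.mk b := by
          rw [← hsum]
          simp [Submodule.mkQ_apply]
        rw [← this]  -- goal mk z - mk b ∈ Cb
        exact hγ
      have hzdecomp : z = b + (z - b) := by abel
      rw [hzdecomp]
      exact Submodule.add_mem_sup hbB hzb
  have hCquot : ModInj A M ↥C := by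
    have e := Submodule.quotientEquivOfIsCompl B C hBC
    exact modInj_of_injective_s6 hquotB₀ e.symm.toLinearMap e.symm.injective
  exact hA (modInj_sup (modInj_of_isSemisimple hBss) hCquot (codisjoint_iff.1 hBC.codisjoint))

end MainPoor

section Construction

open CategoryTheory

variable {A : Type u} [Ring A]

/-- The quotient-ring module structure on an `A`-module on which the congruence acts trivially. -/
noncomputable def quotModule (c : RingCon A) (W : Type u) [AddCommGroup W] [Module A W]
    (h : ∀ a b : A, c a b → ∀ w : W, a • w = b • w) : Module c.Quotient W :=
  letI : SMul c.Quotient W :=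
    ⟨fun s w => Quotient.liftOn' s (· • w) (fun a b hab => h a b hab w)⟩
  Function.Surjective.moduleLeft c.mk'
    (fun s => Quotient.inductionOn' s (fun a => ⟨a, rfl⟩))
    (fun _ _ => rfl)

variable (I : Ideal A) (hts : ∀ x ∈ I, ∀ r : A, x * r ∈ I)

/-- The ring congruence attached to a two-sided ideal. -/
def idealCon : RingCon A :=
  (TwoSidedIdeal.mk' (I : Set A) I.zero_mem (fun hx hy => I.add_mem hx hy)
    (fun hx => I.neg_mem hx) (fun {x y} hy => I.smul_mem x hy)
    (fun {x y} hx => hts x hx y)).ringCon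

theorem idealCon_rel_iff (a b : A) : idealCon I hts a b ↔ a - b ∈ I := Iff.rfl

theorem idealCon_mk'_surjective : Function.Surjective (idealCon I hts).mk' :=
  fun s => Quotient.inductionOn' s (fun a => ⟨a, rfl⟩)

theorem idealCon_mk'_eq_iff (a b : A) :
    (idealCon I hts).mk' a = (idealCon I hts).mk' b ↔ a - b ∈ I :=
  Quotient.eq''

theorem idealCon_mk'_eq_zero_iff (a : A) : (idealCon I hts).mk' a = 0 ↔ a ∈ I := by
  have h0 : (0 : (idealCon I hts).Quotient) = (idealCon I hts).mk' 0 := (map_zero _).symm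
  rw [h0, idealCon_mk'_eq_iff]
  simp

/-- The module `I/I²`. -/
def quotW : Type u := (↥I) ⧸ (Submodule.comap I.subtype (setProd I I))

instance : AddCommGroup (quotW I) :=
  inferInstanceAs (AddCommGroup ((↥I) ⧸ (Submodule.comap I.subtype (setProd I I))))

instance : Module A (quotW I) :=
  inferInstanceAs (Module A ((↥I) ⧸ (Submodule.comap I.subtype (setProd I I))))

theorem quotW_kill (a : A) (ha : a ∈ I) (w : quotW I) : a • w = 0 := by
  obtain ⟨⟨b, hb⟩, rfl⟩ := Submodule.Quotient.mk_surjective _ w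
  show (a • (Submodule.Quotient.mk ⟨b, hb⟩ : (↥I) ⧸ (Submodule.comap I.subtype (setProd I I)))) =
    (0 : (↥I) ⧸ (Submodule.comap I.subtype (setProd I I)))
  rw [← Submodule.Quotient.mk_smul, Submodule.Quotient.mk_eq_zero]
  simp only [Submodule.mem_comap]
  show ((a • (⟨b, hb⟩ : ↥I)) : ↥I).1 ∈ setProd I I
  simp only [SetLike.val_smul, smul_eq_mul]
  exact mul_mem_setProd ha hb

/-- The `S = A/I`-module structure on `I/I²`. -/
noncomputable instance : Module (idealCon I hts).Quotient (quotW I) :=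
  quotModule (idealCon I hts) (quotW I) (by
    intro a b hab w
    have h1 : (a - b) • w = 0 := quotW_kill I _ ((idealCon_rel_iff I hts a b).1 hab) w
    rw [sub_smul] at h1
    exact sub_eq_zero.1 h1)

theorem quotW_smul_def (a : A) (w : quotW I) : (idealCon I hts).mk' a • w = a • w := rfl

/-- The ambient object: an injective module (in the category of `A/I`-modules)
containing `A/I ⊕ I/I²`. -/
noncomputable def bigXobj : ModuleCat (idealCon I hts).Quotient :=
  CategoryTheory.Injective.under (ModuleCat.of (idealCon I hts).Quotient
    ((idealCon I hts).Quotient × quotW I))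

/-- The underlying type. -/
noncomputable def bigX : Type u := (bigXobj I hts).carrier

noncomputable instance : AddCommGroup (bigX I hts) := (bigXobj I hts).isAddCommGroup

noncomputable instance : Module (idealCon I hts).Quotient (bigX I hts) := (bigXobj I hts).isModule

set_option synthInstance.maxHeartbeats 1000000 in
noncomputable instance : Injective (bigXobj I hts) :=
  CategoryTheory.Injective.injective_under _

noncomputable instance : Module.Injective (idealCon I hts).Quotient (bigX I hts) :=
  Module.injective_module_of_injective_object _ _
    (inj := inferInstanceAs (Injective (bigXobj I hts)))

/-- The inclusion of `A/I ⊕ I/I²` into `bigX`. -/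
noncomputable def bigXincl :
    ((idealCon I hts).Quotient × quotW I) →ₗ[(idealCon I hts).Quotient] bigX I hts :=
  (CategoryTheory.Injective.ι (ModuleCat.of (idealCon I hts).Quotient
    ((idealCon I hts).Quotient × quotW I))).hom

theorem bigXincl_injective : Function.Injective (bigXincl I hts) :=
  (ModuleCat.mono_iff_injective (CategoryTheory.Injective.ι (ModuleCat.of
    (idealCon I hts).Quotient ((idealCon I hts).Quotient × quotW I)))).1
    (CategoryTheory.Injective.ι_mono _)

end Construction

section Dichotomy

open CategoryTheory

variable {A : Type u} [Ring A]

theorem ideal_dichotomy [IsArtinian A A]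
    (h2 : ∀ (M : Type u) [AddCommGroup M] [Module A M],
        ModInj A M M → ¬ IsSemisimpleModule A M → ModInj A M A)
    (I : Ideal A) (hts : ∀ x ∈ I, ∀ r : A, x * r ∈ I)
    (hIJ : I ≤ Ideal.jacobson (⊥ : Ideal A)) :
    I = ⊥ ∨ I = Ideal.jacobson (⊥ : Ideal A) := by
  by_contra hcon
  push_neg at hcon
  obtain ⟨hI0, hIJne⟩ := hcon
  have hIneII : ¬ I ≤ setProd I I := fun hle =>
    hI0 (eq_bot_of_setProd_self (le_antisymm (setProd_le_right I I) hle) hIJ)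
  obtain ⟨z, hzI, hzII⟩ := SetLike.not_le_iff_exists.1 hIneII
  set π := (idealCon I hts).mk' with hπdef
  letI : Module A (bigX I hts) := Module.compHom (bigX I hts) π
  have hsmulX : ∀ (a : A) (x : bigX I hts), a • x = π a • x := fun _ _ => rfl
  have hqi : ModInj A (bigX I hts) (bigX I hts) := by
    intro K f
    set KS : Submodule (idealCon I hts).Quotient (bigX I hts) :=
      { carrier := K,
        add_mem' := fun h1 h2 => K.add_mem h1 h2,
        zero_mem' := K.zero_mem,
        smul_mem' := by
          intro s x hx
          obtain ⟨a, rfl⟩ := idealCon_mk'_surjective I hts s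
          show π a • x ∈ K
          rw [← hsmulX]
          exact K.smul_mem a hx } with hKS
    set fS : KS →ₗ[(idealCon I hts).Quotient] bigX I hts :=
      { toFun := fun y => f ⟨y.1, y.2⟩,
        map_add' := by
          intro y z
          show f ⟨(y + z).1, (y + z).2⟩ = f ⟨y.1, y.2⟩ + f ⟨z.1, z.2⟩
          have h1 : (⟨(y + z).1, (y + z).2⟩ : ↥K) = ⟨y.1, y.2⟩ + ⟨z.1, z.2⟩ := rfl
          rw [h1, map_add]
        map_smul' := by
          intro s y
          obtain ⟨a, rfl⟩ := idealCon_mk'_surjective I hts s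
          have h1 : (⟨(π a • y).1, (π a • y).2⟩ : ↥K) = a • ⟨y.1, y.2⟩ := by
            apply Subtype.ext
            show π a • (y.1 : bigX I hts) = a • y.1
            rw [hsmulX]
          show f ⟨(π a • y).1, (π a • y).2⟩ = π a • f ⟨y.1, y.2⟩
          rw [h1, map_smul, hsmulX]
        } with hfS
    obtain ⟨h, hh⟩ := (inferInstance :
      Module.Injective (idealCon I hts).Quotient (bigX I hts)).out KS.subtype
      (Submodule.injective_subtype KS) fS
    refine ⟨{ toFun := h, map_add' := h.map_add, map_smul' := fun a x => ?_ }, fun k => ?_⟩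
    · show h (a • x) = a • h x
      rw [hsmulX, h.map_smul, ← hsmulX]
    · exact hh ⟨k.1, k.2⟩
  have hnss : ¬ IsSemisimpleModule A (bigX I hts) := by
    intro hssX
    obtain ⟨jj, hjjJ, hjjI⟩ : ∃ jj ∈ Ideal.jacobson (⊥ : Ideal A), jj ∉ I := by
      have hne : ¬ Ideal.jacobson (⊥ : Ideal A) ≤ I := fun hle => hIJne (le_antisymm hIJ hle)
      exact SetLike.not_le_iff_exists.1 hne
    have h0 := jac_smul_eq_zero_of_isSemisimple hssX hjjJ (bigXincl I hts (1, 0))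
    rw [hsmulX, ← map_smul] at h0
    have h1 : (π jj • ((1 : (idealCon I hts).Quotient), (0 : quotW I))) = (π jj, 0) := by
      have : π jj • ((1 : (idealCon I hts).Quotient), (0 : quotW I)) =
          (π jj • 1, π jj • (0 : quotW I)) := rfl
      rw [this, smul_zero, smul_eq_mul, mul_one]
    rw [h1] at h0
    have h2 : ((π jj), (0 : quotW I)) = ((0 : (idealCon I hts).Quotient), (0 : quotW I)) :=
      bigXincl_injective I hts (by rw [Prod.mk_zero_zero, map_zero]; exact h0)
    have h3 : π jj = 0 := congrArg Prod.fst h2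
    exact hjjI ((idealCon_mk'_eq_zero_iff I hts jj).1 h3)
  have hX : ModInj A (bigX I hts) A := h2 _ hqi hnss
  set mkW : ↥I →ₗ[A] quotW I := (Submodule.comap I.subtype (setProd I I)).mkQ with hmkW
  set φ : ↥I →ₗ[A] bigX I hts :=
    { toFun := fun i => bigXincl I hts (0, mkW i),
      map_add' := by
        intro i j
        show bigXincl I hts (0, mkW (i + j)) =
          bigXincl I hts (0, mkW i) + bigXincl I hts (0, mkW j)
        rw [map_add]
        have hadd : ((0 : (idealCon I hts).Quotient), mkW i + mkW j) =
            ((0, mkW i) + (0, mkW j) : (idealCon I hts).Quotient × quotW I) := by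
          rw [Prod.mk_add_mk, add_zero]
        rw [hadd, map_add]
      map_smul' := by
        intro a i
        show bigXincl I hts (0, mkW (a • i)) = a • bigXincl I hts (0, mkW i)
        rw [hsmulX, ← map_smul]
        congr 1
        rw [map_smul]
        show ((0 : (idealCon I hts).Quotient), a • mkW i) = π a • (0, mkW i)
        have h4 : π a • ((0 : (idealCon I hts).Quotient), mkW i) =
            (π a • 0, π a • mkW i) := rfl
        rw [h4, smul_zero]
        rw [quotW_smul_def I hts a (mkW i)]
      } with hφdef
  obtain ⟨g, hg⟩ := hX I φ
  have hgz := hg ⟨z, hzI⟩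
  have hφz : φ ⟨z, hzI⟩ ≠ 0 := by
    intro h0
    have h1 : ((0 : (idealCon I hts).Quotient), mkW ⟨z, hzI⟩) =
        ((0 : (idealCon I hts).Quotient), (0 : quotW I)) := by
      apply bigXincl_injective I hts
      rw [Prod.mk_zero_zero, map_zero]
      exact h0
    have h2 : mkW ⟨z, hzI⟩ = 0 := congrArg Prod.snd h1
    have h2' : Submodule.Quotient.mk (p := Submodule.comap I.subtype (setProd I I))
        ⟨z, hzI⟩ = 0 := h2
    have h3' := (Submodule.Quotient.mk_eq_zero _).1 h2'
    exact hzII (Submodule.mem_comap.1 h3')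
  apply hφz
  rw [← hgz]
  have h3 : (z : A) = z • (1 : A) := by rw [smul_eq_mul, mul_one]
  calc g z = g (z • 1) := by rw [← h3]
  _ = z • g 1 := g.map_smul z 1
  _ = π z • g 1 := hsmulX z (g 1)
  _ = 0 := by rw [(idealCon_mk'_eq_zero_iff I hts z).2 hzI, zero_smul]

end Dichotomy

section Assembly

variable (R : Type u) [Ring R] [IsArtinianRing Rᵐᵒᵖ]

theorem p12 (h1 : NoRightIMiddleClass R) :
    ∀ (M : Type u) [AddCommGroup M] [Module Rᵐᵒᵖ M],
      ModInj Rᵐᵒᵖ M M → ¬ IsSemisimpleModule Rᵐᵒᵖ M →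
        ∀ (N : Type u) [AddCommGroup N] [Module Rᵐᵒᵖ N], ModInj Rᵐᵒᵖ M N := by
  intro M _ _ hqi hnss N _ _
  rcases h1 M with h | h
  · exact h N
  · exact absurd ((h M).1 hqi) hnss

theorem p23
    (h2 : ∀ (M : Type u) [AddCommGroup M] [Module Rᵐᵒᵖ M],
      ModInj Rᵐᵒᵖ M M → ¬ IsSemisimpleModule Rᵐᵒᵖ M →
        ∀ (N : Type u) [AddCommGroup N] [Module Rᵐᵒᵖ N], ModInj Rᵐᵒᵖ M N) :
    ∀ I : Ideal Rᵐᵒᵖ, IsTwoSidedRI R I → I ≤ (⊥ : Ideal Rᵐᵒᵖ).jacobson →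
      I = ⊥ ∨ I = (⊥ : Ideal Rᵐᵒᵖ).jacobson := by
  intro I htw hIJ
  refine ideal_dichotomy (A := Rᵐᵒᵖ) ?_ I ?_ hIJ
  · intro M _ _ hqi hnss
    exact h2 M hqi hnss Rᵐᵒᵖ
  · intro x hx r
    simpa using htw x hx r.unop

theorem p31
    (h3 : ∀ I : Ideal Rᵐᵒᵖ, IsTwoSidedRI R I → I ≤ (⊥ : Ideal Rᵐᵒᵖ).jacobson →
      I = ⊥ ∨ I = (⊥ : Ideal Rᵐᵒᵖ).jacobson) : NoRightIMiddleClass R := by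
  intro M _ _
  exact poor_or_inj (A := Rᵐᵒᵖ)
    (fun I hts hIJ => h3 I (fun x hx r => hts x hx (MulOpposite.op r)) hIJ) M

end Assembly

/-- for a right artinian ring, TFAE: (1) no right i-middle class;
(2) every non-semisimple quasi-injective right module is injective;
(3) every two-sided ideal contained in `J(R)` is `0` or `J(R)`. -/
theorem stmt_6 (R : Type u) [Ring R] [IsArtinianRing Rᵐᵒᵖ] :
    (NoRightIMiddleClass R ↔
      ∀ (M : Type u) [AddCommGroup M] [Module Rᵐᵒᵖ M],
        ModInj Rᵐᵒᵖ M M → ¬ IsSemisimpleModule Rᵐᵒᵖ M →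
          ∀ (N : Type u) [AddCommGroup N] [Module Rᵐᵒᵖ N], ModInj Rᵐᵒᵖ M N) ∧
    (NoRightIMiddleClass R ↔
      ∀ I : Ideal Rᵐᵒᵖ, IsTwoSidedRI R I → I ≤ (⊥ : Ideal Rᵐᵒᵖ).jacobson →
        I = ⊥ ∨ I = (⊥ : Ideal Rᵐᵒᵖ).jacobson) :=
  ⟨⟨fun h1 => p12 R h1, fun h2 => p31 R (p23 R h2)⟩,
   ⟨fun h1 => p23 R (p12 R h1), fun h3 => p31 R h3⟩⟩
end

section
/- Let R be a ring whose right i-profile is linearly ordered, and let I and J be two-sided ideals of R with I ⊆ J(R) and J ⊆ J(R). Then, as right R-modules, either R/I ∈ σ[R/J] or R/J ∈ σ[R/I]. -/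
universe u

/-- The right i-profile of `R` is linearly ordered: injectivity domains of any two right
`R`-modules are comparable. -/
def IProfileLinear (R : Type u) [Ring R] : Prop :=
  ∀ (M N : Type u) [AddCommGroup M] [Module Rᵐᵒᵖ M] [AddCommGroup N] [Module Rᵐᵒᵖ N],
    (∀ (X : Type u) [AddCommGroup X] [Module Rᵐᵒᵖ X],
      ModInj Rᵐᵒᵖ M X → ModInj Rᵐᵒᵖ N X) ∨
    (∀ (X : Type u) [AddCommGroup X] [Module Rᵐᵒᵖ X],
      ModInj Rᵐᵒᵖ N X → ModInj Rᵐᵒᵖ M X)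

section Aux

open CategoryTheory

variable (S : Type u) [Ring S]

/-- Elements of the quotient by a two-sided ideal are annihilated by the ideal. -/
lemma quot_killed (I : Ideal S) (hI2 : ∀ x ∈ I, ∀ s : S, x * s ∈ I) :
    ∀ j ∈ I, ∀ x : S ⧸ I, j • x = 0 := by
  intro j hj x
  obtain ⟨s, rfl⟩ := Submodule.mkQ_surjective I x
  rw [← map_smul, Submodule.mkQ_apply, Submodule.Quotient.mk_eq_zero]
  exact hI2 j hj s

/-- If `z` is in the Jacobson radical, `1 - z` is left invertible. -/
lemma left_inv_one_sub (z : S) (hz : z ∈ (⊥ : Ideal S).jacobson) :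
    ∃ u : S, u * (1 - z) = 1 := by
  by_cases hspan : Submodule.span S {(1 : S) - z} = ⊤
  · have h1 : (1 : S) ∈ Submodule.span S {(1 : S) - z} := hspan ▸ Submodule.mem_top
    obtain ⟨u, hu⟩ := Submodule.mem_span_singleton.mp h1
    exact ⟨u, by simpa [smul_eq_mul] using hu⟩
  · exfalso
    obtain ⟨m, hm, hym⟩ := Ideal.exists_le_maximal (Submodule.span S {(1 : S) - z}) hspan
    have hzm : z ∈ m := by
      have : (⊥ : Ideal S).jacobson ≤ m := sInf_le ⟨bot_le, hm⟩
      exact this hz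
    have h1m : (1 : S) - z ∈ m := hym (Submodule.mem_span_singleton_self _)
    have : (1 : S) ∈ m := by simpa using add_mem h1m hzm
    exact hm.ne_top ((Ideal.eq_top_iff_one m).mpr this)

/-- Key construction: given two-sided ideals `I`, `J` with `J ⊆ J(S)` and `b ∈ J \ I`,
there is a module `W` which is `X`-injective for every `X` annihilated by `J`, but
which is not `S/I`-injective. -/
lemma key_witness (I J : Ideal S)
    (hI2 : ∀ x ∈ I, ∀ s : S, x * s ∈ I) (hJ2 : ∀ x ∈ J, ∀ s : S, x * s ∈ J)
    (hJjac : J ≤ (⊥ : Ideal S).jacobson) (b : S) (hbJ : b ∈ J) (hbI : b ∉ I) :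
    ∃ (W : Type u) (_ : AddCommGroup W) (_ : Module S W),
      (∀ (X : Type u) [AddCommGroup X] [Module S X],
        (∀ j ∈ J, ∀ x : X, j • x = 0) → ModInj S W X) ∧
      ¬ ModInj S W (S ⧸ I) := by
  classical
  -- the left ideal (I : b)
  let Lb : Ideal S := Submodule.comap (LinearMap.toSpanSingleton S S b) I
  have hLb : ∀ s : S, s ∈ Lb ↔ s * b ∈ I := by
    intro s
    simp [Lb, LinearMap.toSpanSingleton_apply, smul_eq_mul]
  let P : Ideal S := Lb ⊔ J
  -- P is proper
  have h1P : (1 : S) ∉ P := by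
    intro h1
    rcases Submodule.mem_sup.mp h1 with ⟨y, hy, z, hz, hyz⟩
    have hy' : y = 1 - z := by rw [← hyz, add_sub_cancel_right]
    obtain ⟨u, hu⟩ := left_inv_one_sub S z (hJjac hz)
    rw [← hy'] at hu
    have hyb : y * b ∈ I := (hLb y).mp hy
    have : u * (y * b) ∈ I := Ideal.mul_mem_left I u hyb
    rw [← mul_assoc, hu, one_mul] at this
    exact hbI this
  -- an injective module containing S ⧸ P
  let Qc : ModuleCat.{u} S := ModuleCat.of S (S ⧸ P)
  let E : ModuleCat.{u} S := Injective.under Qc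
  let ι : Qc ⟶ E := Injective.ι Qc
  have hιinj : Function.Injective ι := by
    rw [← ModuleCat.mono_iff_injective]
    infer_instance
  -- the submodule of elements of E annihilated by J
  let W : Submodule S E :=
    { carrier := {w : E | ∀ j ∈ J, j • w = 0}
      add_mem' := by
        intro w₁ w₂ h₁ h₂ j hj
        rw [smul_add, h₁ j hj, h₂ j hj, add_zero]
      zero_mem' := by
        intro j hj
        exact smul_zero j
      smul_mem' := by
        intro c w hw j hj
        rw [smul_smul]
        exact hw (j * c) (hJ2 j hj c) }
  -- the distinguished element
  let q₀ : E := ι (Submodule.Quotient.mk (1 : S))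
  have hq₀kill : ∀ p ∈ P, p • q₀ = 0 := by
    intro p hp
    have : p • (Submodule.Quotient.mk (1 : S) : S ⧸ P) = 0 := by
      rw [← Submodule.Quotient.mk_smul, smul_eq_mul, mul_one, Submodule.Quotient.mk_eq_zero]
      exact hp
    show p • ι (Submodule.Quotient.mk (1 : S)) = 0
    rw [← map_smul, this, map_zero]
  have hq₀W : q₀ ∈ W := fun j hj => hq₀kill j (le_sup_right (α := Ideal S) hj)
  have hq₀ne : q₀ ≠ 0 := by
    intro h
    have h1 : (Submodule.Quotient.mk (1 : S) : S ⧸ P) = 0 := by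
      apply hιinj
      rw [map_zero]
      exact h
    rw [Submodule.Quotient.mk_eq_zero] at h1
    exact h1P h1
  refine ⟨W, inferInstance, inferInstance, ?_, ?_⟩
  · -- positivity: W is X-injective for any X killed by J
    intro X _ _ hkill K f
    let f' : ModuleCat.of S K ⟶ E := ModuleCat.ofHom (W.subtype.comp f)
    let inc : ModuleCat.of S K ⟶ ModuleCat.of S X := ModuleCat.ofHom K.subtype
    haveI : Mono inc := (ModuleCat.mono_iff_injective inc).mpr K.injective_subtype
    let g' : ModuleCat.of S X ⟶ E := Injective.factorThru f' inc
    have hfac : ∀ k : K, g' (k : X) = f' k := by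
      intro k
      have := Injective.comp_factorThru f' inc
      exact congrArg (fun h => h.hom k) this
    have hmem : ∀ x : X, g' x ∈ W := by
      intro x j hj
      have : (j : S) • x = 0 := hkill j hj x
      rw [← map_smul, this, map_zero]
    refine ⟨LinearMap.codRestrict W g'.hom hmem, ?_⟩
    intro k
    apply Subtype.ext
    show g' (k : X) = ((f k : W) : E)
    rw [hfac k]
    rfl
  · -- W is not S/I-injective
    intro hMod
    let ψ : S →ₗ[S] S ⧸ I := (Submodule.mkQ I).comp (LinearMap.toSpanSingleton S S b)
    have hψ : ∀ s : S, ψ s = Submodule.Quotient.mk (s * b) := by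
      intro s
      simp [ψ, LinearMap.toSpanSingleton_apply, smul_eq_mul]
    let q₀w : W := ⟨q₀, hq₀W⟩
    let φ : S →ₗ[S] W := LinearMap.toSpanSingleton S W q₀w
    have hker : LinearMap.ker ψ ≤ LinearMap.ker φ := by
      intro s hs
      have hs' : s * b ∈ I := by
        have := hs
        rw [LinearMap.mem_ker, hψ, Submodule.Quotient.mk_eq_zero] at this
        exact this
      have hsP : s ∈ P := le_sup_left (α := Ideal S) ((hLb s).mpr hs')
      rw [LinearMap.mem_ker]
      apply Subtype.ext
      show s • q₀ = 0
      exact hq₀kill s hsP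
    let e := LinearMap.quotKerEquivRange ψ
    let f : LinearMap.range ψ →ₗ[S] W :=
      (Submodule.liftQ (LinearMap.ker ψ) φ hker).comp e.symm.toLinearMap
    obtain ⟨g, hg⟩ := hMod (LinearMap.range ψ) f
    -- the element ψ 1 = mk b of the range
    let x₀ : LinearMap.range ψ := ⟨ψ 1, LinearMap.mem_range_self ψ 1⟩
    have he : e (Submodule.Quotient.mk (1 : S)) = x₀ := by
      apply Subtype.ext
      rw [LinearMap.quotKerEquivRange_apply_mk]
    have hesymm : e.symm x₀ = Submodule.Quotient.mk (1 : S) := by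
      rw [← he, LinearEquiv.symm_apply_apply]
    have hfx₀ : f x₀ = q₀w := by
      show Submodule.liftQ (LinearMap.ker ψ) φ hker (e.symm x₀) = q₀w
      rw [hesymm, Submodule.liftQ_apply]
      show (1 : S) • q₀w = q₀w
      rw [one_smul]
    have hgb : g (Submodule.Quotient.mk b) = q₀w := by
      have hx₀ : (x₀ : S ⧸ I) = Submodule.Quotient.mk b := by
        show ψ 1 = _
        rw [hψ, one_mul]
      have := hg x₀
      rw [hfx₀] at this
      rw [← hx₀]
      exact this
    have hzero : g (Submodule.Quotient.mk b) = 0 := by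
      have hb1 : (Submodule.Quotient.mk b : S ⧸ I) = b • Submodule.Quotient.mk (1 : S) := by
        rw [← Submodule.Quotient.mk_smul, smul_eq_mul, mul_one]
      rw [hb1, map_smul]
      apply Subtype.ext
      show b • ((g (Submodule.Quotient.mk (1 : S)) : W) : E) = 0
      exact (g (Submodule.Quotient.mk (1 : S))).2 b hbJ
    rw [hzero] at hgb
    exact hq₀ne (by simpa [q₀w] using congrArg Subtype.val hgb.symm)

/-- If `J ≤ I` then `S/I ∈ σ[S/J]`. -/
lemma memSigma_of_le (I J : Ideal S) (h : J ≤ I) : MemSigma S (S ⧸ J) (S ⧸ I) := by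
  let eF : ((PUnit : Type u) →₀ (S ⧸ J)) ≃ₗ[S] (S ⧸ J) :=
    Finsupp.LinearEquiv.finsuppUnique S (S ⧸ J) PUnit
  let m : (S ⧸ J) →ₗ[S] (S ⧸ I) :=
    Submodule.mapQ J I LinearMap.id (by simpa using h)
  have hmsurj : Function.Surjective m := by
    intro y
    obtain ⟨x, rfl⟩ := Submodule.mkQ_surjective I y
    exact ⟨Submodule.Quotient.mk x, by simp [m, Submodule.mapQ_apply]⟩
  let e2 : ((S ⧸ J) ⧸ LinearMap.ker m) ≃ₗ[S] (S ⧸ I) :=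
    LinearMap.quotKerEquivOfSurjective m hmsurj
  let L : Submodule S ((PUnit : Type u) →₀ (S ⧸ J)) :=
    Submodule.comap eF.toLinearMap (LinearMap.ker m)
  have hmap : L.map eF.toLinearMap = LinearMap.ker m := by
    ext x
    constructor
    · rintro ⟨y, hy, rfl⟩
      exact hy
    · intro hx
      exact ⟨eF.symm x, by simpa [L, Submodule.mem_comap] using hx, by simp⟩
  let e3 : (((PUnit : Type u) →₀ (S ⧸ J)) ⧸ L) ≃ₗ[S] ((S ⧸ J) ⧸ LinearMap.ker m) :=
    Submodule.Quotient.equiv L (LinearMap.ker m) eF hmap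
  refine ⟨PUnit, L, ⊤, ⟨?_⟩⟩
  exact (e2.symm.trans e3.symm).trans (Submodule.topEquiv).symm

end Aux

/-- if the right i-profile of `R` is linearly ordered and `I, J` are
two-sided ideals contained in `J(R)`, then `R/I ∈ σ[R/J]` or `R/J ∈ σ[R/I]`
(as right `R`-modules). -/
theorem stmt_7 (R : Type u) [Ring R] (hlin : IProfileLinear R)
    (I J : Ideal Rᵐᵒᵖ) (hI2 : IsTwoSidedRI R I) (hJ2 : IsTwoSidedRI R J)
    (hIJac : I ≤ (⊥ : Ideal Rᵐᵒᵖ).jacobson) (hJJac : J ≤ (⊥ : Ideal Rᵐᵒᵖ).jacobson) :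
    MemSigma Rᵐᵒᵖ (Rᵐᵒᵖ ⧸ J) (Rᵐᵒᵖ ⧸ I) ∨ MemSigma Rᵐᵒᵖ (Rᵐᵒᵖ ⧸ I) (Rᵐᵒᵖ ⧸ J) := by
  have hI2' : ∀ x ∈ I, ∀ s : Rᵐᵒᵖ, x * s ∈ I := fun x hx s => by
    simpa using hI2 x hx s.unop
  have hJ2' : ∀ x ∈ J, ∀ s : Rᵐᵒᵖ, x * s ∈ J := fun x hx s => by
    simpa using hJ2 x hx s.unop
  by_cases hJI : J ≤ I
  · exact Or.inl (memSigma_of_le Rᵐᵒᵖ I J hJI)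
  by_cases hIJ : I ≤ J
  · exact Or.inr (memSigma_of_le Rᵐᵒᵖ J I hIJ)
  exfalso
  obtain ⟨b, hbJ, hbI⟩ := SetLike.not_le_iff_exists.mp hJI
  obtain ⟨a, haI, haJ⟩ := SetLike.not_le_iff_exists.mp hIJ
  obtain ⟨W₁, i11, i12, hpos1, hneg1⟩ :=
    key_witness Rᵐᵒᵖ I J hI2' hJ2' hJJac b hbJ hbI
  obtain ⟨W₂, i21, i22, hpos2, hneg2⟩ :=
    key_witness Rᵐᵒᵖ J I hJ2' hI2' hIJac a haI haJ
  rcases hlin W₂ W₁ with h | h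
  · exact hneg1 (h (Rᵐᵒᵖ ⧸ I) (hpos2 (Rᵐᵒᵖ ⧸ I) (quot_killed Rᵐᵒᵖ I hI2')))
  · exact hneg2 (h (Rᵐᵒᵖ ⧸ J) (hpos1 (Rᵐᵒᵖ ⧸ J) (quot_killed Rᵐᵒᵖ J hJ2')))
end

section
/- Let R be a ring with no right i-middle class. Then either the socle functor is a radical, i.e., Soc(M/Soc(M)) = 0 for every right R-module M, or the right R-module R/Soc(R_R) is semisimple (so R is right semiartinian of Loewy length at most 2). -/
universe u

/-- The socle of a module: the sum of all its simple submodules. -/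
def socle (A : Type u) [Ring A] (M : Type u) [AddCommGroup M] [Module A M] :
    Submodule A M :=
  sSup {S : Submodule A M | IsSimpleModule A S}

open Submodule LinearMap

section Aux

variable {A : Type u} [Ring A]
variable {M N P X : Type u} [AddCommGroup M] [Module A M] [AddCommGroup N] [Module A N]
  [AddCommGroup P] [Module A P] [AddCommGroup X] [Module A X]

theorem simple_le_socle {p : Submodule A M} (hp : IsSimpleModule A p) : p ≤ socle A M :=
  le_sSup hp

theorem false_of_simple_le_bot {p : Submodule A M} (hp : IsSimpleModule A p)
    (hbot : p ≤ ⊥) : False := by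
  haveI := hp
  haveI : Nontrivial p := IsSimpleModule.nontrivial A p
  obtain ⟨x, hx⟩ := exists_ne (0 : p)
  exact hx (Subtype.ext (by simpa using hbot x.2))

theorem socle_eq_bot_of_no_simples
    (hn : ∀ p : Submodule A M, ¬ IsSimpleModule A p) : socle A M = ⊥ :=
  sSup_eq_bot.mpr fun p hp => absurd hp (hn p)

theorem socle_isSemisimple : IsSemisimpleModule A (socle A M) := by
  have hs : socle A M = ⨆ p ∈ {S : Submodule A M | IsSimpleModule A S}, p := by
    rw [socle, sSup_eq_iSup]
  rw [hs]
  exact isSemisimpleModule_biSup_of_isSemisimpleModule_submodule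
    (fun p hp => by haveI : IsSimpleModule A p := hp; infer_instance)

theorem simple_map {f : M →ₗ[A] N} (hf : Function.Injective f) {p : Submodule A M}
    (hp : IsSimpleModule A p) : IsSimpleModule A (p.map f) := by
  haveI := hp
  exact IsSimpleModule.congr (p.equivMapOfInjective f hf).symm

theorem semisimple_le_socle {W : Submodule A M} (hW : IsSemisimpleModule A W) :
    W ≤ socle A M := by
  haveI := hW
  have htop : sSup {q : Submodule A W | IsSimpleModule A q} = ⊤ :=
    IsSemisimpleModule.sSup_simples_eq_top A W
  have hW' : W = Submodule.map W.subtype ⊤ := by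
    rw [Submodule.map_top, Submodule.range_subtype]
  rw [hW', ← htop, (Submodule.gc_map_comap W.subtype).l_sSup]
  exact iSup₂_le fun p hp => simple_le_socle (simple_map W.injective_subtype hp)

theorem isSemisimple_of_le {p q : Submodule A M} (hq : IsSemisimpleModule A q)
    (hpq : p ≤ q) : IsSemisimpleModule A p := by
  haveI := hq
  exact IsSemisimpleModule.congr (Submodule.comapSubtypeEquivOfLe hpq).symm

theorem map_le_socle {f : M →ₗ[A] N} (hf : Function.Injective f) {W : Submodule A M}
    (hW : IsSemisimpleModule A W) : W.map f ≤ socle A N := by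
  refine semisimple_le_socle ?_
  haveI := hW
  exact IsSemisimpleModule.congr (W.equivMapOfInjective f hf).symm

theorem socle_submodule_eq_bot (hsoc : socle A N = ⊥) (K : Submodule A N) :
    socle A K = ⊥ := by
  refine socle_eq_bot_of_no_simples fun p hp => ?_
  have hmap : IsSimpleModule A (p.map K.subtype) := simple_map K.injective_subtype hp
  exact (false_of_simple_le_bot hmap (hsoc ▸ simple_le_socle hmap)).elim

theorem extend_from_semisimple {S K : Submodule A M} (hS : IsSemisimpleModule A S)
    (hKS : K ≤ S) (f : K →ₗ[A] P) :
    ∃ φ : S →ₗ[A] P, ∀ (x : M) (hK : x ∈ K), φ ⟨x, hKS hK⟩ = f ⟨x, hK⟩ := by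
  haveI := hS
  set K' : Submodule A S := K.comap S.subtype with hK'def
  obtain ⟨C, hC⟩ := exists_isCompl K'
  let e : K' ≃ₗ[A] K := Submodule.comapSubtypeEquivOfLe hKS
  refine ⟨(f.comp e.toLinearMap).comp (K'.linearProjOfIsCompl C hC), ?_⟩
  intro x hK
  have hmem : (⟨x, hKS hK⟩ : S) ∈ K' := by simpa [hK'def] using hK
  have hproj : (K'.linearProjOfIsCompl C hC) ⟨x, hKS hK⟩ = ⟨⟨x, hKS hK⟩, hmem⟩ :=
    Submodule.linearProjOfIsCompl_apply_left hC ⟨⟨x, hKS hK⟩, hmem⟩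
  rw [LinearMap.comp_apply, hproj, LinearMap.comp_apply]
  congr 1

theorem glue_on_sup {K S : Submodule A X} (hsup : K ⊔ S = ⊤)
    (f : K →ₗ[A] P) (φ : S →ₗ[A] P)
    (hagree : ∀ (x : X) (hK : x ∈ K) (hS : x ∈ S), f ⟨x, hK⟩ = φ ⟨x, hS⟩) :
    ∃ g : X →ₗ[A] P, ∀ x : K, g x = f x := by
  let F : (K × S) →ₗ[A] X := K.subtype.coprod S.subtype
  have hF : Function.Surjective F := by
    rw [← LinearMap.range_eq_top, LinearMap.range_coprod, Submodule.range_subtype,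
      Submodule.range_subtype, hsup]
  let G : (K × S) →ₗ[A] P := f.coprod φ
  have hker : LinearMap.ker F ≤ LinearMap.ker G := by
    rintro ⟨k, s⟩ hks
    have h0 : (k : X) + (s : X) = 0 := hks
    have hkS : (k : X) ∈ S := by
      have hkk : (k : X) = -(s : X) := eq_neg_of_add_eq_zero_left h0
      rw [hkk]; exact S.neg_mem s.2
    have hag := hagree (k : X) k.2 hkS
    have hG : G (k, s) = φ ⟨(k : X), hkS⟩ + φ s := by
      show f k + φ s = _
      rw [← hag]
    rw [LinearMap.mem_ker, hG, ← map_add]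
    have hzero : (⟨(k : X), hkS⟩ + s : S) = 0 := by
      ext
      simpa using h0
    rw [hzero, map_zero]
  let e := F.quotKerEquivOfSurjective hF
  have he : ∀ y : K × S, e (Submodule.Quotient.mk y) = F y := fun y => rfl
  refine ⟨((LinearMap.ker F).liftQ G hker).comp e.symm.toLinearMap, ?_⟩
  intro x
  have hx : e.symm ((x : X)) = Submodule.Quotient.mk (x, 0) := by
    apply e.injective
    rw [LinearEquiv.apply_symm_apply, he]
    show (x : X) = (x : X) + (0 : S)
    simp
  rw [LinearMap.comp_apply]
  erw [hx]
  rw [Submodule.liftQ_apply]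
  show f x + φ 0 = f x
  simp

theorem ninj_of_ext {S : Submodule A X} (hS : IsSemisimpleModule A S)
    (hsimp : IsSimpleModule A (X ⧸ S))
    (hext : ∀ φ : S →ₗ[A] P, ∃ ψ : X →ₗ[A] P, ∀ s : S, ψ s = φ s) :
    ModInj A P X := by
  intro K f
  have hinf : K ⊓ S ≤ S := inf_le_right
  let f₀ : (K ⊓ S : Submodule A X) →ₗ[A] P := f.comp (Submodule.inclusion inf_le_left)
  obtain ⟨φ, hφ⟩ := extend_from_semisimple hS hinf f₀
  obtain ⟨ψ₁, hψ₁⟩ := hext φ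
  have key : ∀ (x : X) (hK : x ∈ K) (hS' : x ∈ S), ψ₁ x = f ⟨x, hK⟩ := by
    intro x hK hS'
    have h1 : ψ₁ x = φ ⟨x, hS'⟩ := hψ₁ ⟨x, hS'⟩
    have h2 : φ ⟨x, hS'⟩ = f₀ ⟨x, ⟨hK, hS'⟩⟩ := hφ x ⟨hK, hS'⟩
    have h3 : f₀ ⟨x, ⟨hK, hS'⟩⟩ = f ⟨x, hK⟩ := by
      show f (Submodule.inclusion inf_le_left ⟨x, ⟨hK, hS'⟩⟩) = f ⟨x, hK⟩
      congr 1
    rw [h1, h2, h3]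
  by_cases hKS : K ≤ S
  · exact ⟨ψ₁, fun x => key x x.2 (hKS x.2)⟩
  · have hsup : K ⊔ S = ⊤ := by
      haveI := hsimp
      rcases eq_bot_or_eq_top (K.map S.mkQ) with hbot | htop
      · exfalso
        apply hKS
        intro x hx
        have hx' : S.mkQ x ∈ K.map S.mkQ := Submodule.mem_map_of_mem hx
        rw [hbot] at hx'
        have hx'' : x ∈ LinearMap.ker S.mkQ := by simpa using hx'
        rwa [Submodule.ker_mkQ] at hx''
      · have := congrArg (Submodule.comap S.mkQ) htop
        rwa [Submodule.comap_map_eq, Submodule.ker_mkQ, Submodule.comap_top] at this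
    let d : K →ₗ[A] P := f - ψ₁.comp K.subtype
    have hag : ∀ (x : X) (hK : x ∈ K) (hS' : x ∈ S),
        d ⟨x, hK⟩ = (0 : S →ₗ[A] P) ⟨x, hS'⟩ := by
      intro x hK hS'
      show f ⟨x, hK⟩ - ψ₁ x = 0
      rw [key x hK hS', sub_self]
    obtain ⟨D, hD⟩ := glue_on_sup hsup d (0 : S →ₗ[A] P) hag
    refine ⟨ψ₁ + D, fun x => ?_⟩
    have hDx : D x = f x - ψ₁ x := by rw [hD x]; rfl
    show ψ₁ x + D x = f x
    rw [hDx]; abel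

/-- Construction of a witness: a non-semisimple module `X` with a semisimple submodule `S`
such that `X/S` is simple. -/
theorem exists_witness (M₀ : Type u) [AddCommGroup M₀] [Module A M₀]
    (hM₀ : socle A (M₀ ⧸ socle A M₀) ≠ ⊥) :
    ∃ (X : Type u) (_ : AddCommGroup X) (_ : Module A X) (S : Submodule A X),
      IsSemisimpleModule A S ∧ IsSimpleModule A (X ⧸ S) ∧ ¬ IsSemisimpleModule A X := by
  set S₀ := socle A M₀ with hS₀def
  have hex : ∃ p : Submodule A (M₀ ⧸ S₀), IsSimpleModule A p := by
    by_contra hc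
    push_neg at hc
    exact hM₀ (sSup_eq_bot.mpr fun p hp => absurd hp (hc p))
  obtain ⟨p, hp⟩ := hex
  set Xs : Submodule A M₀ := p.comap S₀.mkQ with hXsdef
  have hS₀X : S₀ ≤ Xs := by
    intro x hx
    show S₀.mkQ x ∈ p
    have hx0 : S₀.mkQ x = 0 := (Submodule.Quotient.mk_eq_zero S₀).mpr hx
    rw [hx0]; exact p.zero_mem
  set S : Submodule A Xs := S₀.comap Xs.subtype with hSdef
  have hSss : IsSemisimpleModule A S := by
    haveI : IsSemisimpleModule A S₀ := socle_isSemisimple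
    exact IsSemisimpleModule.congr (Submodule.comapSubtypeEquivOfLe hS₀X)
  let φq : Xs →ₗ[A] (M₀ ⧸ S₀) := (S₀.mkQ).domRestrict Xs
  have hkerq : LinearMap.ker φq = S := by
    ext x
    show S₀.mkQ x.1 = 0 ↔ _
    rw [Submodule.mkQ_apply, Submodule.Quotient.mk_eq_zero]
    rfl
  have hrangeq : LinearMap.range φq = p := by
    have hr : LinearMap.range φq = Xs.map S₀.mkQ := by
      ext y; constructor
      · rintro ⟨x, rfl⟩; exact ⟨x.1, x.2, rfl⟩
      · rintro ⟨x, hx, rfl⟩; exact ⟨⟨x, hx⟩, rfl⟩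
    rw [hr, hXsdef, Submodule.map_comap_eq, Submodule.range_mkQ, top_inf_eq]
  have hXsimple : IsSimpleModule A ((Xs : Type u) ⧸ S) := by
    haveI := hp
    have e1 : ((Xs : Type u) ⧸ S) ≃ₗ[A] ((Xs : Type u) ⧸ LinearMap.ker φq) :=
      Submodule.quotEquivOfEq _ _ hkerq.symm
    have e2 : ((Xs : Type u) ⧸ LinearMap.ker φq) ≃ₗ[A] LinearMap.range φq :=
      φq.quotKerEquivRange
    have e3 : (LinearMap.range φq : Type u) ≃ₗ[A] p :=
      LinearEquiv.ofEq _ _ hrangeq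
    exact IsSimpleModule.congr (e1 ≪≫ₗ e2 ≪≫ₗ e3)
  have hsocX : ∀ q : Submodule A Xs, IsSimpleModule A q → q ≤ S := by
    intro q hq x hx
    have hmap : IsSimpleModule A (q.map Xs.subtype) :=
      simple_map Xs.injective_subtype hq
    have hin : (x : M₀) ∈ socle A M₀ := simple_le_socle hmap ⟨x, hx, rfl⟩
    exact hin
  have hXnss : ¬ IsSemisimpleModule A Xs := by
    intro hss
    haveI := hss
    obtain ⟨C, hC⟩ := exists_isCompl S
    have hCsimple : IsSimpleModule A C := by
      haveI := hXsimple
      exact IsSimpleModule.congr (Submodule.quotientEquivOfIsCompl S C hC).symm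
    have hCS : C ≤ S := hsocX C hCsimple
    have hCbot : C ≤ ⊥ := fun x hx => hC.disjoint.le_bot ⟨hCS hx, hx⟩
    exact false_of_simple_le_bot hCsimple hCbot
  exact ⟨Xs, inferInstance, inferInstance, S, hSss, hXsimple, hXnss⟩

end Aux

section Key

open CategoryTheory

variable {A : Type u} [Ring A]

/-- The key lemma, for a generic ring `A` with no middle class (in the `ModInj` sense),
admitting a witness module as above: `A / soc(A)` is semisimple. -/
theorem key_lemma
    (hmc : ∀ (P : Type u) [AddCommGroup P] [Module A P],
      (∀ (N : Type u) [AddCommGroup N] [Module A N], ModInj A P N) ∨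
      (∀ (N : Type u) [AddCommGroup N] [Module A N],
        ModInj A P N ↔ IsSemisimpleModule A N))
    (X : Type u) [AddCommGroup X] [Module A X] (S : Submodule A X)
    (hSss : IsSemisimpleModule A S) (hXsimple : IsSimpleModule A (X ⧸ S))
    (hXnss : ¬ IsSemisimpleModule A X) :
    IsSemisimpleModule A (A ⧸ socle A A) := by
  classical
  -- the criterion: a module into which all maps from S extend over X is injective
  have crit : ∀ (P : Type u) [AddCommGroup P] [Module A P],
      (∀ φ : S →ₗ[A] P, ∃ ψ : X →ₗ[A] P, ∀ s : S, ψ s = φ s) →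
      ∀ (N : Type u) [AddCommGroup N] [Module A N], ModInj A P N := by
    intro P _ _ hext N _ _
    rcases hmc P with hinj | hpoor
    · exact hinj N
    · exact absurd ((hpoor X).mp (ninj_of_ext hSss hXsimple hext)) hXnss
  -- semiartinian: modules with trivial socle are trivial
  have semiart : ∀ (N : Type u) [AddCommGroup N] [Module A N],
      socle A N = ⊥ → ∀ z : N, z = 0 := by
    intro N _ _ hsoc z
    have hss : IsSemisimpleModule A N := by
      rw [isSemisimpleModule_iff]
      constructor
      intro K
      have hKsoc : ∀ (φ : S →ₗ[A] K) (s : S), φ s = 0 := by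
        intro φ s
        haveI := hSss
        have h1 : IsSemisimpleModule A (LinearMap.range φ) := IsSemisimpleModule.range φ
        have h2 : LinearMap.range φ ≤ socle A K := semisimple_le_socle h1
        have h3 : socle A K = ⊥ := socle_submodule_eq_bot hsoc K
        have h4 : φ s ∈ (⊥ : Submodule A K) := h3 ▸ h2 (LinearMap.mem_range_self φ s)
        simpa using h4
      have hext : ∀ φ : S →ₗ[A] K, ∃ ψ : X →ₗ[A] K, ∀ s : S, ψ s = φ s :=
        fun φ => ⟨0, fun s => by rw [hKsoc φ s]; rfl⟩
      obtain ⟨g, hg⟩ := crit K hext N K LinearMap.id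
      refine ⟨LinearMap.ker (K.subtype.comp g), ?_, ?_⟩
      · rw [Submodule.disjoint_def]
        intro x hxK hxker
        have hgx : g x = ⟨x, hxK⟩ := hg ⟨x, hxK⟩
        have : K.subtype (g x) = 0 := hxker
        rw [hgx] at this
        simpa using this
      · rw [codisjoint_iff, Submodule.eq_top_iff']
        intro x
        refine Submodule.mem_sup.mpr ⟨(g x : N), (g x).2, x - (g x : N), ?_, by abel⟩
        have hgg : g ((g x : N)) = g x := hg (g x)
        show K.subtype (g (x - (g x : N))) = 0
        rw [map_sub, hgg, sub_self, map_zero]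
    haveI := hss
    have htop := IsSemisimpleModule.sSup_simples_eq_top A N
    have hz : z ∈ socle A N := by rw [socle, htop]; trivial
    rw [hsoc] at hz
    simpa using hz
  -- a big injective module containing A
  haveI : EnoughInjectives (ModuleCat.{u} A) := inferInstance
  let ECat : ModuleCat.{u} A := ModuleCat.of A A
  let EObj := Injective.under ECat
  let EC : Type u := EObj
  haveI hinjobj : CategoryTheory.Injective (ModuleCat.of A EC) :=
    (inferInstance : CategoryTheory.Injective EObj)
  haveI hEinj : Module.Injective A EC := Module.injective_module_of_injective_object _ _
  have hEext : ∀ (N : Type u) [AddCommGroup N] [Module A N], ModInj A EC N := by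
    intro N _ _ K f
    obtain ⟨g, hg⟩ := hEinj.out K.subtype K.injective_subtype f
    exact ⟨g, hg⟩
  let ι' : A →ₗ[A] EC := (Injective.ι ECat).hom
  have hι : Function.Injective ι' := by
    have hm : Mono (Injective.ι ECat) := inferInstance
    exact (ModuleCat.mono_iff_injective _).mp hm
  -- socle of E and the second socle
  set Soc1 : Submodule A EC := socle A EC with hSoc1def
  set E₂ : Submodule A EC := (socle A (EC ⧸ Soc1)).comap Soc1.mkQ with hE₂def
  have hSoc1E₂ : Soc1 ≤ E₂ := by
    intro x hx
    show Soc1.mkQ x ∈ socle A (EC ⧸ Soc1)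
    have hx0 : Soc1.mkQ x = 0 := (Submodule.Quotient.mk_eq_zero Soc1).mpr hx
    rw [hx0]; exact (socle A (EC ⧸ Soc1)).zero_mem
  -- all maps from S into E₂ extend over X
  have hE₂ext : ∀ φ : S →ₗ[A] E₂, ∃ ψ : X →ₗ[A] E₂, ∀ s : S, ψ s = φ s := by
    intro φ
    let φ' : S →ₗ[A] EC := E₂.subtype.comp φ
    have hφ'le : LinearMap.range φ' ≤ Soc1 := by
      haveI := hSss
      exact semisimple_le_socle (IsSemisimpleModule.range φ')
    obtain ⟨ψ', hψ'⟩ := hEext X S φ'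
    let θ₀ : X →ₗ[A] (EC ⧸ Soc1) := Soc1.mkQ.comp ψ'
    have hSker : S ≤ LinearMap.ker θ₀ := by
      intro x hx
      show Soc1.mkQ (ψ' x) = 0
      have hψx : ψ' x = φ' ⟨x, hx⟩ := hψ' ⟨x, hx⟩
      rw [hψx, Submodule.mkQ_apply, Submodule.Quotient.mk_eq_zero]
      exact hφ'le (LinearMap.mem_range_self φ' ⟨x, hx⟩)
    let θ : (X ⧸ S) →ₗ[A] (EC ⧸ Soc1) := S.liftQ θ₀ hSker
    have hθrange : LinearMap.range θ ≤ socle A (EC ⧸ Soc1) := by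
      rcases eq_or_ne θ 0 with hθ0 | hθ0
      · rw [hθ0]
        rintro y ⟨x, rfl⟩
        exact (socle A (EC ⧸ Soc1)).zero_mem
      · haveI := hXsimple
        have hker : LinearMap.ker θ = ⊥ := by
          rcases eq_bot_or_eq_top (LinearMap.ker θ) with hb | ht
          · exact hb
          · exact absurd (LinearMap.ker_eq_top.mp ht) hθ0
        have hsimple : IsSimpleModule A (LinearMap.range θ) := by
          have e1 : ((X ⧸ S) ⧸ LinearMap.ker θ) ≃ₗ[A] LinearMap.range θ :=
            θ.quotKerEquivRange
          have e2 : ((X ⧸ S) ⧸ LinearMap.ker θ) ≃ₗ[A] (X ⧸ S) :=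
            Submodule.quotEquivOfEqBot _ hker
          exact IsSimpleModule.congr (e1.symm ≪≫ₗ e2)
        exact simple_le_socle hsimple
    have hmemE₂ : ∀ x : X, ψ' x ∈ E₂ := by
      intro x
      show Soc1.mkQ (ψ' x) ∈ socle A (EC ⧸ Soc1)
      have hmm : Soc1.mkQ (ψ' x) ∈ LinearMap.range θ := ⟨Submodule.Quotient.mk x, rfl⟩
      exact hθrange hmm
    refine ⟨ψ'.codRestrict E₂ hmemE₂, fun s => ?_⟩
    apply Subtype.ext
    show ψ' s = (φ s : EC)
    rw [hψ' s]
    rfl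
  -- hence E₂ is an injective module, so it is a direct summand of EC, hence everything
  have hE₂inj := crit E₂ hE₂ext
  obtain ⟨g, hg⟩ := hE₂inj EC E₂ LinearMap.id
  -- essentiality of the socle
  have ess : ∀ U : Submodule A EC, U ⊓ Soc1 = ⊥ → U = ⊥ := by
    intro U hU
    have hsocU : socle A U = ⊥ := by
      refine socle_eq_bot_of_no_simples fun p hp => ?_
      have hmap : IsSimpleModule A (p.map U.subtype) := simple_map U.injective_subtype hp
      have hle : p.map U.subtype ≤ U ⊓ Soc1 :=
        le_inf (Submodule.map_subtype_le U p) (simple_le_socle hmap)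
      rw [hU] at hle
      exact false_of_simple_le_bot hmap hle
    have hz := semiart U hsocU
    rw [Submodule.eq_bot_iff]
    intro x hx
    have := hz ⟨x, hx⟩
    simpa using congrArg Subtype.val this
  -- E₂ = ⊤
  have hE₂top : E₂ = ⊤ := by
    rw [Submodule.eq_top_iff']
    intro x
    set y : EC := x - (g x : EC) with hydef
    have hgy : g y = 0 := by
      have hgg : g ((g x : EC)) = g x := hg (g x)
      rw [hydef, map_sub, hgg, sub_self]
    have hspan : Submodule.span A {y} ⊓ Soc1 = ⊥ := by
      rw [Submodule.eq_bot_iff]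
      intro z hz
      obtain ⟨hz1, hz2⟩ := hz
      obtain ⟨a, ha⟩ := Submodule.mem_span_singleton.mp hz1
      have hzE₂ : z ∈ E₂ := hSoc1E₂ hz2
      have hgz : g z = ⟨z, hzE₂⟩ := hg ⟨z, hzE₂⟩
      have hgz0 : g z = 0 := by
        rw [← ha, map_smul, hgy, smul_zero]
      rw [hgz0] at hgz
      have := congrArg Subtype.val hgz
      simpa using this.symm
    have hy0 : y = 0 := by
      have := ess _ hspan
      have hymem : y ∈ Submodule.span A {y} := Submodule.mem_span_singleton_self y
      rw [this] at hymem
      simpa using hymem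
    have hxg : x = (g x : EC) := by
      have := sub_eq_zero.mp hy0
      exact this
    rw [hxg]
    exact (g x).2
  -- EC / Soc1 is semisimple
  have hquot_top : socle A (EC ⧸ Soc1) = ⊤ := by
    rw [Submodule.eq_top_iff']
    intro q
    obtain ⟨x, rfl⟩ := Soc1.mkQ_surjective q
    have hx : x ∈ E₂ := hE₂top ▸ Submodule.mem_top
    exact hx
  have hquotss : IsSemisimpleModule A (EC ⧸ Soc1) := by
    apply IsSemisimpleModule.of_sSup_simples_eq_top
    exact hquot_top
  -- embed A / socle A A into EC / Soc1
  have hmapI : Submodule.map ι' (socle A A) ≤ Soc1 := map_le_socle hι socle_isSemisimple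
  let j₀ : A →ₗ[A] (EC ⧸ Soc1) := Soc1.mkQ.comp ι'
  have hIker : socle A A ≤ LinearMap.ker j₀ := by
    intro x hx
    show Soc1.mkQ (ι' x) = 0
    rw [Submodule.mkQ_apply, Submodule.Quotient.mk_eq_zero]
    exact hmapI ⟨x, hx, rfl⟩
  let j : (A ⧸ socle A A) →ₗ[A] (EC ⧸ Soc1) := (socle A A).liftQ j₀ hIker
  have hjinj : Function.Injective j := by
    rw [← LinearMap.ker_eq_bot, Submodule.eq_bot_iff]
    intro q hq
    obtain ⟨x, rfl⟩ := (socle A A).mkQ_surjective q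
    rw [LinearMap.mem_ker, Submodule.mkQ_apply, Submodule.liftQ_apply] at hq
    have hx1 : ι' x ∈ Soc1 := by
      rwa [LinearMap.comp_apply, Submodule.mkQ_apply, Submodule.Quotient.mk_eq_zero] at hq
    have hW : IsSemisimpleModule A (Submodule.comap ι' Soc1) := by
      have h1 : IsSemisimpleModule A ((Submodule.comap ι' Soc1).map ι') :=
        isSemisimple_of_le socle_isSemisimple (Submodule.map_comap_le ι' Soc1)
      haveI := h1
      exact IsSemisimpleModule.congr ((Submodule.comap ι' Soc1).equivMapOfInjective ι' hι)
    have hx2 : x ∈ socle A A := semisimple_le_socle hW hx1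
    rw [Submodule.mkQ_apply, Submodule.Quotient.mk_eq_zero]
    exact hx2
  haveI := hquotss
  haveI : IsSemisimpleModule A (LinearMap.range j) := inferInstance
  exact IsSemisimpleModule.congr (LinearEquiv.ofInjective j hjinj)

end Key

theorem stmt_10 (R : Type u) [Ring R] (h : NoRightIMiddleClass R) :
    (∀ (M : Type u) [AddCommGroup M] [Module Rᵐᵒᵖ M],
      socle Rᵐᵒᵖ (M ⧸ socle Rᵐᵒᵖ M) = ⊥) ∨
    IsSemisimpleModule Rᵐᵒᵖ (Rᵐᵒᵖ ⧸ socle Rᵐᵒᵖ Rᵐᵒᵖ) := by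
  by_cases hrad : ∀ (M : Type u) [AddCommGroup M] [Module Rᵐᵒᵖ M],
      socle Rᵐᵒᵖ (M ⧸ socle Rᵐᵒᵖ M) = ⊥
  · exact Or.inl hrad
  · right
    simp only [not_forall] at hrad
    obtain ⟨M₀, inst1, inst2, hM₀⟩ := hrad
    obtain ⟨X, instX1, instX2, S, hSss, hXsimple, hXnss⟩ := exists_witness M₀ hM₀
    exact key_lemma h X S hSss hXsimple hXnss
end

section
/- Let R be a right perfect ring and let I be a two-sided ideal of R with I ⊆ J(R). Then for every right R-module N, the module R/I is N-projective if and only if N·I = 0. -/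
universe u

/-- `M` is `N`-projective. -/
def ModProj (A : Type u) [Ring A] (M : Type u) [AddCommGroup M] [Module A M]
    (N : Type u) [AddCommGroup N] [Module A N] : Prop :=
  ∀ (K : Type u) [AddCommGroup K] [Module A K] (g : N →ₗ[A] K),
    Function.Surjective g → ∀ f : M →ₗ[A] K, ∃ h : M →ₗ[A] N, ∀ x : M, g (h x) = f x

/-- A submodule `K ≤ P` is superfluous. -/
def Superfluous (A : Type u) [Ring A] {P : Type u} [AddCommGroup P] [Module A P]
    (K : Submodule A P) : Prop :=
  ∀ L : Submodule A P, K ⊔ L = ⊤ → L = ⊤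

/-- `R` is right perfect: every right `R`-module has a projective cover. -/
def RightPerfect (R : Type u) [Ring R] : Prop :=
  ∀ (M : Type u) [AddCommGroup M] [Module Rᵐᵒᵖ M],
    ∃ (P : ModuleCat.{u} Rᵐᵒᵖ) (p : P →ₗ[Rᵐᵒᵖ] M),
      (∀ (N : Type u) [AddCommGroup N] [Module Rᵐᵒᵖ N], ModProj Rᵐᵒᵖ P N) ∧
      Function.Surjective p ∧ Superfluous Rᵐᵒᵖ (LinearMap.ker p)

section Aux

universe v

lemma leftinv_of_mem_jacobson {A : Type u} [Ring A] {x : A}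
    (hx : x ∈ (⊥ : Ideal A).jacobson) : ∃ z : A, z * (1 - x) = 1 := by
  obtain ⟨z, hz⟩ := Ideal.mem_jacobson_iff.1 hx (-1)
  rw [Ideal.mem_bot, sub_eq_zero] at hz
  refine ⟨z, ?_⟩
  calc z * (1 - x) = z * -1 * x + z := by noncomm_ring
    _ = 1 := hz

lemma isUnit_one_sub_jac {A : Type u} [Ring A] {x : A}
    (hx : x ∈ (⊥ : Ideal A).jacobson) : IsUnit (1 - x) := by
  obtain ⟨u, hu⟩ := leftinv_of_mem_jacobson hx
  have hux : -(u * x) ∈ (⊥ : Ideal A).jacobson :=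
    neg_mem (Ideal.mul_mem_left _ u hx)
  obtain ⟨v, hv⟩ := leftinv_of_mem_jacobson hux
  rw [sub_neg_eq_add] at hv
  have hu1 : u = 1 + u * x := by
    have h := hu
    rw [mul_sub, mul_one, sub_eq_iff_eq_add] at h
    exact h
  have hvu : v * u = 1 := by rw [hu1]; exact hv
  have hveq : v = 1 - x := by
    calc v = v * (u * (1 - x)) := by rw [hu, mul_one]
      _ = v * u * (1 - x) := by rw [mul_assoc]
      _ = 1 - x := by rw [hvu, one_mul]
  exact ⟨⟨1 - x, u, by rw [← hveq]; exact hvu, hu⟩, rfl⟩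

lemma nakayama_fin {A : Type u} [Ring A] {ι : Type v} [DecidableEq ι] (I : Ideal A)
    (hI2 : ∀ x ∈ I, ∀ a : A, x * a ∈ I)
    (hu : ∀ x ∈ I, IsUnit (1 - x)) (a : ι → A) :
    ∀ (T : Finset ι) (c : ι → ι → A), (∀ j ∈ T, ∀ i, c j i ∈ I) →
      (∀ i ∈ T, a i = ∑ j ∈ T, a j * c j i) → ∀ i ∈ T, a i = 0 := by
  intro T
  induction T using Finset.induction_on with
  | empty => intro c _ _ i hi; exact absurd hi (Finset.notMem_empty i)
  | @insert k T' hk ih =>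
    intro c hc hrel
    set S := ∑ j ∈ T', a j * c j k with hS
    have hckk : c k k ∈ I := hc k (Finset.mem_insert_self k T') k
    set u := (hu _ hckk).unit with hu_def
    have huv : (↑u : A) = 1 - c k k := (hu _ hckk).unit_spec
    have hk' : a k = a k * c k k + S := by
      have h := hrel k (Finset.mem_insert_self k T')
      rwa [Finset.sum_insert hk] at h
    have h1 : a k * (1 - c k k) = S := by
      rw [mul_sub, mul_one, sub_eq_iff_eq_add']
      exact hk'
    have hak : a k = S * ↑u⁻¹ := by
      calc a k = a k * (↑u * ↑u⁻¹) := by rw [Units.mul_inv, mul_one]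
        _ = a k * ↑u * ↑u⁻¹ := by rw [mul_assoc]
        _ = S * ↑u⁻¹ := by rw [huv, h1]
    have hT' : ∀ i ∈ T', a i = 0 := by
      refine ih (fun j i => c j i + c j k * (↑u⁻¹ * c k i)) ?_ ?_
      · intro j hj i
        exact I.add_mem (hc j (Finset.mem_insert_of_mem hj) i)
          (hI2 _ (hc j (Finset.mem_insert_of_mem hj) k) _)
      · intro i hi
        have h2 : a i = a k * c k i + ∑ j ∈ T', a j * c j i := by
          have h := hrel i (Finset.mem_insert_of_mem hi)
          rwa [Finset.sum_insert hk] at h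
        rw [h2, hak, hS, mul_assoc, Finset.sum_mul, ← Finset.sum_add_distrib]
        refine Finset.sum_congr rfl fun j _ => ?_
        noncomm_ring
    intro i hi
    rcases Finset.mem_insert.1 hi with rfl | hi'
    · have hS0 : S = 0 := Finset.sum_eq_zero fun j hj => by rw [hT' j hj, zero_mul]
      rw [hak, hS0, zero_mul]
    · exact hT' i hi'

lemma proj_eq_zero {A : Type u} [Ring A] (I : Ideal A)
    (hI2 : ∀ x ∈ I, ∀ a : A, x * a ∈ I) (hu : ∀ x ∈ I, IsUnit (1 - x))
    (P : Type u) [AddCommGroup P] [Module A P]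
    (hproj : ModProj A P (P →₀ A)) (hIP : (⊤ : Submodule A P) ≤ I • ⊤) (q : P) : q = 0 := by
  classical
  set g : (P →₀ A) →ₗ[A] P := Finsupp.linearCombination A id with hg
  have hgs : Function.Surjective g := fun z =>
    ⟨Finsupp.single z 1, by simp [hg]⟩
  obtain ⟨s, hs⟩ := hproj P g hgs LinearMap.id
  have hs' : ∀ z : P, g (s z) = z := fun z => hs z
  have hcoord : ∀ z : P, ∀ i : P, s z i ∈ I := by
    intro z
    have hz : z ∈ (I • ⊤ : Submodule A P) := hIP Submodule.mem_top
    refine Submodule.smul_induction_on hz ?_ ?_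
    · intro r hr n _ i
      rw [map_smul, Finsupp.smul_apply, smul_eq_mul]
      exact hI2 r hr _
    · intro m n hm hn i
      rw [map_add, Finsupp.add_apply]
      exact I.add_mem (hm i) (hn i)
  have hq : q = ∑ j ∈ (s q).support, s q j • j := by
    conv_lhs => rw [← hs' q]
    rw [hg, Finsupp.linearCombination_apply, Finsupp.sum]
    simp
  have h2 : s q = ∑ j ∈ (s q).support, s q j • s j := by
    conv_lhs => rw [hq]
    rw [map_sum]
    simp_rw [map_smul]
  have hrel : ∀ i ∈ (s q).support, s q i = ∑ j ∈ (s q).support, s q j * s j i := by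
    intro i _
    conv_lhs => rw [h2]
    rw [Finsupp.finset_sum_apply]
    simp_rw [Finsupp.smul_apply, smul_eq_mul]
  have hzero := nakayama_fin I hI2 hu (fun i => s q i) (s q).support
    (fun j i => s j i) (fun j _ i => hcoord j i) hrel
  rw [hq]
  exact Finset.sum_eq_zero fun j hj => by
    have h0 : s q j = 0 := hzero j hj
    rw [h0, zero_smul]

end Aux

/-- if `R` is right perfect and `I ⊆ J(R)` is a two-sided ideal, then for
every right `R`-module `N`, `R/I` is `N`-projective iff `N·I = 0`. -/
theorem stmt_11 (R : Type u) [Ring R] (hperf : RightPerfect R)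
    (I : Ideal Rᵐᵒᵖ) (hI2 : IsTwoSidedRI R I) (hIJ : I ≤ (⊥ : Ideal Rᵐᵒᵖ).jacobson) :
    ∀ (N : Type u) [AddCommGroup N] [Module Rᵐᵒᵖ N],
      ModProj Rᵐᵒᵖ (Rᵐᵒᵖ ⧸ I) N ↔ ∀ (n : N), ∀ x ∈ I, x • n = 0 := by
  have hI2' : ∀ x ∈ I, ∀ a : Rᵐᵒᵖ, x * a ∈ I := by
    intro x hx a
    have h := hI2 x hx a.unop
    rwa [MulOpposite.op_unop] at h
  have hu : ∀ x ∈ I, IsUnit ((1 : Rᵐᵒᵖ) - x) := fun x hx => isUnit_one_sub_jac (hIJ hx)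
  intro N _ _
  constructor
  · -- forward direction
    intro hproj
    set N₀ : Submodule Rᵐᵒᵖ N :=
      { carrier := {m | ∀ x ∈ I, x • m = 0}
        add_mem' := fun {m} {n} hm hn x hx => by
          rw [smul_add, hm x hx, hn x hx, add_zero]
        zero_mem' := fun x _ => smul_zero x
        smul_mem' := fun a m hm x hx => by
          rw [smul_smul]
          exact hm _ (hI2' x hx a) } with hN₀
    have step1 : ∀ n : N, ∃ m : N, m ∈ N₀ ∧ n - m ∈ (I • ⊤ : Submodule Rᵐᵒᵖ N) := by
      intro n
      set W : Submodule Rᵐᵒᵖ N := I • ⊤ with hW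
      set f0 : Rᵐᵒᵖ →ₗ[Rᵐᵒᵖ] (N ⧸ W) := LinearMap.toSpanSingleton Rᵐᵒᵖ _ (W.mkQ n) with hf0
      have hker : I ≤ LinearMap.ker f0 := by
        intro x hx
        rw [LinearMap.mem_ker, hf0, LinearMap.toSpanSingleton_apply, ← map_smul,
          Submodule.mkQ_apply, Submodule.Quotient.mk_eq_zero]
        exact Submodule.smul_mem_smul hx Submodule.mem_top
      obtain ⟨h, hh⟩ := hproj (N ⧸ W) W.mkQ (Submodule.mkQ_surjective W)
        (Submodule.liftQ I f0 hker)
      refine ⟨h (Submodule.Quotient.mk 1), ?_, ?_⟩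
      · intro x hx
        have hx1 : x • (Submodule.Quotient.mk (1 : Rᵐᵒᵖ) : Rᵐᵒᵖ ⧸ I) = 0 := by
          rw [← Submodule.Quotient.mk_smul, smul_eq_mul, mul_one]
          exact (Submodule.Quotient.mk_eq_zero I).2 hx
        rw [← map_smul, hx1, map_zero]
      · have h1 := hh (Submodule.Quotient.mk 1)
        have h2 : Submodule.liftQ I f0 hker (Submodule.Quotient.mk 1) = W.mkQ n := by
          rw [Submodule.liftQ_apply, hf0, LinearMap.toSpanSingleton_apply, one_smul]
        rw [h2] at h1
        exact (Submodule.Quotient.eq W).1 h1.symm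
    have hQ : (⊤ : Submodule Rᵐᵒᵖ (N ⧸ N₀)) ≤ I • ⊤ := by
      rintro q -
      obtain ⟨n, rfl⟩ := N₀.mkQ_surjective q
      obtain ⟨m, hm, hw⟩ := step1 n
      have hmn : N₀.mkQ n = N₀.mkQ (n - m) := by
        have hm0 : N₀.mkQ m = 0 := by
          rw [Submodule.mkQ_apply, Submodule.Quotient.mk_eq_zero]
          exact hm
        rw [map_sub, hm0, sub_zero]
      rw [hmn]
      have hmem : N₀.mkQ (n - m) ∈ Submodule.map N₀.mkQ (I • ⊤) :=
        Submodule.mem_map_of_mem hw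
      rwa [Submodule.map_smul'', Submodule.map_top, Submodule.range_mkQ] at hmem
    obtain ⟨P, p, hPproj, hpsurj, hsmall⟩ := hperf (N ⧸ N₀)
    have hsup : LinearMap.ker p ⊔ (I • ⊤ : Submodule Rᵐᵒᵖ ↥P) = ⊤ := by
      rw [eq_top_iff]
      rintro z -
      have hz : p z ∈ (I • ⊤ : Submodule Rᵐᵒᵖ (N ⧸ N₀)) := hQ Submodule.mem_top
      have hz' : p z ∈ Submodule.map p (I • ⊤ : Submodule Rᵐᵒᵖ ↥P) := by
        rwa [Submodule.map_smul'', Submodule.map_top, LinearMap.range_eq_top.2 hpsurj]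
      obtain ⟨w, hw, hpw⟩ := hz'
      refine Submodule.mem_sup.2 ⟨z - w, ?_, w, hw, by rw [sub_add_cancel]⟩
      rw [LinearMap.mem_ker, map_sub, hpw, sub_self]
    have hPI : (⊤ : Submodule Rᵐᵒᵖ ↥P) ≤ I • ⊤ := (hsmall _ hsup).ge
    have hPzero : ∀ z : ↥P, z = 0 :=
      proj_eq_zero I hI2' hu (↥P) (hPproj (↥P →₀ Rᵐᵒᵖ)) hPI
    intro n x hx
    have hn0 : N₀.mkQ n = 0 := by
      obtain ⟨z, hz⟩ := hpsurj (N₀.mkQ n)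
      rw [← hz, hPzero z, map_zero]
    have hn : n ∈ N₀ := by
      rwa [Submodule.mkQ_apply, Submodule.Quotient.mk_eq_zero] at hn0
    exact hn x hx
  · -- backward direction
    intro hann K _ _ g hg f
    obtain ⟨n, hn⟩ := hg (f (Submodule.Quotient.mk 1))
    have hker : I ≤ LinearMap.ker (LinearMap.toSpanSingleton Rᵐᵒᵖ N n) := by
      intro x hx
      rw [LinearMap.mem_ker, LinearMap.toSpanSingleton_apply]
      exact hann n x hx
    refine ⟨Submodule.liftQ I _ hker, ?_⟩
    intro y
    obtain ⟨a, rfl⟩ := Submodule.Quotient.mk_surjective I y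
    have hmk : (Submodule.Quotient.mk a : Rᵐᵒᵖ ⧸ I) = a • Submodule.Quotient.mk 1 := by
      rw [← Submodule.Quotient.mk_smul, smul_eq_mul, mul_one]
    rw [Submodule.liftQ_apply, LinearMap.toSpanSingleton_apply, map_smul, hn, hmk, map_smul]
end
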